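/- arXiv:2402.07185 — 8 statements merged into one kernel-verified Lean document; each statement's English description precedes it below -/
import Mathlib

section
/- Let γ ∈ (0,1) and let a : [0,1] → ℝ be a continuous function. Then there exist δ ∈ (0,1/2] and a strictly positive function f : [0,δ] → (0,∞) with f ∈ C¹([0,δ]) such that f(0) = γ and f'(y) = a₀(y) + (a₁(y)/(1−y))·f(y) + (a(y)/(1−y))·f(y)² for all y ∈ (0,δ). -/
open Set Real

/-- `a₀(y) = γ(1+γ)/y`. -/
noncomputable def a0 (γ y : ℝ) : ℝ := γ * (1 + γ) / y

/-- `a₁(y) = ((2γ+1)y − (1+γ))/y`. -/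
noncomputable def a1 (γ y : ℝ) : ℝ := ((2 * γ + 1) * y - (1 + γ)) / y

open Filter MeasureTheory intervalIntegral Topology

namespace Stmt1Aux

/-- clamp to `[0,c]` -/
noncomputable def cl (c t : ℝ) : ℝ := max 0 (min t c)

lemma cl_mem {c : ℝ} (hc : 0 ≤ c) (t : ℝ) : cl c t ∈ Icc 0 c :=
  ⟨le_max_left _ _, max_le hc (min_le_right _ _)⟩

lemma cl_eq {c t : ℝ} (h : t ∈ Icc 0 c) : cl c t = t := by
  rw [cl, min_eq_left h.2, max_eq_right h.1]

lemma continuous_cl (c : ℝ) : Continuous (cl c) :=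
  continuous_const.max ((continuous_id.min continuous_const))

lemma cl_zero {c t : ℝ} (ht : t ≤ 0) : cl c t = 0 := by
  rw [cl, max_eq_left]; exact le_trans (min_le_left _ _) ht

/-- The nonlinearity. -/
noncomputable def G (b : ℝ → ℝ) (γ t x : ℝ) : ℝ :=
  (γ * (γ + x) + b t * (γ + x) ^ 2) / (1 - cl (1/2) t)

lemma denom_pos (t : ℝ) : (1:ℝ)/2 ≤ 1 - cl (1/2) t := by
  have := (cl_mem (by norm_num : (0:ℝ) ≤ 1/2) t).2
  linarith

lemma G_cont {b : ℝ → ℝ} (hb : Continuous b) (γ : ℝ) {h : ℝ → ℝ} (hh : Continuous h) :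
    Continuous (fun t => G b γ t (h t)) := by
  apply Continuous.div
  · continuity
  · exact continuous_const.sub (continuous_cl _)
  · intro t
    have := denom_pos t
    intro hzero
    rw [hzero] at this; norm_num at this

lemma G_bound {b : ℝ → ℝ} {γ A t x : ℝ} (hγ : γ ∈ Ioo (0:ℝ) 1) (hA : ∀ s, |b s| ≤ A)
    (hx : |x| ≤ γ/2) : |G b γ t x| ≤ 3 + 5*A := by
  obtain ⟨hγ0, hγ1⟩ := hγ
  have hA0 : 0 ≤ A := le_trans (abs_nonneg _) (hA t)
  have hgx : |γ + x| ≤ 3/2 := by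
    have := abs_le.1 hx
    rw [abs_le]; constructor <;> nlinarith
  have hd := denom_pos t
  have hnum : |γ * (γ + x) + b t * (γ + x) ^ 2| ≤ 3/2 + 9*A/4 := by
    calc |γ * (γ + x) + b t * (γ + x) ^ 2|
        ≤ |γ * (γ + x)| + |b t * (γ + x) ^ 2| := abs_add_le _ _
      _ ≤ 3/2 + 9*A/4 := by
          rw [abs_mul, abs_mul, abs_pow]
          have h1 : |γ| ≤ 1 := by rw [abs_of_pos hγ0]; linarith
          have h2 : |γ + x| ^ 2 ≤ 9/4 := by nlinarith [abs_nonneg (γ + x)]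
          nlinarith [abs_nonneg (γ*(γ+x)), abs_nonneg (b t), hA t, abs_nonneg (γ + x)]
  rw [G, abs_div]
  rw [abs_of_pos (by linarith : (0:ℝ) < 1 - cl (1/2) t)]
  rw [div_le_iff₀ (by linarith)]
  nlinarith

lemma G_lip {b : ℝ → ℝ} {γ A t x₁ x₂ : ℝ} (hγ : γ ∈ Ioo (0:ℝ) 1) (hA : ∀ s, |b s| ≤ A)
    (hx₁ : |x₁| ≤ γ/2) (hx₂ : |x₂| ≤ γ/2) :
    |G b γ t x₁ - G b γ t x₂| ≤ (2 + 6*A) * |x₁ - x₂| := by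
  obtain ⟨hγ0, hγ1⟩ := hγ
  have hA0 : 0 ≤ A := le_trans (abs_nonneg _) (hA t)
  have hd := denom_pos t
  have heq : G b γ t x₁ - G b γ t x₂
      = ((x₁ - x₂) * (γ + b t * (2*γ + x₁ + x₂))) / (1 - cl (1/2) t) := by
    rw [G, G, div_sub_div_same]; ring_nf
  rw [heq, abs_div, abs_of_pos (by linarith : (0:ℝ) < 1 - cl (1/2) t),
    div_le_iff₀ (by linarith), abs_mul]
  have h3 : |γ + b t * (2*γ + x₁ + x₂)| ≤ 1 + 3*A := by
    calc |γ + b t * (2*γ + x₁ + x₂)| ≤ |γ| + |b t| * |2*γ + x₁ + x₂| := by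
          rw [← abs_mul]; exact abs_add_le _ _
      _ ≤ 1 + 3*A := by
          have h1 : |γ| ≤ 1 := by rw [abs_of_pos hγ0]; linarith
          have h2 : |2*γ + x₁ + x₂| ≤ 3 := by
            have := abs_le.1 hx₁; have := abs_le.1 hx₂
            rw [abs_le]; constructor <;> nlinarith
          nlinarith [abs_nonneg (b t), hA t]
  calc |x₁ - x₂| * |γ + b t * (2*γ + x₁ + x₂)|
      ≤ |x₁ - x₂| * (1 + 3*A) := mul_le_mul_of_nonneg_left h3 (abs_nonneg _)
    _ = (2 + 6*A) * |x₁ - x₂| * (1/2) := by ring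
    _ ≤ (2 + 6*A) * |x₁ - x₂| * (1 - cl (1/2) t) :=
        mul_le_mul_of_nonneg_left hd (by positivity)

/-- integrand of the fixed-point operator -/
noncomputable def φf (b : ℝ → ℝ) (γ δ₀ : ℝ) (h : ℝ → ℝ) (t : ℝ) : ℝ :=
  (cl δ₀ t) ^ (1 + γ) * G b γ t (h t)

/-- the fixed-point operator -/
noncomputable def Tmap (b : ℝ → ℝ) (γ δ₀ : ℝ) (h : ℝ → ℝ) (y : ℝ) : ℝ :=
  (cl δ₀ y) ^ (-(1 + γ)) * ∫ t in (0:ℝ)..(cl δ₀ y), φf b γ δ₀ h t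

section
variable {b : ℝ → ℝ} {γ δ₀ : ℝ} {h : ℝ → ℝ}

lemma φf_cont (hb : Continuous b) (hγ : 0 < γ) (hh : Continuous h) :
    Continuous (φf b γ δ₀ h) := by
  apply Continuous.mul
  · exact (continuous_iff_continuousAt.mpr fun x =>
      (Real.continuousAt_rpow_const _ _ (Or.inr (by linarith))).comp
        ((continuous_cl δ₀).continuousAt))
  · exact G_cont hb γ hh

/-- general weighted-integral bound -/
lemma int_bound {γ δ₀ : ℝ} {z K : ℝ} (hγ : 0 < γ) (ψ : ℝ → ℝ)
    (hz : z ∈ Icc 0 δ₀) (hK : ∀ t ∈ Icc 0 z, |ψ t| ≤ K) :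
    |∫ t in (0:ℝ)..z, (cl δ₀ t) ^ (1+γ) * ψ t| ≤ K * z ^ (2+γ) / (2+γ) := by
  have hK0 : 0 ≤ K := le_trans (abs_nonneg _) (hK 0 ⟨le_refl _, hz.1⟩)
  have hg : IntervalIntegrable (fun t => K * t ^ (1+γ)) volume 0 z := by
    apply Continuous.intervalIntegrable
    exact continuous_const.mul (continuous_iff_continuousAt.mpr fun x =>
      Real.continuousAt_rpow_const _ _ (Or.inr (by linarith)))
  have hbnd : ∀ᵐ t ∂(volume.restrict (Set.uIoc (0:ℝ) z)),
      ‖(cl δ₀ t) ^ (1+γ) * ψ t‖ ≤ K * t ^ (1+γ) := by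
    apply ae_restrict_of_forall_mem measurableSet_uIoc
    intro t ht
    rw [uIoc_of_le hz.1] at ht
    have ht0 : 0 ≤ t := le_of_lt ht.1
    have hcl : cl δ₀ t = t := cl_eq ⟨ht0, le_trans ht.2 hz.2⟩
    rw [hcl, Real.norm_eq_abs, abs_mul, abs_of_nonneg (Real.rpow_nonneg ht0 _)]
    have h2 : (0:ℝ) ≤ t ^ (1+γ) := Real.rpow_nonneg ht0 _
    calc t ^ (1+γ) * |ψ t| ≤ t ^ (1+γ) * K :=
          mul_le_mul_of_nonneg_left (hK t ⟨ht0, ht.2⟩) h2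
      _ = K * t ^ (1+γ) := mul_comm _ _
  have hmain := intervalIntegral.norm_integral_le_abs_of_norm_le hbnd hg
  rw [Real.norm_eq_abs] at hmain
  refine le_trans hmain (le_of_eq ?_)
  rw [intervalIntegral.integral_const_mul, integral_rpow (Or.inl (by linarith))]
  have he : (1:ℝ)+γ+1 = 2+γ := by ring
  rw [Real.zero_rpow (by linarith), he, abs_of_nonneg]
  · ring
  · have h2 : (0:ℝ) ≤ z ^ (2+γ) := Real.rpow_nonneg hz.1 _
    have h3 : (0:ℝ) < 2+γ := by linarith
    have h4 : (0:ℝ) ≤ (z ^ (2+γ) - 0)/(2+γ) := by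
      rw [sub_zero]; exact div_nonneg h2 (le_of_lt h3)
    exact mul_nonneg hK0 h4

lemma Tmap_zero (hγ : 0 < γ) {y : ℝ} (hy : y ≤ 0) :
    Tmap b γ δ₀ h y = 0 := by
  rw [Tmap, cl_zero hy, Real.zero_rpow (by intro hc; linarith), zero_mul]

lemma Tmap_bound (hγ : 0 < γ) (hδ₀ : 0 < δ₀) (C : ℝ)
    (hint : ∀ z ∈ Icc (0:ℝ) δ₀, |∫ t in (0:ℝ)..z, φf b γ δ₀ h t| ≤ C * z ^ (2+γ) / (2+γ))
    (y : ℝ) :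
    |Tmap b γ δ₀ h y| ≤ C * cl δ₀ y / (2 + γ) := by
  have hzm : cl δ₀ y ∈ Icc 0 δ₀ := cl_mem (le_of_lt hδ₀) y
  rcases eq_or_lt_of_le hzm.1 with h0 | h0
  · rw [Tmap, ← h0, Real.zero_rpow (by intro hc; linarith), zero_mul, abs_zero]
    simp
  · rw [Tmap, abs_mul, abs_of_nonneg (Real.rpow_nonneg hzm.1 _)]
    set z := cl δ₀ y with hz
    have e1 : z ^ (-(1+γ)) * z ^ (2+γ) = z := by
      rw [← Real.rpow_add h0]
      have : -(1+γ) + (2+γ) = (1:ℝ) := by ring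
      rw [this, Real.rpow_one]
    calc z ^ (-(1+γ)) * |∫ t in (0:ℝ)..z, φf b γ δ₀ h t|
        ≤ z ^ (-(1+γ)) * (C * z ^ (2+γ) / (2+γ)) :=
          mul_le_mul_of_nonneg_left (hint z hzm) (Real.rpow_nonneg hzm.1 _)
      _ = C * (z ^ (-(1+γ)) * z ^ (2+γ)) / (2+γ) := by ring
      _ = C * z / (2+γ) := by rw [e1]

lemma Tmap_cont (hb : Continuous b) (hγ : 0 < γ) (hδ₀ : 0 < δ₀) (hh : Continuous h) (C : ℝ)
    (hint : ∀ z ∈ Icc (0:ℝ) δ₀, |∫ t in (0:ℝ)..z, φf b γ δ₀ h t| ≤ C * z ^ (2+γ) / (2+γ)) :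
    Continuous (Tmap b γ δ₀ h) := by
  have hφ := φf_cont (δ₀ := δ₀) hb hγ hh
  have hprim : Continuous (fun z => ∫ t in (0:ℝ)..z, φf b γ δ₀ h t) :=
    intervalIntegral.continuous_primitive (fun a b => hφ.intervalIntegrable a b) 0
  rw [continuous_iff_continuousAt]
  intro y
  by_cases hy : 0 < y
  · have hclpos : 0 < cl δ₀ y := by
      rw [cl]; rcases le_or_gt y δ₀ with hle | hlt
      · rw [min_eq_left hle]; exact lt_max_of_lt_right hy
      · rw [min_eq_right (le_of_lt hlt)]; exact lt_max_of_lt_right hδ₀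
    apply ContinuousAt.mul
    · exact (Real.continuousAt_rpow_const _ _ (Or.inl (ne_of_gt hclpos))).comp
        ((continuous_cl δ₀).continuousAt)
    · exact hprim.continuousAt.comp ((continuous_cl δ₀).continuousAt)
  · push_neg at hy
    have h0 : Tmap b γ δ₀ h y = 0 := Tmap_zero hγ hy
    rw [ContinuousAt, h0]
    apply squeeze_zero_norm (fun y' => Tmap_bound hγ hδ₀ C hint y')
    have hc : Continuous (fun y' => C * cl δ₀ y' / (2+γ)) :=
      ((continuous_const.mul (continuous_cl δ₀)).div_const _)
    have h2 := hc.continuousAt (x := y)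
    rw [ContinuousAt, cl_zero hy] at h2
    simpa using h2
end

section
variable {b : ℝ → ℝ} {γ δ₀ : ℝ} {H : ℝ → ℝ}


lemma deriv_interior (hb : Continuous b) (hγ : 0 < γ) (hδ₀ : 0 < δ₀) (hH : Continuous H)
    (hfix : ∀ y, Tmap b γ δ₀ H y = H y) {y : ℝ} (hy : y ∈ Ioo 0 δ₀) :
    HasDerivAt H (G b γ y (H y) - (1+γ) * H y / y) y := by
  obtain ⟨hy0, hyδ⟩ := hy
  have hyne : y ≠ 0 := ne_of_gt hy0
  have hφ := φf_cont (δ₀ := δ₀) hb hγ hH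
  set I : ℝ → ℝ := fun z => ∫ t in (0:ℝ)..z, φf b γ δ₀ H t with hI
  have hIderiv : HasDerivAt I (φf b γ δ₀ H y) y := by
    apply intervalIntegral.integral_hasDerivAt_right (hφ.intervalIntegrable _ _)
      (hφ.continuousOn.stronglyMeasurableAtFilter isOpen_univ y (mem_univ y))
      hφ.continuousAt
  have hr : HasDerivAt (fun z : ℝ => z ^ (-(1+γ))) (-(1+γ) * y ^ (-(1+γ)-1)) y :=
    Real.hasDerivAt_rpow_const (Or.inl hyne)
  have hu : HasDerivAt (fun z => z ^ (-(1+γ)) * I z)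
      (-(1+γ) * y ^ (-(1+γ)-1) * I y + y ^ (-(1+γ)) * φf b γ δ₀ H y) y := hr.mul hIderiv
  have heq : H =ᶠ[𝓝 y] fun z => z ^ (-(1+γ)) * I z := by
    filter_upwards [isOpen_Ioo.mem_nhds (⟨hy0, hyδ⟩ : y ∈ Ioo 0 δ₀)] with z hz
    rw [← hfix z, Tmap, cl_eq ⟨le_of_lt hz.1, le_of_lt hz.2⟩]
  have hder := hu.congr_of_eventuallyEq heq
  -- now rewrite the derivative value
  have hcy : cl δ₀ y = y := cl_eq ⟨le_of_lt hy0, le_of_lt hyδ⟩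
  have hIy : I y = y ^ (1+γ) * H y := by
    have h1 : H y = y ^ (-(1+γ)) * I y := by rw [← hfix y, Tmap, hcy]
    rw [h1, ← mul_assoc, ← Real.rpow_add hy0]
    have : (1+γ) + -(1+γ) = (0:ℝ) := by ring
    rw [this, Real.rpow_zero, one_mul]
  have hφy : φf b γ δ₀ H y = y ^ (1+γ) * G b γ y (H y) := by rw [φf, hcy]
  have e2 : y ^ (-(1+γ)-1) * y ^ (1+γ) = y⁻¹ := by
    rw [← Real.rpow_add hy0]
    have : -(1+γ)-1 + (1+γ) = (-1:ℝ) := by ring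
    rw [this, Real.rpow_neg_one]
  have e3 : y ^ (-(1+γ)) * y ^ (1+γ) = 1 := by
    rw [← Real.rpow_add hy0]
    have : -(1+γ) + (1+γ) = (0:ℝ) := by ring
    rw [this, Real.rpow_zero]
  refine hder.congr_deriv ?_
  rw [hIy, hφy]
  have : -(1+γ) * y ^ (-(1+γ)-1) * (y ^ (1+γ) * H y) + y ^ (-(1+γ)) * (y ^ (1+γ) * G b γ y (H y))
      = -(1+γ) * (y ^ (-(1+γ)-1) * y ^ (1+γ)) * H y
        + (y ^ (-(1+γ)) * y ^ (1+γ)) * G b γ y (H y) := by ring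
  rw [this, e2, e3, one_mul]
  field_simp
  ring


lemma slope_limit (hb : Continuous b) (hγ : 0 < γ) (hδ₀ : 0 < δ₀) (hH : Continuous H)
    (hfix : ∀ y, Tmap b γ δ₀ H y = H y) :
    Tendsto (fun y => H y / y) (𝓝[>] (0:ℝ)) (𝓝 (G b γ 0 (H 0) / (2+γ))) := by
  have hψc : Continuous (fun t => G b γ t (H t)) := G_cont hb γ hH
  set ψ0 := G b γ 0 (H 0) with hψ0
  rw [Metric.tendsto_nhdsWithin_nhds]
  intro ε hε
  obtain ⟨r, hr0, hball⟩ := Metric.continuousAt_iff.1 (hψc.continuousAt (x := 0)) (ε/2)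
    (by linarith)
  refine ⟨min r δ₀, by positivity, ?_⟩
  intro y hy hdist
  have hy0 : (0:ℝ) < y := hy
  have hyne : y ≠ 0 := ne_of_gt hy0
  rw [Real.dist_eq, sub_zero, abs_of_pos hy0, lt_min_iff] at hdist
  obtain ⟨hyr, hyδ⟩ := hdist
  have hyIcc : y ∈ Icc 0 δ₀ := ⟨le_of_lt hy0, le_of_lt hyδ⟩
  -- integral bound for ψ - ψ0
  have hKb : ∀ t ∈ Icc (0:ℝ) y, |G b γ t (H t) - ψ0| ≤ ε/2 := by
    intro t ht
    have hd : dist t 0 < r := by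
      rw [Real.dist_eq, sub_zero, abs_of_nonneg ht.1]
      exact lt_of_le_of_lt ht.2 hyr
    have := hball hd
    rw [Real.dist_eq] at this
    exact le_of_lt this
  have hIb := int_bound (δ₀ := δ₀) hγ (fun t => G b γ t (H t) - ψ0) hyIcc hKb
  set I : ℝ := ∫ t in (0:ℝ)..y, φf b γ δ₀ H t with hI
  -- the weighted integral of (ψ - ψ0) equals I - ψ0 * y^(2+γ)/(2+γ)
  have hsplit : (∫ t in (0:ℝ)..y, (cl δ₀ t) ^ (1+γ) * (G b γ t (H t) - ψ0))
      = I - ψ0 * (y ^ (2+γ) / (2+γ)) := by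
    have hfi : IntervalIntegrable (φf b γ δ₀ H) volume 0 y :=
      (φf_cont hb hγ hH).intervalIntegrable _ _
    have hclc : Continuous (fun t => (cl δ₀ t) ^ (1+γ)) :=
      continuous_iff_continuousAt.mpr fun x =>
        (Real.continuousAt_rpow_const _ _ (Or.inr (by linarith))).comp
          ((continuous_const.max ((continuous_id.min continuous_const))).continuousAt)
    have hgi : IntervalIntegrable (fun t => (cl δ₀ t) ^ (1+γ) * ψ0) volume 0 y :=
      (hclc.mul continuous_const).intervalIntegrable _ _
    have h1 : ∀ t : ℝ, (cl δ₀ t) ^ (1+γ) * (G b γ t (H t) - ψ0)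
        = φf b γ δ₀ H t - (cl δ₀ t) ^ (1+γ) * ψ0 := by
      intro t; rw [φf]; ring
    rw [intervalIntegral.integral_congr (g := fun t => φf b γ δ₀ H t - (cl δ₀ t) ^ (1+γ) * ψ0)
      (fun t _ => h1 t), intervalIntegral.integral_sub hfi hgi]
    have hcli : (∫ t in (0:ℝ)..y, (cl δ₀ t) ^ (1+γ)) = y ^ (2+γ) / (2+γ) := by
      have heqon : EqOn (fun t => (cl δ₀ t) ^ (1+γ)) (fun t => t ^ (1+γ)) (uIcc 0 y) := by
        intro t ht
        rw [uIcc_of_le (le_of_lt hy0)] at ht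
        simp only
        rw [cl_eq ⟨ht.1, le_trans ht.2 (le_of_lt hyδ)⟩]
      rw [intervalIntegral.integral_congr heqon, integral_rpow (Or.inl (by linarith))]
      have he : (1:ℝ)+γ+1 = 2+γ := by ring
      rw [Real.zero_rpow (by linarith), he, sub_zero]
    rw [intervalIntegral.integral_mul_const, hcli]
    ring
  -- key identity
  have hHy : H y = y ^ (-(1+γ)) * I := by
    rw [← hfix y, Tmap, cl_eq hyIcc]
  have ea : y ^ (-(2+γ)) * y ^ (2+γ) = 1 := by
    rw [← Real.rpow_add hy0]
    have : -(2+γ) + (2+γ) = (0:ℝ) := by ring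
    rw [this, Real.rpow_zero]
  have eb : y ^ (-(1+γ)) = y ^ (-(2+γ)) * y := by
    have e4 : -(1+γ) = -(2+γ)+(1:ℝ) := by ring
    rw [e4, Real.rpow_add hy0, Real.rpow_one]
  have LHS1 : H y / y = y ^ (-(2+γ)) * I := by
    rw [hHy, eb]
    field_simp
  have hkey : H y / y - ψ0/(2+γ) = y ^ (-(2+γ)) * (I - ψ0 * (y ^ (2+γ) / (2+γ))) := by
    rw [LHS1]
    have h5 : y ^ (-(2+γ)) * (I - ψ0 * (y ^ (2+γ) / (2+γ)))
        = y ^ (-(2+γ)) * I - ψ0 * (y ^ (-(2+γ)) * y ^ (2+γ))/(2+γ) := by ring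
    rw [h5, ea, mul_one]
  -- conclude
  rw [Real.dist_eq, hkey, ← hsplit]
  have hrp : (0:ℝ) ≤ y ^ (-(2+γ)) := Real.rpow_nonneg (le_of_lt hy0) _
  rw [abs_mul, abs_of_nonneg hrp]
  calc y ^ (-(2+γ)) * |∫ t in (0:ℝ)..y, (cl δ₀ t) ^ (1+γ) * (G b γ t (H t) - ψ0)|
      ≤ y ^ (-(2+γ)) * (ε/2 * y ^ (2+γ) / (2+γ)) := mul_le_mul_of_nonneg_left hIb hrp
    _ = (ε/2) * (y ^ (-(2+γ)) * y ^ (2+γ)) / (2+γ) := by ring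
    _ = (ε/2) / (2+γ) := by rw [ea, mul_one]
    _ < ε := by
        rw [div_lt_iff₀ (by linarith)]
        nlinarith
end

/-- contraction estimate -/

lemma Tmap_sub_bound {b : ℝ → ℝ} {γ A δ₀ : ℝ} (hγI : γ ∈ Ioo (0:ℝ) 1) (hA : ∀ s, |b s| ≤ A)
    (hδ₀ : 0 < δ₀) {h₁ h₂ : ℝ → ℝ} (hc₁ : Continuous h₁) (hc₂ : Continuous h₂)
    (hb₁ : ∀ t, |h₁ t| ≤ γ/2) (hb₂ : ∀ t, |h₂ t| ≤ γ/2) (hbcont : Continuous b)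
    {d : ℝ} (hd : ∀ t, |h₁ t - h₂ t| ≤ d) (y : ℝ) :
    |Tmap b γ δ₀ h₁ y - Tmap b γ δ₀ h₂ y| ≤ (2+6*A) * d * cl δ₀ y / (2+γ) := by
  have hγ : 0 < γ := hγI.1
  have hA0 : 0 ≤ A := le_trans (abs_nonneg _) (hA 0)
  have hd0 : 0 ≤ d := le_trans (abs_nonneg _) (hd 0)
  have hzm : cl δ₀ y ∈ Icc 0 δ₀ := cl_mem (le_of_lt hδ₀) y
  rcases eq_or_lt_of_le hzm.1 with h0 | h0
  · rw [Tmap, Tmap, ← h0, Real.zero_rpow (by intro hc; linarith), zero_mul, zero_mul,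
      sub_zero, abs_zero]
    simp
  · set z := cl δ₀ y with hz
    have hKb : ∀ t ∈ Icc (0:ℝ) z, |G b γ t (h₁ t) - G b γ t (h₂ t)| ≤ (2+6*A) * d := by
      intro t _
      refine le_trans (G_lip hγI hA (hb₁ t) (hb₂ t)) ?_
      exact mul_le_mul_of_nonneg_left (hd t) (by linarith)
    have hIb := int_bound (δ₀ := δ₀) hγ
      (fun t => G b γ t (h₁ t) - G b γ t (h₂ t)) hzm hKb
    have hi₁ : IntervalIntegrable (φf b γ δ₀ h₁) volume 0 z :=
      (φf_cont hbcont hγ hc₁).intervalIntegrable _ _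
    have hi₂ : IntervalIntegrable (φf b γ δ₀ h₂) volume 0 z :=
      (φf_cont hbcont hγ hc₂).intervalIntegrable _ _
    have hsub : (∫ t in (0:ℝ)..z, φf b γ δ₀ h₁ t) - (∫ t in (0:ℝ)..z, φf b γ δ₀ h₂ t)
        = ∫ t in (0:ℝ)..z, (cl δ₀ t) ^ (1+γ) * (G b γ t (h₁ t) - G b γ t (h₂ t)) := by
      rw [← intervalIntegral.integral_sub hi₁ hi₂]
      apply intervalIntegral.integral_congr
      intro t _
      simp only [φf]
      ring
    rw [Tmap, Tmap, ← hz, ← mul_sub, abs_mul, abs_of_nonneg (Real.rpow_nonneg hzm.1 _), hsub]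
    have e1 : z ^ (-(1+γ)) * z ^ (2+γ) = z := by
      rw [← Real.rpow_add h0]
      have : -(1+γ) + (2+γ) = (1:ℝ) := by ring
      rw [this, Real.rpow_one]
    calc z ^ (-(1+γ)) * |∫ t in (0:ℝ)..z, (cl δ₀ t) ^ (1+γ) * (G b γ t (h₁ t) - G b γ t (h₂ t))|
        ≤ z ^ (-(1+γ)) * ((2+6*A) * d * z ^ (2+γ) / (2+γ)) :=
          mul_le_mul_of_nonneg_left hIb (Real.rpow_nonneg hzm.1 _)
      _ = (2+6*A) * d * (z ^ (-(1+γ)) * z ^ (2+γ)) / (2+γ) := by ring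
      _ = (2+6*A) * d * z / (2+γ) := by rw [e1]


end Stmt1Aux

open Stmt1Aux

/-- Local existence of a strictly positive `C¹` solution of the
singular Riccati ODE `f' = a₀ + (a₁/(1−y))·f + (a/(1−y))·f²` with `f 0 = γ`. -/
theorem stmt1 (γ : ℝ) (hγ : γ ∈ Ioo (0:ℝ) 1) (a : ℝ → ℝ)
    (ha : ContinuousOn a (Icc (0:ℝ) 1)) :
    ∃ δ : ℝ, δ ∈ Ioc (0:ℝ) (1/2) ∧
      ∃ f f' : ℝ → ℝ,
        (ContinuousOn f' (Icc (0:ℝ) δ) ∧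
          ∀ y ∈ Icc (0:ℝ) δ, HasDerivWithinAt f (f' y) (Icc (0:ℝ) δ) y) ∧
        (∀ y ∈ Icc (0:ℝ) δ, 0 < f y) ∧
        f 0 = γ ∧
        (∀ y ∈ Ioo (0:ℝ) δ,
          f' y = a0 γ y + a1 γ y / (1 - y) * f y + a y / (1 - y) * f y ^ 2) := by
  have hγ0 : 0 < γ := hγ.1
  have hγ1 : γ < 1 := hγ.2
  -- bound for a, and globally continuous extension b
  obtain ⟨A₀, hA₀⟩ := isCompact_Icc.exists_bound_of_continuousOn ha
  set A : ℝ := max A₀ 0 with hAdef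
  have hA0 : 0 ≤ A := le_max_right _ _
  set b : ℝ → ℝ := fun t => a (cl 1 t) with hbdef
  have hbc : Continuous b := ha.comp_continuous (continuous_cl 1) (fun t => cl_mem zero_le_one t)
  have hAb : ∀ t, |b t| ≤ A := by
    intro t
    have h1 := hA₀ (cl 1 t) (cl_mem zero_le_one t)
    rw [Real.norm_eq_abs] at h1
    exact le_trans h1 (le_max_left _ _)
  have hbeq : ∀ t ∈ Icc (0:ℝ) 1, b t = a t := fun t ht => by
    show a (cl 1 t) = a t
    rw [cl_eq ht]
  -- constants
  set C : ℝ := 3 + 5*A with hCdef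
  set L : ℝ := 2 + 6*A with hLdef
  have hC0 : 0 < C := by rw [hCdef]; linarith
  have hL0 : 0 < L := by rw [hLdef]; linarith
  set δ₀ : ℝ := min (1/2) (min (γ/(C+1)) (1/(L+1))) with hδ₀def
  have hδ₀ : 0 < δ₀ := by
    rw [hδ₀def]
    apply lt_min (by norm_num)
    exact lt_min (by positivity) (by positivity)
  have hδhalf : δ₀ ≤ 1/2 := min_le_left _ _
  have hCδ : C * δ₀ / (2+γ) ≤ γ/2 := by
    have h1 : δ₀ ≤ γ/(C+1) := le_trans (min_le_right _ _) (min_le_left _ _)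
    have h2 : C * δ₀ ≤ γ := by
      calc C * δ₀ ≤ C * (γ/(C+1)) := mul_le_mul_of_nonneg_left h1 (le_of_lt hC0)
        _ ≤ γ := by
            rw [mul_div_assoc', div_le_iff₀ (by linarith : (0:ℝ) < C+1)]
            nlinarith
    rw [div_le_iff₀ (by linarith : (0:ℝ) < 2+γ)]
    nlinarith
  have hLδ : L * δ₀ / (2+γ) ≤ 1/2 := by
    have h1 : δ₀ ≤ 1/(L+1) := le_trans (min_le_right _ _) (min_le_right _ _)
    have h2 : L * δ₀ ≤ 1 := by
      calc L * δ₀ ≤ L * (1/(L+1)) := mul_le_mul_of_nonneg_left h1 (le_of_lt hL0)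
        _ ≤ 1 := by
            rw [mul_div_assoc', div_le_iff₀ (by linarith : (0:ℝ) < L+1)]
            nlinarith
    rw [div_le_iff₀ (by linarith : (0:ℝ) < 2+γ)]
    nlinarith
  -- the integral bound valid for any candidate h
  have hint : ∀ h : ℝ → ℝ, (∀ t, |h t| ≤ γ/2) →
      ∀ z ∈ Icc (0:ℝ) δ₀, |∫ t in (0:ℝ)..z, φf b γ δ₀ h t| ≤ C * z ^ (2+γ)/(2+γ) := by
    intro h hhb z hz
    have hK : ∀ t ∈ Icc (0:ℝ) z, |G b γ t (h t)| ≤ C := fun t _ => G_bound hγ hAb (hhb t)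
    have := int_bound (δ₀ := δ₀) hγ0 (fun t => G b γ t (h t)) hz hK
    simpa [φf] using this
  -- the complete space
  set S : Set (BoundedContinuousFunction ℝ ℝ) := {h | ∀ y, |h y| ≤ γ/2} with hSdef
  have hSc : IsClosed S := by
    have : S = ⋂ y : ℝ, {h : BoundedContinuousFunction ℝ ℝ | |h y| ≤ γ/2} := by
      ext h; simp [hSdef, mem_iInter]
    rw [this]
    refine isClosed_iInter fun y => isClosed_le ?_ continuous_const
    exact (continuous_eval_const y).abs
  haveI : CompleteSpace ↥S := hSc.completeSpace_coe
  haveI : Nonempty ↥S := ⟨⟨0, by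
    intro y
    rw [show ((0 : BoundedContinuousFunction ℝ ℝ) y) = 0 from rfl, abs_zero]
    positivity⟩⟩
  -- the operator maps into S
  have hmemT : ∀ h : ℝ → ℝ, (∀ t, |h t| ≤ γ/2) → ∀ y, |Tmap b γ δ₀ h y| ≤ γ/2 := by
    intro h hhb y
    refine le_trans (Tmap_bound hγ0 hδ₀ C (hint h hhb) y) (le_trans ?_ hCδ)
    have h1 : cl δ₀ y ≤ δ₀ := (cl_mem (le_of_lt hδ₀) y).2
    gcongr <;> exact (cl_mem (le_of_lt hδ₀) y).1
  set T : ↥S → ↥S := fun h =>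
    ⟨BoundedContinuousFunction.ofNormedAddCommGroup (Tmap b γ δ₀ h.1)
      (Tmap_cont hbc hγ0 hδ₀ h.1.continuous C (hint h.1 h.2)) (γ/2)
      (fun y => by rw [Real.norm_eq_abs]; exact hmemT h.1 h.2 y),
     fun y => hmemT h.1 h.2 y⟩ with hTdef
  -- contraction
  have hcontr : ContractingWith (1/2 : NNReal) T := by
    constructor
    · rw [← NNReal.coe_lt_coe]
      push_cast
      norm_num
    · apply LipschitzWith.of_dist_le_mul
      intro h₁ h₂
      have hcoe : ((1/2 : NNReal) : ℝ) = 1/2 := by norm_num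
      rw [Subtype.dist_eq, Subtype.dist_eq, hcoe]
      have hd0 : (0:ℝ) ≤ dist h₁.1 h₂.1 := dist_nonneg
      rw [BoundedContinuousFunction.dist_le (by positivity)]
      intro y
      have hdy : ∀ t, |h₁.1 t - h₂.1 t| ≤ dist h₁.1 h₂.1 := by
        intro t
        rw [← Real.dist_eq]
        exact BoundedContinuousFunction.dist_coe_le_dist t
      have hb1 := Tmap_sub_bound hγ hAb hδ₀ h₁.1.continuous h₂.1.continuous h₁.2 h₂.2 hbc hdy y
      have hTy : ∀ h : ↥S, ((T h).1 : ℝ → ℝ) y = Tmap b γ δ₀ h.1 y := fun h => rfl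
      rw [Real.dist_eq, hTy, hTy]
      refine le_trans hb1 ?_
      have h1 : cl δ₀ y ≤ δ₀ := (cl_mem (le_of_lt hδ₀) y).2
      calc (2+6*A) * dist h₁.1 h₂.1 * cl δ₀ y / (2+γ)
          ≤ (2+6*A) * dist h₁.1 h₂.1 * δ₀ / (2+γ) := by
            gcongr <;> exact (cl_mem (le_of_lt hδ₀) y).1
        _ = (L * δ₀ / (2+γ)) * dist h₁.1 h₂.1 := by rw [hLdef]; ring
        _ ≤ (1/2) * dist h₁.1 h₂.1 := mul_le_mul_of_nonneg_right hLδ hd0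
  -- fixed point
  set hstar : ↥S := ContractingWith.fixedPoint T hcontr with hstardef
  have hfixeq : T hstar = hstar := hcontr.fixedPoint_isFixedPt
  set H : ℝ → ℝ := (hstar.1 : ℝ → ℝ) with hHdef
  have hHc : Continuous H := hstar.1.continuous
  have hHb : ∀ t, |H t| ≤ γ/2 := hstar.2
  have hfix : ∀ y, Tmap b γ δ₀ H y = H y := by
    intro y
    conv_rhs => rw [hHdef, ← hfixeq]
    rfl
  have hH0 : H 0 = 0 := by rw [← hfix 0]; exact Tmap_zero hγ0 (le_refl 0)
  -- the solution
  set ψ0 : ℝ := G b γ 0 (H 0) with hψ0def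
  set F : ℝ → ℝ := fun y => γ + H y with hFdef
  set fd : ℝ → ℝ := fun y => if y = 0 then ψ0/(2+γ) else G b γ y (H y) - (1+γ) * H y / y
    with hfddef
  have hslope : Tendsto (fun y => H y / y) (𝓝[>] (0:ℝ)) (𝓝 (ψ0/(2+γ))) :=
    slope_limit hbc hγ0 hδ₀ hHc hfix
  set δ : ℝ := δ₀/2 with hδdef
  have hδpos : 0 < δ := by positivity
  have hδlt : δ < δ₀ := by rw [hδdef]; linarith
  have hδ14 : δ ≤ 1/4 := by rw [hδdef]; linarith
  refine ⟨δ, ⟨hδpos, by linarith⟩, F, fd, ⟨?_, ?_⟩, ?_, ?_, ?_⟩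
  · -- continuity of fd on Icc 0 δ
    intro y hy
    rcases eq_or_ne y 0 with h0 | h0
    · subst h0
      apply continuousWithinAt_diff_self.mp
      have hfd0 : fd 0 = ψ0/(2+γ) := if_pos rfl
      have hmono : 𝓝[Icc (0:ℝ) δ \ {0}] (0:ℝ) ≤ 𝓝[>] (0:ℝ) := by
        apply nhdsWithin_mono
        intro z hz
        exact lt_of_le_of_ne hz.1.1 (fun hc => hz.2 hc.symm)
      have h1 : Tendsto (fun z => G b γ z (H z) - (1+γ) * H z / z) (𝓝[>] (0:ℝ))
          (𝓝 (ψ0 - (1+γ) * (ψ0/(2+γ)))) := by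
        apply Tendsto.sub
        · exact ((G_cont hbc γ hHc).continuousAt.tendsto).mono_left nhdsWithin_le_nhds
        · have h2 : Tendsto (fun z => (1+γ) * (H z / z)) (𝓝[>] (0:ℝ))
              (𝓝 ((1+γ) * (ψ0/(2+γ)))) := hslope.const_mul _
          apply h2.congr
          intro z
          ring
      have h3 : ψ0 - (1+γ) * (ψ0/(2+γ)) = ψ0/(2+γ) := by
        field_simp
        ring
      rw [h3] at h1
      have h4 : Tendsto fd (𝓝[Icc (0:ℝ) δ \ {0}] (0:ℝ)) (𝓝 (fd 0)) := by
        rw [hfd0]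
        apply (h1.mono_left hmono).congr'
        filter_upwards [eventually_mem_nhdsWithin] with z hz
        have hzne : z ≠ 0 := by
          intro hc
          exact hz.2 (by rw [hc]; exact rfl)
        show _ = (if z = 0 then ψ0/(2+γ) else G b γ z (H z) - (1+γ) * H z / z)
        rw [if_neg hzne]
      exact h4
    · -- y ≠ 0
      have hg : ContinuousAt (fun z => G b γ z (H z) - (1+γ) * H z / z) y := by
        apply ContinuousAt.sub
        · exact (G_cont hbc γ hHc).continuousAt
        · exact ((continuous_const.mul hHc).continuousAt).div continuousAt_id h0
      have hev : fd =ᶠ[𝓝 y] fun z => G b γ z (H z) - (1+γ) * H z / z := by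
        filter_upwards [isOpen_compl_singleton.mem_nhds h0] with z hz
        have hzne : z ≠ 0 := by simpa using hz
        show (if z = 0 then ψ0/(2+γ) else G b γ z (H z) - (1+γ) * H z / z) = _
        rw [if_neg hzne]
      exact (hg.congr hev.symm).continuousWithinAt
  · -- derivative claims
    intro y hy
    rcases eq_or_ne y 0 with h0 | h0
    · subst h0
      rw [hasDerivWithinAt_iff_tendsto_slope]
      have hmono : 𝓝[Icc (0:ℝ) δ \ {0}] (0:ℝ) ≤ 𝓝[>] (0:ℝ) := by
        apply nhdsWithin_mono
        intro z hz
        exact lt_of_le_of_ne hz.1.1 (fun hc => hz.2 hc.symm)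
      have hfd0 : fd 0 = ψ0/(2+γ) := if_pos rfl
      rw [hfd0]
      apply (hslope.mono_left hmono).congr
      intro z
      rw [slope_def_field, hFdef]
      simp only
      rw [hH0, sub_zero]
      ring
    · have hy0 : 0 < y := lt_of_le_of_ne hy.1 (Ne.symm h0)
      have hyI : y ∈ Ioo (0:ℝ) δ₀ := ⟨hy0, lt_of_le_of_lt hy.2 hδlt⟩
      have hder := deriv_interior hbc hγ0 hδ₀ hHc hfix hyI
      have hderF : HasDerivAt F (G b γ y (H y) - (1+γ) * H y / y) y := by
        rw [hFdef]
        exact hder.const_add γ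
      have : fd y = G b γ y (H y) - (1+γ) * H y / y := if_neg h0
      rw [this]
      exact hderF.hasDerivWithinAt
  · -- positivity
    intro y _
    have := abs_le.1 (hHb y)
    rw [hFdef]
    simp only
    linarith [this.1]
  · -- value at 0
    rw [hFdef]
    simp only
    rw [hH0, add_zero]
  · -- the ODE
    intro y hy
    obtain ⟨hy0, hyδ⟩ := hy
    have hyne : y ≠ 0 := ne_of_gt hy0
    have hy1 : y < 1/4 := lt_of_lt_of_le hyδ hδ14
    have h1ymne : (1:ℝ) - y ≠ 0 := by intro hc; nlinarith
    have hfdy : fd y = G b γ y (H y) - (1+γ) * H y / y := if_neg hyne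
    have hcl12 : cl (1/2) y = y := cl_eq ⟨le_of_lt hy0, by linarith⟩
    have hby : b y = a y := hbeq y ⟨le_of_lt hy0, by linarith⟩
    rw [hfdy, G, hcl12, hby]
    rw [hFdef]
    simp only
    rw [a0, a1]
    field_simp
    ring
end

section
/- Let γ ∈ (0,1), δ ∈ (0,1], and let a, b : [0,δ] → ℝ be continuous functions with a(y) ≤ b(y) for all y ∈ [0,δ]. Suppose f, g ∈ C¹([0,δ]) satisfy f(0) = g(0) = γ, f'(y) = a₀(y) + (a₁(y)/(1−y))·f(y) + (a(y)/(1−y))·f(y)² for y ∈ (0,δ), and g'(y) = a₀(y) + (a₁(y)/(1−y))·g(y) + (b(y)/(1−y))·g(y)² for y ∈ (0,δ). Then f(y) ≤ g(y) for all y ∈ [0,δ]. Moreover, if a(y) < b(y) for all y ∈ [0,δ], then f(y) < g(y) for all y ∈ (0,δ]. -/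
open Set Real
open MeasureTheory Filter

lemma riccati_mono (α β : ℝ) (c d h h' : ℝ → ℝ)
    (hc : ContinuousOn c (Icc α β)) (hh : ContinuousOn h (Icc α β))
    (hderiv : ∀ t ∈ Ioo α β, HasDerivAt h (h' t) t)
    (hode : ∀ t ∈ Ioo α β, h' t = c t * h t + d t)
    (hd : ∀ t ∈ Ioo α β, 0 ≤ d t) :
    MonotoneOn (fun t => h t * Real.exp (-∫ s in α..t, c s)) (Icc α β) := by
  rcases le_or_gt β α with hβα | hαβ
  · intro x hx y hy hxy
    have : x = y := le_antisymm hxy (hy.2.trans (hβα.trans hx.1))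
    simp [this]
  set C : ℝ → ℝ := fun t => ∫ s in α..t, c s with hCdef
  have hCcont : ContinuousOn C (Icc α β) := by
    have := intervalIntegral.continuousOn_primitive_interval (μ := volume) (f := c) (a := α)
      (b := β) (by rw [uIcc_of_le hαβ.le]; exact hc.integrableOn_Icc)
    rwa [uIcc_of_le hαβ.le] at this
  have hCd : ∀ t ∈ Ioo α β, HasDerivAt C (c t) t := by
    intro t ht
    have hmem : Icc α β ∈ nhds t := Icc_mem_nhds ht.1 ht.2
    have hct : ContinuousAt c t := (hc t (Ioo_subset_Icc_self ht)).continuousAt hmem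
    have hint : IntervalIntegrable c volume α t := by
      apply ContinuousOn.intervalIntegrable
      rw [uIcc_of_le ht.1.le]
      exact hc.mono (Icc_subset_Icc le_rfl ht.2.le)
    exact intervalIntegral.integral_hasDerivAt_right hint
      ⟨Icc α β, hmem, hc.aestronglyMeasurable measurableSet_Icc⟩ hct
  have hu : ∀ t ∈ Ioo α β,
      HasDerivAt (fun t => h t * Real.exp (-C t)) (Real.exp (-C t) * d t) t := by
    intro t ht
    have he : HasDerivAt (fun t => Real.exp (-C t)) (Real.exp (-C t) * (-c t)) t :=
      ((hCd t ht).neg).exp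
    have := (hderiv t ht).mul he
    have heq : h' t * Real.exp (-C t) + h t * (Real.exp (-C t) * (-c t))
        = Real.exp (-C t) * d t := by rw [hode t ht]; ring
    rwa [heq] at this
  apply monotoneOn_of_deriv_nonneg (convex_Icc α β)
  · exact hh.mul ((hCcont.neg).rexp)
  · rw [interior_Icc]
    exact fun t ht => ((hu t ht).differentiableAt).differentiableWithinAt
  · rw [interior_Icc]
    intro t ht
    rw [(hu t ht).deriv]
    exact mul_nonneg (Real.exp_pos _).le (hd t ht)


set_option maxHeartbeats 2000000 in
/-- **Comparison.** If `a ≤ b` on `[0,δ]` and `f, g` are `C¹` solutions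
of the respective singular Riccati Cauchy problems with `f 0 = g 0 = γ`, then `f ≤ g`
on `[0,δ]`; if moreover `a < b` on `[0,δ]`, then `f < g` on `(0,δ]`. -/
theorem stmt2 (γ δ : ℝ) (hγ : γ ∈ Ioo (0:ℝ) 1) (hδ : δ ∈ Ioc (0:ℝ) 1)
    (a b : ℝ → ℝ)
    (hacont : ContinuousOn a (Icc (0:ℝ) δ)) (hbcont : ContinuousOn b (Icc (0:ℝ) δ))
    (hab : ∀ y ∈ Icc (0:ℝ) δ, a y ≤ b y)
    (f f' g g' : ℝ → ℝ)
    (hf : ContinuousOn f' (Icc (0:ℝ) δ) ∧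
      ∀ y ∈ Icc (0:ℝ) δ, HasDerivWithinAt f (f' y) (Icc (0:ℝ) δ) y)
    (hg : ContinuousOn g' (Icc (0:ℝ) δ) ∧
      ∀ y ∈ Icc (0:ℝ) δ, HasDerivWithinAt g (g' y) (Icc (0:ℝ) δ) y)
    (hf0 : f 0 = γ) (hg0 : g 0 = γ)
    (hfode : ∀ y ∈ Ioo (0:ℝ) δ,
      f' y = a0 γ y + a1 γ y / (1 - y) * f y + a y / (1 - y) * f y ^ 2)
    (hgode : ∀ y ∈ Ioo (0:ℝ) δ,
      g' y = a0 γ y + a1 γ y / (1 - y) * g y + b y / (1 - y) * g y ^ 2) :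
    (∀ y ∈ Icc (0:ℝ) δ, f y ≤ g y) ∧
    ((∀ y ∈ Icc (0:ℝ) δ, a y < b y) → ∀ y ∈ Ioc (0:ℝ) δ, f y < g y) := by
  obtain ⟨hγ0, hγ1⟩ := hγ
  obtain ⟨hδ0, hδ1⟩ := hδ
  set h : ℝ → ℝ := fun t => g t - f t with hhdef
  set h' : ℝ → ℝ := fun t => g' t - f' t with hh'def
  set c : ℝ → ℝ := fun t => (a1 γ t + a t * (f t + g t)) / (1 - t) with hcdef
  set d : ℝ → ℝ := fun t => (b t - a t) * g t ^ 2 / (1 - t) with hddef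
  have hfc : ContinuousOn f (Icc 0 δ) := fun y hy => (hf.2 y hy).continuousWithinAt
  have hgc : ContinuousOn g (Icc 0 δ) := fun y hy => (hg.2 y hy).continuousWithinAt
  have hhc : ContinuousOn h (Icc 0 δ) := hgc.sub hfc
  have hh0 : h 0 = 0 := by simp [hhdef, hf0, hg0]
  have hhd : ∀ t ∈ Ioo 0 δ, HasDerivAt h (h' t) t := by
    intro t ht
    have hmem : Icc 0 δ ∈ nhds t := Icc_mem_nhds ht.1 ht.2
    exact ((hg.2 t (Ioo_subset_Icc_self ht)).hasDerivAt hmem).sub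
      ((hf.2 t (Ioo_subset_Icc_self ht)).hasDerivAt hmem)
  have hode : ∀ t ∈ Ioo 0 δ, h' t = c t * h t + d t := by
    intro t ht
    have ht0 : t ≠ 0 := ne_of_gt ht.1
    have ht1 : (1:ℝ) - t ≠ 0 := by
      have : t < 1 := lt_of_lt_of_le ht.2 hδ1
      intro hc0; rw [sub_eq_zero] at hc0; exact absurd hc0.symm (ne_of_lt this)
    simp only [hh'def, hhdef, hcdef, hddef, hfode t ht, hgode t ht, a0, a1]
    field_simp
    ring
  have hd0 : ∀ t ∈ Ioo 0 δ, 0 ≤ d t := by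
    intro t ht
    have h1t : (0:ℝ) ≤ 1 - t := by
      have : t < 1 := lt_of_lt_of_le ht.2 hδ1
      linarith
    exact div_nonneg (mul_nonneg (sub_nonneg.mpr (hab t (Ioo_subset_Icc_self ht)))
      (sq_nonneg _)) h1t
  have hccont : ∀ {ε T : ℝ}, 0 < ε → T ≤ δ → T < 1 → ContinuousOn c (Icc ε T) := by
    intro ε T hε hT hT1
    have hsub : Icc ε T ⊆ Icc 0 δ := Icc_subset_Icc hε.le hT
    have ha1c : ContinuousOn (fun t => a1 γ t) (Icc ε T) := by
      have h2 : ContinuousOn (fun t : ℝ => ((2 * γ + 1) * t - (1 + γ)) / t) (Icc ε T) :=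
        ContinuousOn.div
          (((continuous_const.mul continuous_id).sub continuous_const).continuousOn)
          continuousOn_id (fun t ht => ne_of_gt (lt_of_lt_of_le hε ht.1))
      exact h2
    exact (ha1c.add ((hacont.mono hsub).mul ((hfc.mono hsub).add (hgc.mono hsub)))).div
      ((continuous_const.sub continuous_id).continuousOn)
      (fun t ht => by
        have h1 : t < 1 := lt_of_le_of_lt ht.2 hT1
        intro hc0; rw [sub_eq_zero] at hc0; exact absurd hc0.symm (ne_of_lt h1))
  clear_value h h' c d
  have hweak : ∀ y, 0 < y → y ≤ δ → y < 1 → 0 ≤ h y := by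
    intro y hy0 hyδ hy1
    obtain ⟨M1, hM1⟩ := (isCompact_Icc (a := (0:ℝ)) (b := δ)).exists_bound_of_continuousOn
      (hacont.mul (hfc.add hgc))
    have hM1' : ∀ t ∈ Icc (0:ℝ) δ, a t * (f t + g t) ≤ M1 := fun t ht =>
      (le_abs_self _).trans (by rw [← Real.norm_eq_abs]; exact hM1 t ht)
    have hM10 : 0 ≤ M1 := le_trans (norm_nonneg _) (hM1 0 ⟨le_rfl, hδ0.le⟩)
    set N : ℝ := 2 * γ + 1 + M1 with hN
    clear_value N
    have hN0 : 0 < N := by rw [hN]; linarith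
    have h1y : 0 < 1 - y := by linarith
    set M : ℝ := N / (1 - y) with hM
    clear_value M
    have hM0 : 0 < M := by rw [hM]; exact div_pos hN0 h1y
    have hcM : ∀ t, 0 < t → t ≤ y → c t ≤ M := by
      intro t ht0 hty
      have h1t : (0:ℝ) < 1 - t := by linarith
      have ha1 : a1 γ t ≤ 2 * γ + 1 := by
        have he : a1 γ t = (2 * γ + 1) - (1 + γ) / t := by
          rw [a1]; field_simp
        rw [he]
        have : 0 ≤ (1 + γ) / t := div_nonneg (by linarith) ht0.le
        linarith
      have hnum : a1 γ t + a t * (f t + g t) ≤ N := by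
        have := hM1' t ⟨ht0.le, hty.trans hyδ⟩
        rw [hN]; linarith
      simp only [hcdef]
      rw [hM]
      exact div_le_div₀ hN0.le hnum h1y (by linarith)
    have key : ∀ η : ℝ, 0 < η → -η ≤ h y := by
      intro η hη
      set η' : ℝ := η * Real.exp (-M) with hη'
      clear_value η'
      have hη'0 : 0 < η' := by rw [hη']; exact mul_pos hη (Real.exp_pos _)
      have hT : Tendsto h (nhdsWithin 0 (Icc 0 δ)) (nhds 0) := by
        have h2 := hhc 0 ⟨le_rfl, hδ0.le⟩
        rw [ContinuousWithinAt, hh0] at h2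
        exact h2
      have hev : {t | h t ∈ Ioo (-η') η'} ∈ nhdsWithin 0 (Icc 0 δ) :=
        hT (Ioo_mem_nhds (by linarith) hη'0)
      rw [nhdsWithin_Icc_eq_nhdsGE hδ0, mem_nhdsGE_iff_exists_Icc_subset] at hev
      obtain ⟨u, hu0, hu⟩ := hev
      set ε : ℝ := min u y / 2 with hε
      clear_value ε
      have hminuy : 0 < min u y := lt_min hu0 hy0
      have hε0 : 0 < ε := by rw [hε]; linarith
      have hεy : ε < y := by
        have : min u y ≤ y := min_le_right _ _
        rw [hε]; linarith
      have hεu : ε ≤ u := by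
        have : min u y ≤ u := min_le_left _ _
        rw [hε]; linarith
      have hhε : h ε ∈ Ioo (-η') η' := hu ⟨hε0.le, hεu⟩
      have mono := riccati_mono ε y c d h h' (hccont hε0 hyδ hy1)
        (hhc.mono (Icc_subset_Icc hε0.le hyδ))
        (fun t ht => hhd t ⟨hε0.trans ht.1, ht.2.trans_le hyδ⟩)
        (fun t ht => hode t ⟨hε0.trans ht.1, ht.2.trans_le hyδ⟩)
        (fun t ht => hd0 t ⟨hε0.trans ht.1, ht.2.trans_le hyδ⟩)
      have hmono := mono ⟨le_rfl, hεy.le⟩ ⟨hεy.le, le_rfl⟩ hεy.le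
      simp only [intervalIntegral.integral_same, neg_zero, Real.exp_zero, mul_one] at hmono
      set Cy : ℝ := ∫ s in ε..y, c s with hCy
      clear_value Cy
      have hCyM : Cy ≤ M := by
        have hci : IntervalIntegrable c volume ε y := by
          apply ContinuousOn.intervalIntegrable
          rw [uIcc_of_le hεy.le]
          exact (hccont hε0 hyδ hy1).mono (Icc_subset_Icc le_rfl le_rfl)
        have h3 := intervalIntegral.integral_mono_on hεy.le hci intervalIntegrable_const
          (fun t ht => hcM t (lt_of_lt_of_le hε0 ht.1) ht.2)
        rw [intervalIntegral.integral_const, smul_eq_mul] at h3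
        rw [hCy]
        have hyε1 : y - ε ≤ 1 := by linarith
        nlinarith
      have step1 : -η' ≤ h y * Real.exp (-Cy) := le_trans hhε.1.le hmono
      have step2 : -η' * Real.exp Cy ≤ h y := by
        have h4 := mul_le_mul_of_nonneg_right step1 (Real.exp_pos Cy).le
        have h5 : h y * Real.exp (-Cy) * Real.exp Cy = h y := by
          rw [mul_assoc, ← Real.exp_add, neg_add_cancel, Real.exp_zero, mul_one]
        rwa [h5] at h4
      have step3 : -η ≤ -η' * Real.exp Cy := by
        have h6 : η' * Real.exp Cy ≤ η' * Real.exp M :=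
          mul_le_mul_of_nonneg_left (Real.exp_le_exp.mpr hCyM) hη'0.le
        have h7 : η' * Real.exp M = η := by
          rw [hη', mul_assoc, ← Real.exp_add, neg_add_cancel, Real.exp_zero, mul_one]
        nlinarith
      linarith
    by_contra hcon
    push_neg at hcon
    have := key (-(h y) / 2) (by linarith)
    linarith
  have hweakIcc : ∀ y ∈ Icc (0:ℝ) δ, 0 ≤ h y := by
    intro y hy
    rcases eq_or_lt_of_le hy.1 with h0 | hy0
    · rw [← h0, hh0]
    rcases lt_or_ge y 1 with hy1 | hy1
    · exact hweak y hy0 hy.2 hy1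
    · have hyδ : y = δ := le_antisymm hy.2 (hδ1.trans hy1)
      haveI := right_nhdsWithin_Ico_neBot (show (0:ℝ) < δ from hδ0)
      have htd : Tendsto h (nhdsWithin δ (Ico 0 δ)) (nhds (h δ)) :=
        (hhc δ ⟨hδ0.le, le_rfl⟩).mono_left (nhdsWithin_mono _ Ico_subset_Icc_self)
      have hge : ∀ᶠ t in nhdsWithin δ (Ico 0 δ), 0 ≤ h t := by
        filter_upwards [eventually_mem_nhdsWithin] with t ht
        rcases eq_or_lt_of_le ht.1 with h0 | ht0
        · rw [← h0, hh0]
        · exact hweak t ht0 ht.2.le (lt_of_lt_of_le ht.2 hδ1)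
      rw [hyδ]
      exact ge_of_tendsto htd hge
  refine ⟨fun y hy => ?_, ?_⟩
  · have hw := hweakIcc y hy
    simp only [hhdef] at hw
    exact sub_nonneg.1 hw
  intro hab'
  have claim1 : ∀ y, 0 < y → y ≤ δ → y < 1 → 0 < h y := by
    intro y hy0 hyδ hy1
    rcases (hweakIcc y ⟨hy0.le, hyδ⟩).lt_or_eq with hpos | heq
    · exact hpos
    exfalso
    have hzero : ∀ t ∈ Ioo (0:ℝ) y, h t = 0 := by
      intro t ht
      have mono := riccati_mono t y c d h h' (hccont ht.1 hyδ hy1)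
        (hhc.mono (Icc_subset_Icc ht.1.le hyδ))
        (fun s hs => hhd s ⟨ht.1.trans hs.1, hs.2.trans_le hyδ⟩)
        (fun s hs => hode s ⟨ht.1.trans hs.1, hs.2.trans_le hyδ⟩)
        (fun s hs => hd0 s ⟨ht.1.trans hs.1, hs.2.trans_le hyδ⟩)
      have hmono := mono ⟨le_rfl, ht.2.le⟩ ⟨ht.2.le, le_rfl⟩ ht.2.le
      simp only [intervalIntegral.integral_same, neg_zero, Real.exp_zero, mul_one] at hmono
      rw [← heq, zero_mul] at hmono
      have h2 := hweakIcc t ⟨ht.1.le, ht.2.le.trans hyδ⟩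
      linarith
    have hgzero : ∀ t ∈ Ioo (0:ℝ) y, g t = 0 := by
      intro t ht
      have htδ : t ∈ Ioo (0:ℝ) δ := ⟨ht.1, ht.2.trans_le hyδ⟩
      have hmem : Icc (0:ℝ) δ ∈ nhds t := Icc_mem_nhds htδ.1 htδ.2
      have hfg : f =ᶠ[nhds t] g := by
        filter_upwards [isOpen_Ioo.mem_nhds ht] with s hs
        have h3 := hzero s hs
        simp only [hhdef] at h3
        linarith
      have hdf : HasDerivAt f (f' t) t := (hf.2 t (Ioo_subset_Icc_self htδ)).hasDerivAt hmem
      have hdg : HasDerivAt g (g' t) t := (hg.2 t (Ioo_subset_Icc_self htδ)).hasDerivAt hmem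
      have heq' : f' t = g' t := (hfg.hasDerivAt_iff.mp hdf).unique hdg
      have hodet := hode t htδ
      have hht : h t = 0 := hzero t ht
      have hh't : h' t = 0 := by simp only [hh'def]; rw [← heq', sub_self]
      rw [hh't, hht, mul_zero, zero_add] at hodet
      have h1t : (0:ℝ) < 1 - t := by linarith [ht.2, hy1]
      have hba : 0 < b t - a t := sub_pos.mpr (hab' t ⟨ht.1.le, htδ.2.le⟩)
      simp only [hddef] at hodet
      have h4 : (b t - a t) * g t ^ 2 = 0 := by
        rcases div_eq_zero_iff.mp hodet.symm with h5 | h5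
        · exact h5
        · exact absurd h5 (ne_of_gt h1t)
      rcases mul_eq_zero.mp h4 with h5 | h5
      · exact absurd h5 (ne_of_gt hba)
      · exact (pow_eq_zero_iff two_ne_zero).mp h5
    haveI := left_nhdsWithin_Ioo_neBot (show (0:ℝ) < y from hy0)
    have hgt : Tendsto g (nhdsWithin 0 (Ioo 0 y)) (nhds γ) := by
      have h6 := hgc 0 ⟨le_rfl, hδ0.le⟩
      rw [ContinuousWithinAt, hg0] at h6
      exact h6.mono_left (nhdsWithin_mono _ (fun t ht => ⟨ht.1.le, ht.2.le.trans hyδ⟩))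
    have hgt0 : Tendsto g (nhdsWithin 0 (Ioo 0 y)) (nhds 0) := by
      refine Tendsto.congr' ?_ tendsto_const_nhds
      filter_upwards [eventually_mem_nhdsWithin] with t ht
      exact (hgzero t ht).symm
    exact absurd (tendsto_nhds_unique hgt hgt0) (ne_of_gt hγ0)
  intro y hy
  have goal_of_h : ∀ z, 0 < h z → f z < g z := by
    intro z hpos
    simp only [hhdef] at hpos
    linarith
  rcases lt_or_ge y 1 with hy1 | hy1
  · exact goal_of_h y (claim1 y hy.1 hy.2 hy1)
  · have hy1' : y = 1 := le_antisymm (hy.2.trans hδ1) hy1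
    have hδ1' : δ = 1 := le_antisymm hδ1 (hy1.trans hy.2)
    have hyδ : y = δ := hy1'.trans hδ1'.symm
    rw [hyδ]
    apply goal_of_h δ
    rcases (hweakIcc δ ⟨hδ0.le, le_rfl⟩).lt_or_eq with hpos | heq
    · exact hpos
    exfalso
    set A : ℝ → ℝ := fun t => a1 γ t + a t * (f t + g t) with hA
    clear_value A
    have hδ2 : (0:ℝ) < δ / 2 := by linarith
    have hδ2' : δ / 2 < δ := by linarith
    have hsub2 : Icc (δ/2) δ ⊆ Icc (0:ℝ) δ := Icc_subset_Icc hδ2.le le_rfl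
    have hAc : ContinuousOn A (Icc (δ/2) δ) := by
      rw [hA]
      apply ContinuousOn.add
      · have h2 : ContinuousOn (fun t : ℝ => ((2 * γ + 1) * t - (1 + γ)) / t) (Icc (δ/2) δ) :=
          ContinuousOn.div
            (((continuous_const.mul continuous_id).sub continuous_const).continuousOn)
            continuousOn_id (fun t ht => ne_of_gt (lt_of_lt_of_le hδ2 ht.1))
        exact h2
      · exact (hacont.mono hsub2).mul ((hfc.mono hsub2).add (hgc.mono hsub2))
    set ψ : ℝ → ℝ := fun t => (g' t - f' t) * (1 - t) with hψ
    clear_value ψ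
    have hψc : ContinuousOn ψ (Icc (0:ℝ) δ) := by
      rw [hψ]
      exact (hg.1.sub hf.1).mul (continuous_const.sub continuous_id).continuousOn
    set φ : ℝ → ℝ := fun t => A t * h t + (b t - a t) * g t ^ 2 with hφ
    clear_value φ
    have hφc : ContinuousOn φ (Icc (δ/2) δ) := by
      rw [hφ]
      exact (hAc.mul (hhc.mono hsub2)).add
        (((hbcont.mono hsub2).sub (hacont.mono hsub2)).mul ((hgc.mono hsub2).pow 2))
    have heqφψ : ∀ t ∈ Ico (δ/2) δ, φ t = ψ t := by
      intro t ht
      have htδ : t ∈ Ioo (0:ℝ) δ := ⟨lt_of_lt_of_le hδ2 ht.1, ht.2⟩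
      have h1t : (1:ℝ) - t ≠ 0 := by
        have : t < 1 := lt_of_lt_of_le ht.2 hδ1
        intro hc0; rw [sub_eq_zero] at hc0; exact absurd hc0.symm (ne_of_lt this)
      have h2 := hode t htδ
      simp only [hh'def, hcdef, hddef] at h2
      rw [hφ, hψ, hA]
      simp only []
      rw [h2]
      field_simp
    haveI := right_nhdsWithin_Ico_neBot hδ2'
    have hl1 : Tendsto φ (nhdsWithin δ (Ico (δ/2) δ)) (nhds (φ δ)) :=
      (hφc δ ⟨hδ2'.le, le_rfl⟩).mono_left
        (nhdsWithin_mono _ Ico_subset_Icc_self)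
    have hl2 : Tendsto ψ (nhdsWithin δ (Ico (δ/2) δ)) (nhds (ψ δ)) :=
      (hψc δ ⟨hδ0.le, le_rfl⟩).mono_left
        (nhdsWithin_mono _ (fun t ht => ⟨hδ2.le.trans ht.1, ht.2.le⟩))
    have hl2' : Tendsto φ (nhdsWithin δ (Ico (δ/2) δ)) (nhds (ψ δ)) := by
      refine hl2.congr' ?_
      filter_upwards [eventually_mem_nhdsWithin] with t ht
      exact (heqφψ t ht).symm
    have hφψδ : φ δ = ψ δ := tendsto_nhds_unique hl1 hl2'
    have hψδ0 : ψ δ = 0 := by rw [hψ]; simp only []; rw [hδ1']; ring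
    have hhδ : h δ = 0 := heq.symm
    have hgδ : g δ = 0 := by
      have h3 : A δ * h δ + (b δ - a δ) * g δ ^ 2 = 0 := by
        have h4 : φ δ = A δ * h δ + (b δ - a δ) * g δ ^ 2 := by rw [hφ]
        rw [← h4, hφψδ, hψδ0]
      rw [hhδ, mul_zero, zero_add] at h3
      have hba : 0 < b δ - a δ := sub_pos.mpr (hab' δ ⟨hδ0.le, le_rfl⟩)
      rcases mul_eq_zero.mp h3 with h5 | h5
      · exact absurd h5 (ne_of_gt hba)
      · exact (pow_eq_zero_iff two_ne_zero).mp h5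
    have hfδ : f δ = 0 := by
      simp only [hhdef] at hhδ
      linarith
    have hAδ : A δ = γ := by
      rw [hA]
      simp only []
      rw [hfδ, hgδ, hδ1', a1]
      norm_num
      ring
    have hAt : ContinuousWithinAt A (Icc (δ/2) δ) δ := hAc δ ⟨hδ2'.le, le_rfl⟩
    have hev2 : {t | 0 < A t} ∈ nhdsWithin δ (Icc (δ/2) δ) := by
      have h6 := hAt (Ioi_mem_nhds (show 0 < A δ by rw [hAδ]; exact hγ0))
      exact h6
    rw [nhdsWithin_Icc_eq_nhdsLE hδ2', mem_nhdsLE_iff_exists_Ioc_subset] at hev2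
    obtain ⟨t1, ht1, hsub1⟩ := hev2
    have ht2δ : max t1 (δ/2) < δ := max_lt ht1 hδ2'
    have ht20 : 0 < max t1 (δ/2) := lt_of_lt_of_le hδ2 (le_max_right _ _)
    have hmono2 : MonotoneOn h (Icc (max t1 (δ/2)) δ) := by
      apply monotoneOn_of_deriv_nonneg (convex_Icc _ _)
        (hhc.mono (Icc_subset_Icc ht20.le le_rfl))
      · rw [interior_Icc]
        exact fun t ht => (hhd t ⟨ht20.trans ht.1, ht.2⟩).differentiableAt.differentiableWithinAt
      · rw [interior_Icc]
        intro t ht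
        have htδ2 : t ∈ Ioo (0:ℝ) δ := ⟨ht20.trans ht.1, ht.2⟩
        rw [(hhd t htδ2).deriv, hode t htδ2]
        have hApos : 0 < A t :=
          hsub1 ⟨lt_of_le_of_lt (le_max_left _ _) ht.1, ht.2.le⟩
        rw [hA] at hApos
        simp only [] at hApos
        have h1t : (0:ℝ) ≤ 1 - t := by
          have h7 : t < δ := htδ2.2
          rw [hδ1'] at h7
          linarith
        have hct : 0 ≤ c t := by
          rw [hcdef]
          simp only []
          exact div_nonneg hApos.le h1t
        have hht : 0 ≤ h t := hweakIcc t ⟨htδ2.1.le, htδ2.2.le⟩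
        exact add_nonneg (mul_nonneg hct hht) (hd0 t htδ2)
    have h3pos : 0 < h ((max t1 (δ/2) + δ)/2) := by
      apply claim1
      · linarith
      · linarith
      · linarith [ht2δ, hδ1']
    have hmem1 : (max t1 (δ/2) + δ)/2 ∈ Icc (max t1 (δ/2)) δ := by
      rw [mem_Icc]
      constructor <;> linarith
    have hmem2 : δ ∈ Icc (max t1 (δ/2)) δ := by
      rw [mem_Icc]
      constructor <;> linarith
    have hle3 : (max t1 (δ/2) + δ)/2 ≤ δ := by linarith
    have hfinal : h ((max t1 (δ/2) + δ)/2) ≤ h δ := hmono2 hmem1 hmem2 hle3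
    linarith
end

section
/- Let γ ∈ (0,1) and a₃ ∈ (−∞, −γ], and let f ∈ C([0,1]) ∩ C¹([0,1)) with 0 ≤ f ≤ 1 satisfy f(0) = γ, f(1) = −γ/a₃, and f'(y) = a₀(y) + (a₁(y)/(1−y))·f(y) + (a₃/(1−y))·f(y)² for all y ∈ (0,1). Then: (i) if a₃ ∈ (−∞, −γ), then f(y) < 1 for all y ∈ [0,1]; and (ii) if a₃ ∈ [−1, −γ], then f(y) ≥ γ for all y ∈ [0,1]. -/
open Set Real

/-- Let `γ ∈ (0,1)`, `a₃ ≤ −γ`, and let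
`f ∈ C([0,1]) ∩ C¹([0,1))` with `0 ≤ f ≤ 1` solve the Riccati ODE with
`f 0 = γ` and `f 1 = −γ/a₃`. Then (i) if `a₃ < −γ`, `f < 1` on `[0,1]`, and
(ii) if `−1 ≤ a₃`, then `f ≥ γ` on `[0,1]`. -/
theorem stmt4 (γ a3 : ℝ) (hγ : γ ∈ Ioo (0:ℝ) 1) (ha3 : a3 ≤ -γ)
    (f f' : ℝ → ℝ)
    (hfc : ContinuousOn f (Icc (0:ℝ) 1))
    (hf'c : ContinuousOn f' (Ico (0:ℝ) 1))
    (hfd : ∀ y ∈ Ico (0:ℝ) 1, HasDerivWithinAt f (f' y) (Ico (0:ℝ) 1) y)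
    (hbd : ∀ y ∈ Icc (0:ℝ) 1, 0 ≤ f y ∧ f y ≤ 1)
    (hf0 : f 0 = γ) (hf1 : f 1 = -γ / a3)
    (hode : ∀ y ∈ Ioo (0:ℝ) 1,
      f' y = a0 γ y + a1 γ y / (1 - y) * f y + a3 / (1 - y) * f y ^ 2) :
    (a3 < -γ → ∀ y ∈ Icc (0:ℝ) 1, f y < 1) ∧
    (-1 ≤ a3 → ∀ y ∈ Icc (0:ℝ) 1, γ ≤ f y) := by
  obtain ⟨hγ0, hγ1⟩ := hγ
  have ha3neg : a3 < 0 := lt_of_le_of_lt ha3 (by linarith)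
  constructor
  · intro ha y hy
    rcases (hbd y hy).2.lt_or_eq with h | h
    · exact h
    exfalso
    rcases eq_or_lt_of_le hy.1 with h0 | h0
    · rw [← h0, hf0] at h; linarith
    rcases lt_or_eq_of_le hy.2 with h1 | h1
    · -- interior
      have hd : HasDerivAt f (f' y) y :=
        (hfd y ⟨hy.1, h1⟩).hasDerivAt (Ico_mem_nhds h0 h1)
      have hmax : IsLocalMax f y := by
        have hmo : IsMaxOn f (Icc 0 1) y := fun x hx => by
          simp only [mem_setOf_eq, h]
          exact (hbd x hx).2
        exact hmo.isLocalMax (Icc_mem_nhds h0 h1)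
      have hz : f' y = 0 := hmax.hasDerivAt_eq_zero hd
      have heq := hode y ⟨h0, h1⟩
      rw [hz, h] at heq
      unfold a0 a1 at heq
      have hy0 : y ≠ 0 := ne_of_gt h0
      have h1y : (1:ℝ) - y ≠ 0 := ne_of_gt (by linarith)
      field_simp at heq
      have hyy : 0 < y * (1 - y) := mul_pos h0 (by linarith)
      nlinarith [mul_pos hyy (mul_pos (show (0:ℝ) < 1 - y by linarith)
          (show (0:ℝ) < 1 - γ ^ 2 by nlinarith)),
        mul_pos hyy (mul_pos h0 (show (0:ℝ) < -γ - a3 by linarith))]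
    · rw [h1, hf1] at h
      rw [div_eq_one_iff_eq (ne_of_lt ha3neg)] at h
      linarith
  · intro ha1 y hy
    by_contra hlt
    push_neg at hlt
    obtain ⟨y₀, hy₀, hmin⟩ := isCompact_Icc.exists_isMinOn
      ⟨0, left_mem_Icc.mpr (by norm_num)⟩ hfc
    have hm : f y₀ < γ := lt_of_le_of_lt (hmin hy) hlt
    have hy₀0 : 0 < y₀ := by
      rcases eq_or_lt_of_le hy₀.1 with h0 | h0
      · rw [← h0, hf0] at hm; linarith
      · exact h0
    have hy₀1 : y₀ < 1 := by
      rcases lt_or_eq_of_le hy₀.2 with h1 | h1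
      · exact h1
      · exfalso
        rw [h1, hf1] at hm
        rw [div_lt_iff_of_neg ha3neg] at hm
        nlinarith
    have hd : HasDerivAt f (f' y₀) y₀ :=
      (hfd y₀ ⟨hy₀.1, hy₀1⟩).hasDerivAt (Ico_mem_nhds hy₀0 hy₀1)
    have hz : f' y₀ = 0 :=
      (hmin.isLocalMin (Icc_mem_nhds hy₀0 hy₀1)).hasDerivAt_eq_zero hd
    have heq := hode y₀ ⟨hy₀0, hy₀1⟩
    rw [hz] at heq
    unfold a0 a1 at heq
    have hy0' : y₀ ≠ 0 := ne_of_gt hy₀0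
    have h1y : (1:ℝ) - y₀ ≠ 0 := ne_of_gt (by linarith)
    have hu0 : 0 ≤ f y₀ := (hbd y₀ hy₀).1
    field_simp at heq
    have hyy : 0 < y₀ * (1 - y₀) := mul_pos hy₀0 (by linarith)
    nlinarith [mul_pos hyy (mul_pos (sub_pos.mpr hy₀1)
        (mul_pos (show (0:ℝ) < 1 + γ by linarith) (sub_pos.mpr hm))),
      mul_nonneg (mul_nonneg hyy.le (mul_nonneg hy₀0.le hu0))
        (show (0:ℝ) ≤ γ + a3 * f y₀ by nlinarith)]
end

section
/- Let γ ∈ (0,1), σ_D > 0, A > 1, and ξ₀ > 0, and let δ₀ ∈ (0,1/2] be such that for every ξ > 0 with |ξ − ξ₀| ≤ 1 there is a (unique) solution h_ξ ∈ C¹([0,δ₀]) of h_ξ(0) = γ and h_ξ'(y) = a₀(y) + (a₁(y)/(1−y))·h_ξ(y) + (a₂(h_ξ,y)/(1−y))·h_ξ(y)² on (0,δ₀). Then for all ξ₁, ξ₂ > 0 with |ξ₁ − ξ₀| ≤ 1 and |ξ₂ − ξ₀| ≤ 1, the inequality ξ₁ < ξ₂ implies h_{ξ₁}(y) < h_{ξ₂}(y)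 for all y ∈ (0,δ₀]. -/
open Set Real MeasureTheory Filter

/-- `a₂(h,y) = (ξ/σ_D²)·exp(∫₀^y (h(q)−1)/(1−q) dq) − A`. -/
noncomputable def a2 (ξ σD A : ℝ) (h : ℝ → ℝ) (y : ℝ) : ℝ :=
  ξ / σD ^ 2 * Real.exp (∫ q in (0:ℝ)..y, (h q - 1) / (1 - q)) - A

lemma integrand_contOn {δ0 : ℝ} (hδ2 : δ0 ≤ 1/2) {h : ℝ → ℝ}
    (hh : ContinuousOn h (Icc 0 δ0)) :
    ContinuousOn (fun q => (h q - 1) / (1 - q)) (Icc 0 δ0) := by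
  apply ContinuousOn.div (hh.sub continuousOn_const)
    (continuousOn_const.sub continuousOn_id)
  intro q hq
  have := hq.2
  intro hc
  change (1:ℝ) - q = 0 at hc
  nlinarith [hq.1]

lemma a2_contOn {ξ σD A δ0 : ℝ} (hδ : 0 ≤ δ0) (hδ2 : δ0 ≤ 1/2) {h : ℝ → ℝ}
    (hh : ContinuousOn h (Icc 0 δ0)) : ContinuousOn (a2 ξ σD A h) (Icc 0 δ0) := by
  unfold a2
  apply ContinuousOn.sub _ continuousOn_const
  apply ContinuousOn.mul continuousOn_const
  apply Real.continuous_exp.comp_continuousOn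
  have hint : IntegrableOn (fun q => (h q - 1) / (1 - q)) (uIcc 0 δ0) := by
    rw [uIcc_of_le hδ]
    exact (integrand_contOn hδ2 hh).integrableOn_compact isCompact_Icc
  have := intervalIntegral.continuousOn_primitive_interval hint
  rwa [uIcc_of_le hδ] at this

lemma riccati_alg (γ x u v A2a A2b : ℝ) (hx : x ≠ 0) (hx1 : (1:ℝ) - x ≠ 0) :
    ((2*γ+1)*x - (1+γ))/(1-x) * ((v - u)/x) + (A2b * v^2 - A2a * u^2)/(1-x)
    = (((2*γ+1)*x - (1+γ))/(x*(1-x)) + A2b * ((v + u)/(1-x))) * (v - u)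
      + (A2b - A2a) * (u^2/(1-x)) := by
  field_simp
  ring

set_option maxHeartbeats 1600000 in
/-- Strict comparison in `ξ` for local solutions of the
path-dependent Riccati Cauchy problem: if `ξ₁ < ξ₂` (both positive and within
distance 1 of `ξ₀`) and `h₁, h₂` are the corresponding `C¹([0,δ₀])` solutions,
then `h₁(y) < h₂(y)` for all `y ∈ (0,δ₀]`. -/
theorem stmt6 (γ σD A ξ0 δ0 : ℝ) (hγ : γ ∈ Ioo (0:ℝ) 1) (hσ : 0 < σD)
    (hA : 1 < A) (hξ0 : 0 < ξ0) (hδ0 : δ0 ∈ Ioc (0:ℝ) (1/2))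
    (ξ1 ξ2 : ℝ) (hξ1 : 0 < ξ1) (hξ2 : 0 < ξ2)
    (hξ1near : |ξ1 - ξ0| ≤ 1) (hξ2near : |ξ2 - ξ0| ≤ 1)
    (h1 h1' h2 h2' : ℝ → ℝ)
    (hc1 : ContinuousOn h1' (Icc (0:ℝ) δ0))
    (hd1 : ∀ y ∈ Icc (0:ℝ) δ0, HasDerivWithinAt h1 (h1' y) (Icc (0:ℝ) δ0) y)
    (h10 : h1 0 = γ)
    (hode1 : ∀ y ∈ Ioo (0:ℝ) δ0,
      h1' y = a0 γ y + a1 γ y / (1 - y) * h1 y + a2 ξ1 σD A h1 y / (1 - y) * h1 y ^ 2)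
    (hc2 : ContinuousOn h2' (Icc (0:ℝ) δ0))
    (hd2 : ∀ y ∈ Icc (0:ℝ) δ0, HasDerivWithinAt h2 (h2' y) (Icc (0:ℝ) δ0) y)
    (h20 : h2 0 = γ)
    (hode2 : ∀ y ∈ Ioo (0:ℝ) δ0,
      h2' y = a0 γ y + a1 γ y / (1 - y) * h2 y + a2 ξ2 σD A h2 y / (1 - y) * h2 y ^ 2)
    (hlt : ξ1 < ξ2) :
    ∀ y ∈ Ioc (0:ℝ) δ0, h1 y < h2 y := by
  obtain ⟨hγ0, hγ1⟩ := hγ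
  obtain ⟨hδpos, hδhalf⟩ := hδ0
  have h0I : (0:ℝ) ∈ Icc (0:ℝ) δ0 := ⟨le_refl _, hδpos.le⟩
  have hcont1 : ContinuousOn h1 (Icc 0 δ0) := fun y hy => (hd1 y hy).continuousWithinAt
  have hcont2 : ContinuousOn h2 (Icc 0 δ0) := fun y hy => (hd2 y hy).continuousWithinAt
  have ha2c1 : ContinuousOn (a2 ξ1 σD A h1) (Icc 0 δ0) := a2_contOn hδpos.le hδhalf hcont1
  have ha2c2 : ContinuousOn (a2 ξ2 σD A h2) (Icc 0 δ0) := a2_contOn hδpos.le hδhalf hcont2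
  have hsub : ∀ y ∈ Icc (0:ℝ) δ0, (0:ℝ) < 1 - y := by
    intro y hy; have := hy.2; nlinarith [hy.1]
  -- the ODE satisfied by the difference
  have hwd : ∀ y ∈ Ioo (0:ℝ) δ0, h2' y - h1' y =
      ((2*γ+1)*y - (1+γ))/(1-y) * ((h2 y - h1 y)/y) +
      (a2 ξ2 σD A h2 y * (h2 y)^2 - a2 ξ1 σD A h1 y * (h1 y)^2)/(1-y) := by
    intro y hy
    have hy0 : y ≠ 0 := ne_of_gt hy.1
    have hy1 : (1:ℝ) - y ≠ 0 := ne_of_gt (hsub y ⟨hy.1.le, hy.2.le⟩)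
    rw [hode1 y hy, hode2 y hy]
    simp only [a0, a1]
    field_simp
    ring
  -- Step 1: derivative of the difference at 0 is positive
  have hw0 : HasDerivWithinAt (fun y => h2 y - h1 y) (h2' 0 - h1' 0) (Icc 0 δ0) 0 :=
    (hd2 0 h0I).sub (hd1 0 h0I)
  have hw0s := hw0
  rw [hasDerivWithinAt_iff_tendsto_slope] at hw0s
  haveI : (nhdsWithin (0:ℝ) (Ioo (0:ℝ) δ0)).NeBot := left_nhdsWithin_Ioo_neBot hδpos
  have hsubIoo : Ioo (0:ℝ) δ0 ⊆ Icc 0 δ0 \ {0} := by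
    intro y hy; exact ⟨Ioo_subset_Icc_self hy, ne_of_gt hy.1⟩
  have tsl : Tendsto (fun y => (h2 y - h1 y)/y) (nhdsWithin (0:ℝ) (Ioo (0:ℝ) δ0))
      (nhds (h2' 0 - h1' 0)) := by
    refine Filter.Tendsto.congr' ?_ (hw0s.mono_left (nhdsWithin_mono _ hsubIoo))
    filter_upwards [self_mem_nhdsWithin] with y hy
    simp [slope_def_field, h10, h20]
  have tg1 : Tendsto (fun y => ((2*γ+1)*y - (1+γ))/(1-y)) (nhdsWithin (0:ℝ) (Ioo (0:ℝ) δ0))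
      (nhds (-(1+γ))) := by
    have hca : ContinuousAt (fun y => ((2*γ+1)*y - (1+γ))/(1-y)) 0 := by
      apply ContinuousAt.div
      · fun_prop
      · fun_prop
      · norm_num
    have h' := hca.tendsto.mono_left (nhdsWithin_le_nhds (s := Ioo (0:ℝ) δ0))
    convert h' using 2
    norm_num
  have hBc : ContinuousOn (fun y =>
      (a2 ξ2 σD A h2 y * (h2 y)^2 - a2 ξ1 σD A h1 y * (h1 y)^2)/(1-y)) (Icc 0 δ0) := by
    apply ContinuousOn.div
    · exact (ha2c2.mul (hcont2.pow 2)).sub (ha2c1.mul (hcont1.pow 2))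
    · exact (by fun_prop : Continuous fun y : ℝ => 1 - y).continuousOn
    · intro y hy; have := hsub y hy; intro hc; nlinarith [hc]
  have hB0 : (a2 ξ2 σD A h2 0 * (h2 0)^2 - a2 ξ1 σD A h1 0 * (h1 0)^2)/(1-(0:ℝ))
      = (ξ2 - ξ1)*γ^2/σD^2 := by
    simp only [a2, intervalIntegral.integral_same, Real.exp_zero, mul_one, h10, h20, sub_zero,
      div_one]
    field_simp
    ring
  have tB : Tendsto (fun y =>
      (a2 ξ2 σD A h2 y * (h2 y)^2 - a2 ξ1 σD A h1 y * (h1 y)^2)/(1-y))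
      (nhdsWithin (0:ℝ) (Ioo (0:ℝ) δ0)) (nhds ((ξ2 - ξ1)*γ^2/σD^2)) := by
    have h := (hBc 0 h0I).mono Ioo_subset_Icc_self
    have h' : Tendsto (fun y =>
        (a2 ξ2 σD A h2 y * (h2 y)^2 - a2 ξ1 σD A h1 y * (h1 y)^2)/(1-y))
        (nhdsWithin (0:ℝ) (Ioo (0:ℝ) δ0))
        (nhds ((a2 ξ2 σD A h2 0 * (h2 0)^2 - a2 ξ1 σD A h1 0 * (h1 0)^2)/(1-(0:ℝ)))) := h
    rwa [hB0] at h'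
  have t2 : Tendsto (fun y => ((2*γ+1)*y - (1+γ))/(1-y) * ((h2 y - h1 y)/y) +
      (a2 ξ2 σD A h2 y * (h2 y)^2 - a2 ξ1 σD A h1 y * (h1 y)^2)/(1-y))
      (nhdsWithin (0:ℝ) (Ioo (0:ℝ) δ0))
      (nhds ((-(1+γ)) * (h2' 0 - h1' 0) + (ξ2 - ξ1)*γ^2/σD^2)) :=
    (tg1.mul tsl).add tB
  have t1 : Tendsto (fun y => h2' y - h1' y) (nhdsWithin (0:ℝ) (Ioo (0:ℝ) δ0))
      (nhds (h2' 0 - h1' 0)) :=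
    ((hc2.continuousWithinAt h0I).sub (hc1.continuousWithinAt h0I)).mono_left
      (nhdsWithin_mono _ Ioo_subset_Icc_self)
  have t1' : Tendsto (fun y => ((2*γ+1)*y - (1+γ))/(1-y) * ((h2 y - h1 y)/y) +
      (a2 ξ2 σD A h2 y * (h2 y)^2 - a2 ξ1 σD A h1 y * (h1 y)^2)/(1-y))
      (nhdsWithin (0:ℝ) (Ioo (0:ℝ) δ0)) (nhds (h2' 0 - h1' 0)) := by
    refine Filter.Tendsto.congr' ?_ t1
    filter_upwards [self_mem_nhdsWithin] with y hy
    exact hwd y hy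
  have hDeq : h2' 0 - h1' 0 = (-(1+γ)) * (h2' 0 - h1' 0) + (ξ2 - ξ1)*γ^2/σD^2 :=
    tendsto_nhds_unique t1' t2
  have hc0pos : 0 < (ξ2 - ξ1)*γ^2/σD^2 := by
    have hne : 0 < ξ2 - ξ1 := by linarith
    positivity
  have hDpos : 0 < h2' 0 - h1' 0 := by nlinarith
  -- Step 2: positivity near 0
  have hsubIoc : Ioc (0:ℝ) δ0 ⊆ Icc 0 δ0 \ {0} := by
    intro y hy; exact ⟨⟨hy.1.le, hy.2⟩, ne_of_gt hy.1⟩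
  have hev : ∀ᶠ y in nhdsWithin (0:ℝ) (Ioc (0:ℝ) δ0), 0 < h2 y - h1 y := by
    have t := hw0s.mono_left (nhdsWithin_mono _ hsubIoc)
    have hpos := t.eventually (eventually_gt_nhds hDpos)
    filter_upwards [hpos, self_mem_nhdsWithin] with y hsy hy
    rw [slope_def_field] at hsy
    have hy0 : (0:ℝ) < y := hy.1
    have : 0 < (h2 y - h1 y - (h2 0 - h1 0)) := by
      have := mul_pos hsy (show (0:ℝ) < y - 0 by linarith)
      rwa [div_mul_cancel₀] at this
      · linarith
    rw [h10, h20] at this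
    linarith
  rw [eventually_nhdsWithin_iff] at hev
  rw [Metric.eventually_nhds_iff] at hev
  obtain ⟨ε, hεpos, hball⟩ := hev
  set ε' := min (ε/2) δ0 with hε'def
  have hε'pos : 0 < ε' := lt_min (by linarith) hδpos
  have hε'δ : ε' ≤ δ0 := min_le_right _ _
  have hwε : ∀ y : ℝ, 0 < y → y ≤ ε' → 0 < h2 y - h1 y := by
    intro y hy1 hy2
    have hyδ : y ≤ δ0 := hy2.trans hε'δ
    have hd : dist y 0 < ε := by
      rw [Real.dist_eq, sub_zero, abs_of_pos hy1]
      have : y ≤ ε/2 := hy2.trans (min_le_left _ _)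
      linarith
    exact hball hd ⟨hy1, hyδ⟩
  -- Step 3: the key claim
  have key : ∀ y ∈ Ioc (0:ℝ) δ0, 0 < h2 y - h1 y := by
    by_contra hcon
    push_neg at hcon
    obtain ⟨y0, hy0mem, hy0⟩ := hcon
    have hIccsub : Icc ε' δ0 ⊆ Icc (0:ℝ) δ0 := Icc_subset_Icc hε'pos.le le_rfl
    have hZc : IsClosed {y : ℝ | y ∈ Icc ε' δ0 ∧ h2 y - h1 y ≤ 0} := by
      have hset : {y : ℝ | y ∈ Icc ε' δ0 ∧ h2 y - h1 y ≤ 0}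
          = Icc ε' δ0 ∩ (fun y => h2 y - h1 y) ⁻¹' Iic 0 := by
        ext y; simp [Set.mem_inter_iff, Set.mem_preimage]
      rw [hset]
      exact ContinuousOn.preimage_isClosed_of_isClosed
        ((hcont2.sub hcont1).mono hIccsub) isClosed_Icc isClosed_Iic
    have hy0Z : y0 ∈ {y : ℝ | y ∈ Icc ε' δ0 ∧ h2 y - h1 y ≤ 0} := by
      refine ⟨⟨?_, hy0mem.2⟩, hy0⟩
      by_contra hlt'
      push_neg at hlt'
      exact absurd hy0 (not_le.2 (hwε y0 hy0mem.1 hlt'.le))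
    have hbdd : BddBelow {y : ℝ | y ∈ Icc ε' δ0 ∧ h2 y - h1 y ≤ 0} :=
      ⟨ε', fun z hz => hz.1.1⟩
    set T := sInf {y : ℝ | y ∈ Icc ε' δ0 ∧ h2 y - h1 y ≤ 0} with hTdef
    have hTZ : T ∈ {y : ℝ | y ∈ Icc ε' δ0 ∧ h2 y - h1 y ≤ 0} :=
      hZc.csInf_mem ⟨y0, hy0Z⟩ hbdd
    have hTle : T ≤ δ0 := hTZ.1.2
    have hε'T : ε' < T := by
      rcases lt_or_eq_of_le hTZ.1.1 with h | h
      · exact h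
      · exfalso
        have := hwε ε' hε'pos le_rfl
        rw [h] at this
        linarith [hTZ.2]
    have hbelow : ∀ y : ℝ, ε' ≤ y → y < T → 0 < h2 y - h1 y := by
      intro y hy1 hy2
      by_contra hle
      push_neg at hle
      have : y ∈ {y : ℝ | y ∈ Icc ε' δ0 ∧ h2 y - h1 y ≤ 0} :=
        ⟨⟨hy1, hy2.le.trans hTle⟩, hle⟩
      have := csInf_le hbdd this
      linarith
    have hTpos : (0:ℝ) < T := lt_trans hε'pos hε'T
    -- nonnegativity on [0, T]
    have hwT0 : 0 ≤ h2 T - h1 T := by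
      haveI : (nhdsWithin T (Ioo ε' T)).NeBot := right_nhdsWithin_Ioo_neBot hε'T
      have hsubT : Ioo ε' T ⊆ Icc (0:ℝ) δ0 := fun y hy =>
        ⟨le_trans hε'pos.le hy.1.le, le_trans hy.2.le hTle⟩
      have ht : Tendsto (fun y => h2 y - h1 y) (nhdsWithin T (Ioo ε' T))
          (nhds (h2 T - h1 T)) :=
        (((hcont2.sub hcont1) T ⟨hTpos.le, hTle⟩).mono hsubT)
      refine ge_of_tendsto ht ?_
      filter_upwards [self_mem_nhdsWithin] with y hy
      exact (hbelow y hy.1.le hy.2).le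
    have hwT : h2 T - h1 T = 0 := le_antisymm hTZ.2 hwT0
    have hnonneg : ∀ q ∈ Icc (0:ℝ) T, 0 ≤ h2 q - h1 q := by
      intro q hq
      rcases eq_or_lt_of_le hq.1 with h | h
      · rw [← h, h10, h20]; linarith
      rcases le_or_gt q ε' with h' | h'
      · exact (hwε q h h').le
      rcases lt_or_eq_of_le hq.2 with h'' | h''
      · exact (hbelow q h'.le h'').le
      · rw [h'']; exact hwT0
    -- Step 4: Gronwall-type argument on [ε', T]
    have hcfc : ContinuousOn (fun y =>
        ((2*γ+1)*y - (1+γ))/(y*(1-y)) + a2 ξ2 σD A h2 y * ((h2 y + h1 y)/(1-y)))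
        (Icc ε' δ0) := by
      apply ContinuousOn.add
      · apply ContinuousOn.div
        · exact (by fun_prop : Continuous fun y : ℝ => (2*γ+1)*y - (1+γ)).continuousOn
        · exact (by fun_prop : Continuous fun y : ℝ => y*(1-y)).continuousOn
        · intro y hy
          have hy1 : 0 < y := lt_of_lt_of_le hε'pos hy.1
          have hy2 : 0 < 1 - y := hsub y (hIccsub hy)
          positivity
      · apply ContinuousOn.mul (ha2c2.mono hIccsub)
        apply ContinuousOn.div ((hcont2.add hcont1).mono hIccsub)
          (by fun_prop : Continuous fun y : ℝ => 1 - y).continuousOn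
        intro y hy
        have := hsub y (hIccsub hy)
        intro hc; nlinarith [hc]
    obtain ⟨M, hM⟩ := isCompact_Icc.exists_bound_of_continuousOn hcfc
    have hIT : Icc ε' T ⊆ Icc (0:ℝ) δ0 := Icc_subset_Icc hε'pos.le hTle
    have hITδ : Icc ε' T ⊆ Icc ε' δ0 := Icc_subset_Icc le_rfl hTle
    have hψc : ContinuousOn (fun y => Real.exp (M*y) * (h2 y - h1 y)) (Icc ε' T) :=
      ((by fun_prop : Continuous fun y : ℝ => Real.exp (M*y)).continuousOn).mul
        ((hcont2.sub hcont1).mono hIT)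
    have hψderiv : ∀ x ∈ Ioo ε' T, HasDerivAt (fun y => Real.exp (M*y) * (h2 y - h1 y))
        (Real.exp (M*x)*M * (h2 x - h1 x) + Real.exp (M*x) * (h2' x - h1' x)) x := by
      intro x hx
      have hx0 : 0 < x := lt_trans hε'pos hx.1
      have hxδ : x < δ0 := lt_of_lt_of_le hx.2 hTle
      have hmem : Icc (0:ℝ) δ0 ∈ nhds x := Icc_mem_nhds hx0 hxδ
      have hdw : HasDerivAt (fun y => h2 y - h1 y) (h2' x - h1' x) x :=
        (((hd2 x ⟨hx0.le, hxδ.le⟩).sub (hd1 x ⟨hx0.le, hxδ.le⟩)).hasDerivAt hmem)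
      have hde : HasDerivAt (fun y => Real.exp (M*y)) (Real.exp (M*x)*M) x := by
        have := ((hasDerivAt_id x).const_mul M).exp
        simpa using this
      exact hde.mul hdw
    have hψmono : MonotoneOn (fun y => Real.exp (M*y) * (h2 y - h1 y)) (Icc ε' T) := by
      apply monotoneOn_of_deriv_nonneg (convex_Icc _ _) hψc
      · intro x hx
        rw [interior_Icc] at hx
        exact ((hψderiv x hx).differentiableAt).differentiableWithinAt
      · intro x hx
        rw [interior_Icc] at hx
        rw [(hψderiv x hx).deriv]
        have hx0 : 0 < x := lt_trans hε'pos hx.1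
        have hxδ : x < δ0 := lt_of_lt_of_le hx.2 hTle
        have hx1 : 0 < 1 - x := hsub x ⟨hx0.le, hxδ.le⟩
        -- the rewritten ODE for the difference
        have hrel : h2' x - h1' x =
            (((2*γ+1)*x - (1+γ))/(x*(1-x)) + a2 ξ2 σD A h2 x * ((h2 x + h1 x)/(1-x)))
              * (h2 x - h1 x)
            + (a2 ξ2 σD A h2 x - a2 ξ1 σD A h1 x) * ((h1 x)^2/(1-x)) := by
          rw [hwd x ⟨hx0, hxδ⟩]
          exact riccati_alg γ x (h1 x) (h2 x) (a2 ξ1 σD A h1 x) (a2 ξ2 σD A h2 x)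
            hx0.ne' hx1.ne'
        -- a2 comparison
        have hint1 : IntervalIntegrable (fun q => (h1 q - 1)/(1-q)) volume 0 x := by
          apply ContinuousOn.intervalIntegrable
          rw [uIcc_of_le hx0.le]
          exact (integrand_contOn hδhalf hcont1).mono (Icc_subset_Icc le_rfl hxδ.le)
        have hint2 : IntervalIntegrable (fun q => (h2 q - 1)/(1-q)) volume 0 x := by
          apply ContinuousOn.intervalIntegrable
          rw [uIcc_of_le hx0.le]
          exact (integrand_contOn hδhalf hcont2).mono (Icc_subset_Icc le_rfl hxδ.le)
        have hEle : (∫ q in (0:ℝ)..x, (h1 q - 1)/(1-q)) ≤ ∫ q in (0:ℝ)..x, (h2 q - 1)/(1-q) := by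
          apply intervalIntegral.integral_mono_on hx0.le hint1 hint2
          intro q hq
          have hq1 : 0 < 1 - q := hsub q ⟨hq.1, hq.2.trans hxδ.le⟩
          have hwq : h1 q ≤ h2 q := by
            have := hnonneg q ⟨hq.1, hq.2.trans hx.2.le⟩
            linarith
          have hnum : h1 q - 1 ≤ h2 q - 1 := by linarith
          gcongr
        have ha2le : a2 ξ1 σD A h1 x ≤ a2 ξ2 σD A h2 x := by
          unfold a2
          have e1 : 0 < Real.exp (∫ q in (0:ℝ)..x, (h1 q - 1)/(1-q)) := Real.exp_pos _
          have e2 : Real.exp (∫ q in (0:ℝ)..x, (h1 q - 1)/(1-q))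
              ≤ Real.exp (∫ q in (0:ℝ)..x, (h2 q - 1)/(1-q)) := Real.exp_le_exp.2 hEle
          have hσ2 : (0:ℝ) < σD^2 := by positivity
          have hξd : ξ1/σD^2 ≤ ξ2/σD^2 := by gcongr
          have hmul : ξ1/σD^2 * Real.exp (∫ q in (0:ℝ)..x, (h1 q - 1)/(1-q))
              ≤ ξ2/σD^2 * Real.exp (∫ q in (0:ℝ)..x, (h2 q - 1)/(1-q)) :=
            mul_le_mul hξd e2 e1.le (by positivity)
          linarith
        have hwx : 0 ≤ h2 x - h1 x := hnonneg x ⟨hx0.le, hx.2.le⟩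
        have hcfx : -M ≤ ((2*γ+1)*x - (1+γ))/(x*(1-x)) + a2 ξ2 σD A h2 x * ((h2 x + h1 x)/(1-x)) := by
          have := hM x (hITδ ⟨hx.1.le, hx.2.le⟩)
          rw [Real.norm_eq_abs] at this
          linarith [neg_abs_le (((2*γ+1)*x - (1+γ))/(x*(1-x)) + a2 ξ2 σD A h2 x * ((h2 x + h1 x)/(1-x))), abs_le.1 this]
        have hgg : 0 ≤ (a2 ξ2 σD A h2 x - a2 ξ1 σD A h1 x) * ((h1 x)^2/(1-x)) := by
          apply mul_nonneg (by linarith)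
          positivity
        have hsum : 0 ≤ M * (h2 x - h1 x) + (h2' x - h1' x) := by
          rw [hrel]
          nlinarith [mul_le_mul_of_nonneg_right hcfx hwx]
        have hre : Real.exp (M*x)*M * (h2 x - h1 x) + Real.exp (M*x) * (h2' x - h1' x)
            = Real.exp (M*x) * (M * (h2 x - h1 x) + (h2' x - h1' x)) := by ring
        rw [hre]
        exact mul_nonneg (Real.exp_pos _).le hsum
    have hcontra := hψmono (Set.left_mem_Icc.2 hε'T.le) (Set.right_mem_Icc.2 hε'T.le) hε'T.le
    simp only [hwT, mul_zero] at hcontra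
    have hψε : 0 < Real.exp (M*ε') * (h2 ε' - h1 ε') :=
      mul_pos (Real.exp_pos _) (hwε ε' hε'pos le_rfl)
    linarith
  intro y hy
  have := key y hy
  linarith
end

section
/- Let γ ∈ (0,1), σ_D > 0, A > 1, and y₀ ∈ (0,1). Then there exists ξ(y₀) ∈ (0,∞) such that for every ξ ≥ ξ(y₀), there is no function h ∈ C([0,y₀]) ∩ C¹((0,y₀)) satisfying h(0) = γ and h'(y) = a₀(y) + (a₁(y)/(1−y))·h(y) + (a₂(h,y)/(1−y))·h(y)² for all y ∈ (0,y₀); that is, every local solution of this Cauchy problem explodes at or before y₀. -/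
open Set Real

set_option maxHeartbeats 1600000 in
/-- **Explosion for large `ξ`.** For each `y₀ ∈ (0,1)` there is a
threshold `ξ(y₀) > 0` such that for every `ξ ≥ ξ(y₀)` no function in
`C([0,y₀]) ∩ C¹((0,y₀))` solves the Cauchy problem `h 0 = γ`,
`h' = a₀ + (a₁/(1−y))·h + (a₂(h,·)/(1−y))·h²` on `(0,y₀)`. -/
theorem stmt8 (γ σD A y0 : ℝ) (hγ : γ ∈ Ioo (0:ℝ) 1) (hσ : 0 < σD)
    (hA : 1 < A) (hy0 : y0 ∈ Ioo (0:ℝ) 1) :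
    ∃ ξy0 : ℝ, 0 < ξy0 ∧
      ∀ ξ : ℝ, ξy0 ≤ ξ →
        ¬ ∃ h h' : ℝ → ℝ,
            ContinuousOn h (Icc (0:ℝ) y0) ∧
            ContinuousOn h' (Ioo (0:ℝ) y0) ∧
            (∀ y ∈ Ioo (0:ℝ) y0, HasDerivAt h (h' y) y) ∧
            h 0 = γ ∧
            (∀ y ∈ Ioo (0:ℝ) y0,
              h' y = a0 γ y + a1 γ y / (1 - y) * h y +
                a2 ξ σD A h y / (1 - y) * h y ^ 2) := by
  obtain ⟨hγ0, hγ1⟩ := hγ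
  obtain ⟨hy00, hy01⟩ := hy0
  have hA0 : (0:ℝ) < A := lt_trans one_pos hA
  set c : ℝ := min (γ * (1 - y0) / 2) ((2 * γ + 1) / (2 * A)) with hc_def
  have hcpos : 0 < c := lt_min (by nlinarith) (div_pos (by linarith) (by linarith))
  have hc1 : c ≤ γ * (1 - y0) / 2 := min_le_left _ _
  have hc2 : c ≤ (2 * γ + 1) / (2 * A) := min_le_right _ _
  have hcγ : c < γ := lt_of_le_of_lt hc1 (by nlinarith)
  have hc2' : A * c ≤ (2 * γ + 1) / 2 := by
    rw [le_div_iff₀ (by linarith : (0:ℝ) < 2 * A)] at hc2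
    nlinarith
  set B : ℝ := 2 * (1 + γ) / (y0 * (1 - y0)) with hB_def
  have hBpos : 0 < B := div_pos (by linarith) (mul_pos hy00 (by linarith))
  set ε : ℝ := 4 / (c * y0) with hε_def
  have hεpos : 0 < ε := div_pos (by norm_num) (mul_pos hcpos hy00)
  set K : ℝ := Real.exp ((1 - c) * Real.log (1 - y0)) with hK_def
  have hK : 0 < K := Real.exp_pos _
  have hBc : 0 < B / c := div_pos hBpos hcpos
  have hΞpos : 0 < σD ^ 2 * (A + B / c + ε) / K :=
    div_pos (mul_pos (pow_pos hσ 2) (by linarith)) hK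
  refine ⟨σD ^ 2 * (A + B / c + ε) / K, hΞpos, ?_⟩
  intro ξ hξ
  rintro ⟨h, h', hcont, hcont', hderiv, h0, heq⟩
  have hξpos : 0 < ξ := lt_of_lt_of_le hΞpos hξ
  have hσ2 : (0:ℝ) < σD ^ 2 := pow_pos hσ 2
  -- weak a2 lower bound
  have ha2w : ∀ y : ℝ, -A ≤ a2 ξ σD A h y := by
    intro y
    have h1 : 0 ≤ ξ / σD ^ 2 * Real.exp (∫ q in (0:ℝ)..y, (h q - 1) / (1 - q)) :=
      mul_nonneg (le_of_lt (div_pos hξpos hσ2)) (le_of_lt (Real.exp_pos _))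
    simp only [a2]
    linarith
  -- Step 1 : the lower bound h ≥ c on [0, y0)
  have hlow : ∀ y ∈ Ico (0:ℝ) y0, c ≤ h y := by
    by_contra hcon
    push_neg at hcon
    obtain ⟨y1, hy1mem, hy1⟩ := hcon
    obtain ⟨hy10, hy1y0⟩ := hy1mem
    set S : Set ℝ := Icc 0 y1 ∩ h ⁻¹' (Iic c) with hS_def
    have hsub : Icc (0:ℝ) y1 ⊆ Icc 0 y0 := Icc_subset_Icc le_rfl (le_of_lt hy1y0)
    have hSclosed : IsClosed S :=
      (hcont.mono hsub).preimage_isClosed_of_isClosed isClosed_Icc isClosed_Iic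
    have hSne : S.Nonempty := ⟨y1, ⟨hy10, le_rfl⟩, le_of_lt hy1⟩
    have hSbdd : BddBelow S := ⟨0, fun x hx => hx.1.1⟩
    set t : ℝ := sInf S with ht_def
    have htS : t ∈ S := hSclosed.csInf_mem hSne hSbdd
    have ht0 : 0 ≤ t := htS.1.1
    have hty1 : t ≤ y1 := htS.1.2
    have hty0 : t < y0 := lt_of_le_of_lt hty1 hy1y0
    have htc : h t ≤ c := htS.2
    have ht0' : 0 < t := by
      rcases lt_or_eq_of_le ht0 with h' | h'
      · exact h'
      · exfalso; rw [← h'] at htc; rw [h0] at htc; linarith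
    -- strictly above c on [0, t)
    have hgt : ∀ y, 0 ≤ y → y < t → c < h y := by
      intro y hy0le hyt
      by_contra hle
      push_neg at hle
      have hyS : y ∈ S := ⟨⟨hy0le, le_of_lt (lt_of_lt_of_le hyt hty1)⟩, hle⟩
      exact absurd (csInf_le hSbdd hyS) (not_le.mpr hyt)
    -- h t = c by continuity from the left
    have htceq : h t = c := by
      refine le_antisymm htc ?_
      have hclos : t ∈ closure (Ioo 0 t) := by
        rw [closure_Ioo (ne_of_lt ht0')]
        exact ⟨le_of_lt ht0', le_rfl⟩
      haveI hne : (nhdsWithin t (Ioo 0 t)).NeBot := mem_closure_iff_nhdsWithin_neBot.mp hclos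
      have htmem : t ∈ Icc (0:ℝ) y0 := ⟨ht0, le_of_lt hty0⟩
      have htend : Filter.Tendsto h (nhdsWithin t (Ioo 0 t)) (nhds (h t)) :=
        (hcont t htmem).mono_left
          (nhdsWithin_mono t (fun y hy =>
            ⟨le_of_lt hy.1, le_of_lt (lt_of_lt_of_le hy.2 (le_of_lt hty0))⟩))
      refine ge_of_tendsto htend ?_
      filter_upwards [eventually_mem_nhdsWithin] with y hy
      exact le_of_lt (hgt y (le_of_lt hy.1) hy.2)
    -- derivative at t is positive
    have htIoo : t ∈ Ioo (0:ℝ) y0 := ⟨ht0', hty0⟩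
    have h1t : 0 < 1 - t := by linarith
    have hpos : 0 < h' t := by
      rw [heq t htIoo, htceq]
      simp only [a0, a1]
      have hw := ha2w t
      set w := a2 ξ σD A h t with hw_def
      have key : 0 < γ * (1 + γ) * (1 - t) + ((2 * γ + 1) * t - (1 + γ)) * c
          - A * c ^ 2 * t := by
        nlinarith [mul_pos ht0' hcpos, mul_pos hγ0 h1t, sq_nonneg c]
      have e1 : γ * (1 + γ) / t + ((2 * γ + 1) * t - (1 + γ)) / t / (1 - t) * c
          + (-A) / (1 - t) * c ^ 2
          = (γ * (1 + γ) * (1 - t) + ((2 * γ + 1) * t - (1 + γ)) * c - A * c ^ 2 * t)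
            / (t * (1 - t)) := by
        field_simp
        ring
      have e2 : (-A) / (1 - t) * c ^ 2 ≤ w / (1 - t) * c ^ 2 :=
        mul_le_mul_of_nonneg_right ((div_le_div_iff_of_pos_right h1t).mpr hw) (sq_nonneg c)
      have e3 : 0 < (γ * (1 + γ) * (1 - t) + ((2 * γ + 1) * t - (1 + γ)) * c
          - A * c ^ 2 * t) / (t * (1 - t)) := div_pos key (mul_pos ht0' h1t)
      linarith
    -- yet h is above c = h t just to the left of t : contradiction
    have hslope := (hasDerivAt_iff_tendsto_slope.mp (hderiv t htIoo)).mono_left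
      (nhdsWithin_mono t (fun y (hy : y ∈ Iio t) => ne_of_lt hy))
    have h2 : ∀ᶠ y in nhdsWithin t (Iio t), 0 < slope h t y :=
      hslope.eventually (eventually_gt_nhds hpos)
    have h3 : Ioo (0:ℝ) t ∈ nhdsWithin t (Iio t) :=
      Ioo_mem_nhdsLT_of_mem ⟨ht0', le_rfl⟩
    obtain ⟨y, hsl, hy⟩ := (h2.and (Filter.eventually_of_mem h3 (fun y hy => hy))).exists
    rw [slope_def_field, htceq] at hsl
    have hyc : c < h y := hgt y (le_of_lt hy.1) hy.2
    have : (h y - c) / (y - t) < 0 :=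
      div_neg_of_pos_of_neg (by linarith) (by linarith [hy.2])
    linarith
  -- Step 2 : strong a2 lower bound on (0, y0)
  have ha2 : ∀ y ∈ Ioo (0:ℝ) y0, B / c + ε ≤ a2 ξ σD A h y := by
    intro y hy
    obtain ⟨hy0l, hyy0⟩ := hy
    have hIccsub : Icc (0:ℝ) y ⊆ Icc 0 y0 := Icc_subset_Icc le_rfl (le_of_lt hyy0)
    have hden : ∀ q ∈ Icc (0:ℝ) y, (1:ℝ) - q ≠ 0 := by
      intro q hq
      have : q < 1 := lt_of_le_of_lt hq.2 (lt_trans hyy0 hy01)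
      linarith
    have huIcc : uIcc (0:ℝ) y = Icc 0 y := uIcc_of_le (le_of_lt hy0l)
    have hcontden : ContinuousOn (fun q : ℝ => 1 - q) (Icc (0:ℝ) y) :=
      (continuous_const.sub continuous_id).continuousOn
    have intg_f : IntervalIntegrable (fun q => (c - 1) / (1 - q)) MeasureTheory.volume 0 y := by
      apply ContinuousOn.intervalIntegrable
      rw [huIcc]
      exact continuousOn_const.div hcontden hden
    have intg_g : IntervalIntegrable (fun q => (h q - 1) / (1 - q)) MeasureTheory.volume 0 y := by
      apply ContinuousOn.intervalIntegrable
      rw [huIcc]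
      exact ((hcont.mono hIccsub).sub continuousOn_const).div hcontden hden
    have hcomp : (∫ q in (0:ℝ)..y, (c - 1) / (1 - q))
        ≤ ∫ q in (0:ℝ)..y, (h q - 1) / (1 - q) := by
      apply intervalIntegral.integral_mono_on (le_of_lt hy0l) intg_f intg_g
      intro q hq
      have h1q : 0 < 1 - q := by
        have : q < 1 := lt_of_le_of_lt hq.2 (lt_trans hyy0 hy01)
        linarith
      have hch : c ≤ h q := hlow q ⟨hq.1, lt_of_le_of_lt hq.2 hyy0⟩
      gcongr
    have heval : (∫ q in (0:ℝ)..y, (c - 1) / (1 - q)) = (1 - c) * Real.log (1 - y) := by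
      have hF : ∀ q ∈ uIcc (0:ℝ) y,
          HasDerivAt (fun q => (1 - c) * Real.log (1 - q)) ((c - 1) / (1 - q)) q := by
        intro q hq
        rw [huIcc] at hq
        have h1q : (1:ℝ) - q ≠ 0 := hden q hq
        have hd1 : HasDerivAt (fun q : ℝ => 1 - q) (-1) q := (hasDerivAt_id q).const_sub 1
        have hd2 := (hd1.log h1q).const_mul (1 - c)
        exact hd2.congr_deriv (by ring)
      rw [intervalIntegral.integral_eq_sub_of_hasDerivAt hF intg_f]
      simp
    have hlog : (1 - c) * Real.log (1 - y0) ≤ (1 - c) * Real.log (1 - y) := by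
      have h1 : (0:ℝ) < 1 - y0 := by linarith
      have h2 : Real.log (1 - y0) ≤ Real.log (1 - y) := by
        apply Real.log_le_log h1
        linarith
      have h3 : (0:ℝ) ≤ 1 - c := by linarith [lt_trans hcγ hγ1]
      exact mul_le_mul_of_nonneg_left h2 h3
    have hKle : K ≤ Real.exp (∫ q in (0:ℝ)..y, (h q - 1) / (1 - q)) := by
      rw [hK_def]
      apply Real.exp_le_exp.mpr
      calc (1 - c) * Real.log (1 - y0) ≤ (1 - c) * Real.log (1 - y) := hlog
        _ = ∫ q in (0:ℝ)..y, (c - 1) / (1 - q) := heval.symm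
        _ ≤ _ := hcomp
    have hξK : σD ^ 2 * (A + B / c + ε) ≤ ξ * K := (div_le_iff₀ hK).mp hξ
    have h6 : A + B / c + ε ≤ ξ / σD ^ 2 * K := by
      rw [div_mul_eq_mul_div, le_div_iff₀ hσ2]
      linarith
    have h7 : ξ / σD ^ 2 * K
        ≤ ξ / σD ^ 2 * Real.exp (∫ q in (0:ℝ)..y, (h q - 1) / (1 - q)) :=
      mul_le_mul_of_nonneg_left hKle (le_of_lt (div_pos hξpos hσ2))
    simp only [a2]
    linarith
  -- Step 3 : quadratic differential inequality on (y0/2, 3*y0/4)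
  set aa : ℝ := y0 / 2 with haa_def
  set bb : ℝ := 3 * y0 / 4 with hbb_def
  have haapos : 0 < aa := by rw [haa_def]; linarith
  have haabb : aa < bb := by rw [haa_def, hbb_def]; linarith
  have hbby0 : bb < y0 := by rw [hbb_def]; linarith
  have hquad : ∀ y ∈ Ioo aa bb, ε * (h y) ^ 2 ≤ h' y := by
    intro y hy
    have hyIoo : y ∈ Ioo (0:ℝ) y0 := ⟨lt_trans haapos hy.1, lt_trans hy.2 hbby0⟩
    have hvc : c ≤ h y := hlow y ⟨le_of_lt hyIoo.1, hyIoo.2⟩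
    have hvpos : 0 < h y := lt_of_lt_of_le hcpos hvc
    have h1y : 0 < 1 - y := by linarith [hyIoo.2]
    have h1yy0 : 1 - y0 < 1 - y := by linarith [hyIoo.2]
    have h1yle : 1 - y ≤ 1 := by linarith [hyIoo.1]
    have hya : aa ≤ y := le_of_lt hy.1
    rw [heq y hyIoo]
    simp only [a0, a1]
    set v := h y with hv_def
    set w := a2 ξ σD A h y with hw_def
    have hw : B / c + ε ≤ w := ha2 y hyIoo
    have hwpos : 0 < w := lt_of_lt_of_le (by linarith) hw
    have hypos := hyIoo.1
    have t1 : 0 ≤ γ * (1 + γ) / y := le_of_lt (div_pos (by nlinarith) hypos)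
    -- term 2 : a1/(1-y) * v ≥ -B * v
    have hstep : -B ≤ ((2 * γ + 1) * y - (1 + γ)) / y / (1 - y) := by
      rw [div_div, le_div_iff₀ (mul_pos hypos h1y)]
      have hkey : (1 + γ) ≤ B * (y * (1 - y)) := by
        rw [hB_def, div_mul_eq_mul_div, le_div_iff₀ (mul_pos hy00 (by linarith : (0:ℝ) < 1 - y0))]
        have hy2 : y0 / 2 ≤ y := hya
        nlinarith [hyIoo.2, mul_nonneg (by linarith : (0:ℝ) ≤ 2 * y - y0) (le_of_lt h1y),
          mul_nonneg (le_of_lt hy00) (by linarith : (0:ℝ) ≤ y0 - y),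
          (by linarith : (0:ℝ) ≤ 1 + γ)]
      nlinarith [mul_nonneg (by linarith : (0:ℝ) ≤ 2 * γ + 1) (le_of_lt hypos)]
    have t2 : -B * v ≤ ((2 * γ + 1) * y - (1 + γ)) / y / (1 - y) * v :=
      mul_le_mul_of_nonneg_right hstep (le_of_lt hvpos)
    -- term 3 : w/(1-y) * v^2 ≥ (B/c + ε) * v^2
    have hw2 : w ≤ w / (1 - y) := by
      rw [le_div_iff₀ h1y]
      nlinarith
    have t3 : (B / c + ε) * v ^ 2 ≤ w / (1 - y) * v ^ 2 := by
      have : B / c + ε ≤ w / (1 - y) := le_trans hw hw2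
      exact mul_le_mul_of_nonneg_right this (sq_nonneg v)
    -- B/c * v^2 ≥ B * v
    have hvv : B * v ≤ B / c * v ^ 2 := by
      have h1 : B * v * c ≤ B * v * v :=
        mul_le_mul_of_nonneg_left hvc (le_of_lt (mul_pos hBpos hvpos))
      have h2 : B / c * v ^ 2 = B * v * v / c := by
        field_simp
      rw [h2, le_div_iff₀ hcpos]
      exact h1
    linarith
  -- Step 4 : the function 1/h + ε y is antitone on [aa, bb], contradiction
  set ψ : ℝ → ℝ := fun y => (h y)⁻¹ + ε * y with hψ_def
  have hsubIcc : Icc aa bb ⊆ Icc (0:ℝ) y0 :=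
    Icc_subset_Icc (le_of_lt haapos) (le_of_lt hbby0)
  have hhpos : ∀ y ∈ Icc aa bb, 0 < h y := by
    intro y hy
    exact lt_of_lt_of_le hcpos
      (hlow y ⟨le_trans (le_of_lt haapos) hy.1, lt_of_le_of_lt hy.2 hbby0⟩)
  have hψcont : ContinuousOn ψ (Icc aa bb) := by
    apply ContinuousOn.add
    · exact (hcont.mono hsubIcc).inv₀ (fun y hy => ne_of_gt (hhpos y hy))
    · exact (continuous_const.mul continuous_id).continuousOn
  have hψderiv : ∀ y ∈ Ioo aa bb, HasDerivAt ψ (-(h' y) / (h y) ^ 2 + ε * 1) y := by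
    intro y hy
    have hyIoo : y ∈ Ioo (0:ℝ) y0 := ⟨lt_trans haapos hy.1, lt_trans hy.2 hbby0⟩
    have hne : h y ≠ 0 := ne_of_gt (hhpos y ⟨le_of_lt hy.1, le_of_lt hy.2⟩)
    exact ((hderiv y hyIoo).inv hne).add ((hasDerivAt_id y).const_mul ε)
  have hanti : AntitoneOn ψ (Icc aa bb) := by
    apply antitoneOn_of_deriv_nonpos (convex_Icc aa bb) hψcont
    · intro y hy
      rw [interior_Icc] at hy
      exact ((hψderiv y hy).differentiableAt).differentiableWithinAt
    · intro y hy
      rw [interior_Icc] at hy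
      rw [(hψderiv y hy).deriv]
      have hq := hquad y hy
      have hv : 0 < h y := hhpos y ⟨le_of_lt hy.1, le_of_lt hy.2⟩
      have : ε ≤ h' y / (h y) ^ 2 := by
        rw [le_div_iff₀ (pow_pos hv 2)]
        linarith
      have h2 : -(h' y) / (h y) ^ 2 = -(h' y / (h y) ^ 2) := by ring
      rw [h2]
      linarith
  have hle : ψ bb ≤ ψ aa :=
    hanti (left_mem_Icc.mpr (le_of_lt haabb)) (right_mem_Icc.mpr (le_of_lt haabb))
      (le_of_lt haabb)
  have hainv : (h aa)⁻¹ ≤ c⁻¹ := by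
    apply inv_anti₀ hcpos
    exact hlow aa ⟨le_of_lt haapos, lt_trans haabb hbby0⟩
  have hbinv : 0 < (h bb)⁻¹ :=
    inv_pos.mpr (hhpos bb (right_mem_Icc.mpr (le_of_lt haabb)))
  have hεab : ε * (bb - aa) = c⁻¹ := by
    have hcne : c ≠ 0 := ne_of_gt hcpos
    have hy0ne : y0 ≠ 0 := ne_of_gt hy00
    rw [hε_def, haa_def, hbb_def]
    field_simp
    ring
  simp only [hψ_def] at hle
  nlinarith [hle, hainv, hbinv, hεab]
end

section
/- Let γ ∈ (0,1), σ_D > 0, A > 1, y₀ ∈ (0,1), and ξ̄ > 0. Then there exist constants M₁ > 0 and M₂ > 0 with the following property. For any ξ₁, ξ₂ ∈ [0, ξ̄] and any solutions h_{ξ₁}, h_{ξ₂} of the Cauchy problem h'(y) = a₀(y) + (a₁(y)/(1−y))·h(y) + (a₂(h,y)/(1−y))·h(y)² with h(0) = γ (with parameter ξ = ξ₁ and ξ = ξ₂ respectively), setting y_{ξᵢ} := min( inf{y > 0 : h_{ξᵢ}(y) = 1}, 1 ) and F_{ξᵢ}(y) := (ξᵢ/σ_D²)·exp(∫₀^y (h_{ξᵢ}(q)−1)/(1−q)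 dq), one has |h_{ξ₁}(y) − h_{ξ₂}(y)| ≤ M₁·y·|ξ₁ − ξ₂| and |F_{ξ₁}(y) − F_{ξ₂}(y)| ≤ M₂·|ξ₁ − ξ₂| for all y ∈ [0, min(y_{ξ₁}, y_{ξ₂}, y₀)]. -/
open Set Real Filter Topology

/-- `F_ξ(y) = (ξ/σ_D²)·exp(∫₀^y (h(q)−1)/(1−q) dq)`. -/
noncomputable def Fxi (ξ σD : ℝ) (h : ℝ → ℝ) (y : ℝ) : ℝ :=
  ξ / σD ^ 2 * Real.exp (∫ q in (0:ℝ)..y, (h q - 1) / (1 - q))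

/-- `y_ξ = min( inf{y > 0 : h(y) = 1 within the domain [0,β]}, 1 )`:
the first time `h` hits the value `1`, capped at `1` (and `= 1` if `h` never
hits `1` on its domain). -/
noncomputable def yxi (h : ℝ → ℝ) (β : ℝ) : ℝ :=
  sInf (insert (1:ℝ) {y : ℝ | 0 < y ∧ y ≤ β ∧ h y = 1})


/-- `exp` is 1-Lipschitz on nonpositive reals. -/
lemma exp_lip_nonpos {x z : ℝ} (hx : x ≤ 0) (hz : z ≤ 0) :
    |Real.exp x - Real.exp z| ≤ |x - z| := by
  have key : ∀ a b : ℝ, a ≤ 0 → b ≤ 0 → b ≤ a → Real.exp a - Real.exp b ≤ a - b := by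
    intro a b ha hb hba
    have h1 : Real.exp a ≤ 1 := Real.exp_le_one_iff.2 ha
    have h2 : (b - a) + 1 ≤ Real.exp (b - a) := Real.add_one_le_exp _
    have h3 : Real.exp a - Real.exp b = Real.exp a * (1 - Real.exp (b - a)) := by
      rw [mul_sub, mul_one, ← Real.exp_add]; ring_nf
    have h4 : 0 ≤ 1 - Real.exp (b - a) → Real.exp a * (1 - Real.exp (b - a)) ≤
        1 - Real.exp (b - a) := fun h => by nlinarith
    rcases le_or_gt (1 - Real.exp (b - a)) 0 with h | h
    · nlinarith [Real.exp_pos a]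
    · nlinarith
  rcases le_total z x with h | h
  · rw [abs_of_nonneg (by nlinarith [Real.exp_le_exp.2 h] : (0:ℝ) ≤ Real.exp x - Real.exp z),
      abs_of_nonneg (by linarith : (0:ℝ) ≤ x - z)]
    exact key x z hx hz h
  · rw [abs_sub_comm, abs_sub_comm x z,
      abs_of_nonneg (by nlinarith [Real.exp_le_exp.2 h] : (0:ℝ) ≤ Real.exp z - Real.exp x),
      abs_of_nonneg (by linarith : (0:ℝ) ≤ z - x)]
    exact key z x hz hx h

/-- Before the first hitting time of `1`, a continuous function starting below `1` stays `≤ 1`. -/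
lemma sol_le_one {h : ℝ → ℝ} {β γ y : ℝ} (hc : ContinuousOn h (Icc 0 β))
    (h0 : h 0 = γ) (hγ : γ < 1) (hyβ : y ≤ β) (hyx : y ≤ yxi h β) (hy : 0 ≤ y) :
    ∀ t ∈ Icc (0:ℝ) y, h t ≤ 1 := by
  intro t ⟨ht0, hty⟩
  by_contra hcon
  push_neg at hcon
  have htpos : 0 < t := by
    rcases ht0.lt_or_eq with h' | h'
    · exact h'
    · rw [← h', h0] at hcon; linarith
  have hsub : Icc (0:ℝ) t ⊆ Icc 0 β := Icc_subset_Icc_right (le_trans hty hyβ)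
  have hIVT := intermediate_value_Icc htpos.le (hc.mono hsub)
  have h1mem : (1:ℝ) ∈ Icc (h 0) (h t) := by rw [h0]; exact ⟨hγ.le, hcon.le⟩
  obtain ⟨z, hzmem, hz1⟩ := hIVT h1mem
  have hz0 : 0 < z := by
    rcases hzmem.1.lt_or_eq with h' | h'
    · exact h'
    · exfalso; rw [← h', h0] at hz1; linarith
  have hzS : z ∈ insert (1:ℝ) {y : ℝ | 0 < y ∧ y ≤ β ∧ h y = 1} :=
    Or.inr ⟨hz0, le_trans hzmem.2 (le_trans hty hyβ), hz1⟩
  have hbdd : BddBelow (insert (1:ℝ) {y : ℝ | 0 < y ∧ y ≤ β ∧ h y = 1}) := by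
    refine ⟨0, ?_⟩
    rintro x (rfl | ⟨hx, -, -⟩)
    · exact zero_le_one
    · exact hx.le
  have hle : yxi h β ≤ z := csInf_le hbdd hzS
  have : t ≤ z := le_trans hty (le_trans hyx hle)
  have : z = t := le_antisymm hzmem.2 this
  rw [this] at hz1; linarith

/-- A solution of the ODE with `h 0 = γ > 0` stays nonnegative (strictly before `y`). -/
lemma sol_nonneg {h h' : ℝ → ℝ} {β γ σD A ξ y : ℝ}
    (hder : ∀ t ∈ Icc (0:ℝ) β, HasDerivWithinAt h (h' t) (Icc (0:ℝ) β) t)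
    (hode : ∀ t ∈ Ioo (0:ℝ) β,
      h' t = a0 γ t + a1 γ t / (1 - t) * h t + a2 ξ σD A h t / (1 - t) * h t ^ 2)
    (h0 : h 0 = γ) (hγ : 0 < γ) (hy : 0 < y) (hyβ : y ≤ β) :
    ∀ t ∈ Ico (0:ℝ) y, 0 ≤ h t := by
  intro t ⟨ht0, hty⟩
  by_contra hcon
  push_neg at hcon
  have hc : ContinuousOn h (Icc 0 β) := fun z hz => (hder z hz).continuousWithinAt
  have htβ : t ≤ β := le_trans hty.le hyβ
  have hsub : Icc (0:ℝ) t ⊆ Icc 0 β := Icc_subset_Icc_right htβ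
  set S : Set ℝ := {s | s ∈ Icc (0:ℝ) t ∧ h s ≤ 0} with hSdef
  have hSne : S.Nonempty := ⟨t, ⟨ht0, le_refl t⟩, hcon.le⟩
  have hSbdd : BddBelow S := ⟨0, fun x hx => hx.1.1⟩
  have hSclosed : IsClosed S := by
    have : S = Icc (0:ℝ) t ∩ h ⁻¹' (Iic 0) := rfl
    rw [this]
    exact (hc.mono hsub).preimage_isClosed_of_isClosed isClosed_Icc isClosed_Iic
  set s := sInf S with hsdef
  have hsS : s ∈ S := hSclosed.csInf_mem hSne hSbdd
  have hs0 : 0 < s := by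
    rcases hsS.1.1.lt_or_eq with h'' | h''
    · exact h''
    · exfalso
      have : h s = γ := by rw [← h'', h0]
      have := hsS.2
      linarith
  have hpos : ∀ z ∈ Ico (0:ℝ) s, 0 < h z := by
    intro z ⟨hz0, hzs⟩
    by_contra hz
    push_neg at hz
    exact absurd (csInf_le hSbdd ⟨⟨hz0, le_trans hzs.le hsS.1.2⟩, hz⟩) (not_le.2 hzs)
  -- h s = 0
  have hneb : (𝓝[Ico (0:ℝ) s] s).NeBot := by
    rw [nhdsWithin_Ico_eq_nhdsLT hs0]
    infer_instance
  have hs_eq : h s = 0 := by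
    refine le_antisymm hsS.2 ?_
    have hcw : ContinuousWithinAt h (Ico (0:ℝ) s) s := by
      have h1 : ContinuousWithinAt h (Icc 0 β) s := hc s (hsub hsS.1)
      exact h1.mono (fun z hz => hsub ⟨hz.1, le_trans hz.2.le hsS.1.2⟩)
    have hT : Tendsto h (𝓝[Ico (0:ℝ) s] s) (𝓝 (h s)) := hcw
    exact ge_of_tendsto hT (Filter.eventually_of_mem self_mem_nhdsWithin
      (fun z hz => (hpos z hz).le))
  -- derivative at s within Icc 0 s is ≤ 0
  have hderiv : HasDerivWithinAt h (h' s) (Icc (0:ℝ) s) s :=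
    (hder s (hsub hsS.1)).mono (Icc_subset_Icc_right (le_trans hsS.1.2 htβ))
  have hslope : Filter.Tendsto (slope h s) (𝓝[Ico (0:ℝ) s] s) (𝓝 (h' s)) := by
    have := hasDerivWithinAt_iff_tendsto_slope.1 hderiv
    rwa [Icc_sdiff_right] at this
  have hd_nonpos : h' s ≤ 0 := by
    refine le_of_tendsto hslope (Filter.eventually_of_mem self_mem_nhdsWithin ?_)
    intro z hz
    have h1 : 0 ≤ h z := (hpos z hz).le
    have h2 : z - s < 0 := by linarith [hz.2]
    rw [slope_def_field, hs_eq]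
    exact div_nonpos_iff.2 (Or.inl ⟨by linarith, by linarith⟩)
  -- but the ODE says h' s > 0
  have hsIoo : s ∈ Ioo (0:ℝ) β := ⟨hs0, lt_of_le_of_lt hsS.1.2 (lt_of_lt_of_le hty hyβ)⟩
  have := hode s hsIoo
  rw [hs_eq] at this
  have ha0 : a0 γ s = γ * (1 + γ) / s := rfl
  have : h' s = γ * (1 + γ) / s := by rw [this, ha0]; ring
  have hpos' : 0 < γ * (1 + γ) / s := by positivity
  linarith

set_option maxHeartbeats 2000000 in
/-- **Lipschitz estimates in `ξ`.** There are constants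
`M₁, M₂ > 0` (depending only on `γ, σ_D, A, y₀, ξ̄`) such that for any
`ξ₁, ξ₂ ∈ [0, ξ̄]` and any `C¹` solutions `h₁, h₂` (defined on `[0,β₁]`,
`[0,β₂]` respectively) of the Cauchy problem with parameters `ξ₁, ξ₂`, one has
`|h₁(y) − h₂(y)| ≤ M₁·y·|ξ₁ − ξ₂|` and `|F_{ξ₁}(y) − F_{ξ₂}(y)| ≤ M₂·|ξ₁ − ξ₂|`
for all `y` up to `min(y_{ξ₁}, y_{ξ₂}, y₀)` (within both domains). -/
theorem stmt9 (γ σD A y0 ξbar : ℝ) (hγ : γ ∈ Ioo (0:ℝ) 1) (hσ : 0 < σD)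
    (hA : 1 < A) (hy0 : y0 ∈ Ioo (0:ℝ) 1) (hξbar : 0 < ξbar) :
    ∃ M1 M2 : ℝ, 0 < M1 ∧ 0 < M2 ∧
      ∀ ξ1 ξ2 : ℝ, ξ1 ∈ Icc (0:ℝ) ξbar → ξ2 ∈ Icc (0:ℝ) ξbar →
      ∀ β1 β2 : ℝ, β1 ∈ Ioc (0:ℝ) 1 → β2 ∈ Ioc (0:ℝ) 1 →
      ∀ h1 h1' h2 h2' : ℝ → ℝ,
        (ContinuousOn h1' (Icc (0:ℝ) β1) ∧
          (∀ y ∈ Icc (0:ℝ) β1, HasDerivWithinAt h1 (h1' y) (Icc (0:ℝ) β1) y) ∧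
          h1 0 = γ ∧
          (∀ y ∈ Ioo (0:ℝ) β1,
            h1' y = a0 γ y + a1 γ y / (1 - y) * h1 y +
              a2 ξ1 σD A h1 y / (1 - y) * h1 y ^ 2)) →
        (ContinuousOn h2' (Icc (0:ℝ) β2) ∧
          (∀ y ∈ Icc (0:ℝ) β2, HasDerivWithinAt h2 (h2' y) (Icc (0:ℝ) β2) y) ∧
          h2 0 = γ ∧
          (∀ y ∈ Ioo (0:ℝ) β2,
            h2' y = a0 γ y + a1 γ y / (1 - y) * h2 y +
              a2 ξ2 σD A h2 y / (1 - y) * h2 y ^ 2)) →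
        ∀ y ∈ Icc (0:ℝ)
            (min (min (yxi h1 β1) (yxi h2 β2)) (min y0 (min β1 β2))),
          |h1 y - h2 y| ≤ M1 * y * |ξ1 - ξ2| ∧
          |Fxi ξ1 σD h1 y - Fxi ξ2 σD h2 y| ≤ M2 * |ξ1 - ξ2| := by
  obtain ⟨hγ0, hγ1⟩ := hγ
  obtain ⟨hy00, hy01⟩ := hy0
  have hσ2 : (0:ℝ) < σD ^ 2 := by positivity
  have h1y0 : (0:ℝ) < 1 - y0 := by linarith
  obtain ⟨ρ, hρdef⟩ : ∃ x : ℝ, x = (1 - y0)⁻¹ := ⟨_, rfl⟩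
  have hρpos : 0 < ρ := by rw [hρdef]; exact inv_pos.2 h1y0
  have hρ1 : 1 ≤ ρ := by
    have h2 : (1 - y0) * ρ = 1 := by rw [hρdef]; exact mul_inv_cancel₀ (ne_of_gt h1y0)
    nlinarith
  obtain ⟨B, hBdef⟩ : ∃ x : ℝ, x = A + ξbar / σD ^ 2 := ⟨_, rfl⟩
  have hξσ : 0 ≤ ξbar / σD ^ 2 := by positivity
  have hBpos : 0 < B := by rw [hBdef]; linarith
  obtain ⟨K, hKdef⟩ : ∃ x : ℝ, x = (2 * γ + 1) * ρ + 2 * B * ρ + ρ * ξbar / σD ^ 2 + ρ :=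
    ⟨_, rfl⟩
  have hterm3 : 0 ≤ ρ * ξbar / σD ^ 2 := by positivity
  have hKpos : 0 < K := by rw [hKdef]; nlinarith
  obtain ⟨M1, hM1def⟩ : ∃ x : ℝ, x = ρ * Real.exp K / σD ^ 2 := ⟨_, rfl⟩
  obtain ⟨M2, hM2def⟩ : ∃ x : ℝ, x = 1 / σD ^ 2 + ξbar / σD ^ 2 * M1 := ⟨_, rfl⟩
  have hM1pos : 0 < M1 := by
    rw [hM1def]; exact div_pos (mul_pos hρpos (Real.exp_pos K)) hσ2
  have hM2pos : 0 < M2 := by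
    have h1 : 0 < 1 / σD ^ 2 := by positivity
    have h2 : 0 ≤ ξbar / σD ^ 2 * M1 := mul_nonneg hξσ hM1pos.le
    rw [hM2def]
    linarith
  refine ⟨M1, M2, hM1pos, hM2pos, ?_⟩
  intro ξ1 ξ2 hξ1 hξ2 β1 β2 hβ1 hβ2 h1 h1' h2 h2' H1 H2 y hy
  obtain ⟨Hc1, Hd1, H01, He1⟩ := H1
  obtain ⟨Hc2, Hd2, H02, He2⟩ := H2
  obtain ⟨hy0le, hyY⟩ := hy
  have hyy0 : y ≤ y0 := le_trans hyY (le_trans (min_le_right _ _) (min_le_left _ _))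
  have hyβ1 : y ≤ β1 := le_trans hyY
    (le_trans (min_le_right _ _) (le_trans (min_le_right _ _) (min_le_left _ _)))
  have hyβ2 : y ≤ β2 := le_trans hyY
    (le_trans (min_le_right _ _) (le_trans (min_le_right _ _) (min_le_right _ _)))
  have hyx1 : y ≤ yxi h1 β1 := le_trans hyY (le_trans (min_le_left _ _) (min_le_left _ _))
  have hyx2 : y ≤ yxi h2 β2 := le_trans hyY (le_trans (min_le_left _ _) (min_le_right _ _))
  have hy1 : y < 1 := lt_of_le_of_lt hyy0 hy01
  have hh1c : ContinuousOn h1 (Icc 0 β1) := fun z hz => (Hd1 z hz).continuousWithinAt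
  have hh2c : ContinuousOn h2 (Icc 0 β2) := fun z hz => (Hd2 z hz).continuousWithinAt
  rcases hy0le.eq_or_lt with hyeq | hypos
  · -- y = 0
    have hy' : y = 0 := hyeq.symm
    subst hy'
    constructor
    · rw [H01, H02, sub_self, abs_zero, mul_zero, zero_mul]
    · have hF1 : Fxi ξ1 σD h1 0 = ξ1 / σD ^ 2 := by
        simp [Fxi]
      have hF2 : Fxi ξ2 σD h2 0 = ξ2 / σD ^ 2 := by
        simp [Fxi]
      rw [hF1, hF2, div_sub_div_same, abs_div, abs_of_pos hσ2]
      have hM2ge : 1 / σD ^ 2 ≤ M2 := by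
        have h2 : 0 ≤ ξbar / σD ^ 2 * M1 := mul_nonneg hξσ hM1pos.le
        rw [hM2def]; linarith
      rw [div_eq_mul_one_div, mul_comm]
      exact mul_le_mul_of_nonneg_right hM2ge (abs_nonneg _)
  · -- main case : 0 < y
    have hsub1 : Icc (0:ℝ) y ⊆ Icc 0 β1 := Icc_subset_Icc_right hyβ1
    have hsub2 : Icc (0:ℝ) y ⊆ Icc 0 β2 := Icc_subset_Icc_right hyβ2
    have hmem1t : ∀ t ∈ Icc (0:ℝ) y, (0:ℝ) < 1 - t := fun t ht => by
      have := lt_of_le_of_lt ht.2 hy1; linarith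
    have hinvρ : ∀ t ∈ Icc (0:ℝ) y, (1 - t)⁻¹ ≤ ρ := fun t ht => by
      rw [hρdef]
      exact inv_anti₀ h1y0 (by linarith [le_trans ht.2 hyy0])
    obtain ⟨u, hudef⟩ : ∃ f : ℝ → ℝ, f = fun t => h1 t - h2 t := ⟨_, rfl⟩
    obtain ⟨du, hdudef⟩ : ∃ f : ℝ → ℝ, f = fun t => h1' t - h2' t := ⟨_, rfl⟩
    have hu_app : ∀ t, u t = h1 t - h2 t := fun t => by rw [hudef]
    have hdu_app : ∀ t, du t = h1' t - h2' t := fun t => by rw [hdudef]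
    have hu0 : u 0 = 0 := by rw [hu_app]; simp [H01, H02]
    have hucont : ContinuousOn u (Icc 0 y) := by
      rw [hudef]; exact (hh1c.mono hsub1).sub (hh2c.mono hsub2)
    have huderiv : ∀ t ∈ Icc (0:ℝ) y, HasDerivWithinAt u (du t) (Icc (0:ℝ) y) t := fun t ht => by
      rw [hudef, hdu_app t]
      exact ((Hd1 t (hsub1 ht)).mono hsub1).sub ((Hd2 t (hsub2 ht)).mono hsub2)
    obtain ⟨g, hgdef⟩ : ∃ f : ℝ → ℝ, f = fun s => |u s| / (1 - s) := ⟨_, rfl⟩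
    have hg_app : ∀ s, g s = |u s| / (1 - s) := fun s => by rw [hgdef]
    have hgcont : ContinuousOn g (Icc 0 y) := by
      rw [hgdef]
      exact hucont.abs.div ((continuous_const.sub continuous_id).continuousOn)
        (fun t ht => ne_of_gt (hmem1t t ht))
    have hgnonneg : ∀ s ∈ Icc (0:ℝ) y, 0 ≤ g s := fun s hs => by
      rw [hg_app]; exact div_nonneg (abs_nonneg _) (hmem1t s hs).le
    obtain ⟨W, hWdef⟩ : ∃ f : ℝ → ℝ, f = fun t => ∫ s in (0:ℝ)..t, g s := ⟨_, rfl⟩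
    have hW_app : ∀ t, W t = ∫ s in (0:ℝ)..t, g s := fun t => by rw [hWdef]
    have hWint : ∀ t ∈ Icc (0:ℝ) y, IntervalIntegrable g MeasureTheory.volume 0 t := by
      intro t ht
      apply ContinuousOn.intervalIntegrable
      rw [uIcc_of_le ht.1]
      exact hgcont.mono (Icc_subset_Icc_right ht.2)
    have hWcont : ContinuousOn W (Icc 0 y) := by
      rw [hWdef]
      have hInt : MeasureTheory.IntegrableOn g (uIcc 0 y) := by
        rw [uIcc_of_le hypos.le]; exact hgcont.integrableOn_Icc
      have := intervalIntegral.continuousOn_primitive_interval hInt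
      rwa [uIcc_of_le hypos.le] at this
    have hWnonneg : ∀ t ∈ Icc (0:ℝ) y, 0 ≤ W t := fun t ht => by
      rw [hW_app]
      exact intervalIntegral.integral_nonneg ht.1
        (fun s hs => hgnonneg s ⟨hs.1, le_trans hs.2 ht.2⟩)
    obtain ⟨p, hpdef⟩ : ∃ f : ℝ → ℝ, f = fun t => |u t| + W t := ⟨_, rfl⟩
    have hpt : ∀ t, p t = |u t| + W t := fun t => by rw [hpdef]
    have hpcont : ContinuousOn p (Icc 0 y) := by rw [hpdef]; exact hucont.abs.add hWcont
    have hpnonneg : ∀ t ∈ Icc (0:ℝ) y, 0 ≤ p t := fun t ht => by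
      rw [hpt]; exact add_nonneg (abs_nonneg _) (hWnonneg t ht)
    have hp0 : p 0 = 0 := by rw [hpt, hu0, hW_app]; simp
    have h1le : ∀ t ∈ Icc (0:ℝ) y, h1 t ≤ 1 := sol_le_one hh1c H01 hγ1 hyβ1 hyx1 hypos.le
    have h2le : ∀ t ∈ Icc (0:ℝ) y, h2 t ≤ 1 := sol_le_one hh2c H02 hγ1 hyβ2 hyx2 hypos.le
    have h1nn : ∀ t ∈ Ico (0:ℝ) y, 0 ≤ h1 t := sol_nonneg Hd1 He1 H01 hγ0 hypos hyβ1
    have h2nn : ∀ t ∈ Ico (0:ℝ) y, 0 ≤ h2 t := sol_nonneg Hd2 He2 H02 hγ0 hypos hyβ2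
    have hint1 : ∀ t ∈ Icc (0:ℝ) y,
        IntervalIntegrable (fun q => (h1 q - 1) / (1 - q)) MeasureTheory.volume 0 t := by
      intro t ht
      apply ContinuousOn.intervalIntegrable
      rw [uIcc_of_le ht.1]
      apply ContinuousOn.div
      · exact (hh1c.mono (Icc_subset_Icc_right (le_trans ht.2 hyβ1))).sub continuousOn_const
      · exact (continuous_const.sub continuous_id).continuousOn
      · exact fun s hs => ne_of_gt (hmem1t s ⟨hs.1, le_trans hs.2 ht.2⟩)
    have hint2 : ∀ t ∈ Icc (0:ℝ) y,
        IntervalIntegrable (fun q => (h2 q - 1) / (1 - q)) MeasureTheory.volume 0 t := by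
      intro t ht
      apply ContinuousOn.intervalIntegrable
      rw [uIcc_of_le ht.1]
      apply ContinuousOn.div
      · exact (hh2c.mono (Icc_subset_Icc_right (le_trans ht.2 hyβ2))).sub continuousOn_const
      · exact (continuous_const.sub continuous_id).continuousOn
      · exact fun s hs => ne_of_gt (hmem1t s ⟨hs.1, le_trans hs.2 ht.2⟩)
    have hGn1 : ∀ t ∈ Icc (0:ℝ) y, (∫ q in (0:ℝ)..t, (h1 q - 1) / (1 - q)) ≤ 0 := by
      intro t ht
      have hmono := intervalIntegral.integral_mono_on (g := fun _ => (0:ℝ)) ht.1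
        (hint1 t ht) intervalIntegrable_const (fun s hs => by
          have hs' : s ∈ Icc (0:ℝ) y := ⟨hs.1, le_trans hs.2 ht.2⟩
          exact div_nonpos_iff.2 (Or.inr ⟨by linarith [h1le s hs'], (hmem1t s hs').le⟩))
      simpa using hmono
    have hGn2 : ∀ t ∈ Icc (0:ℝ) y, (∫ q in (0:ℝ)..t, (h2 q - 1) / (1 - q)) ≤ 0 := by
      intro t ht
      have hmono := intervalIntegral.integral_mono_on (g := fun _ => (0:ℝ)) ht.1
        (hint2 t ht) intervalIntegrable_const (fun s hs => by
          have hs' : s ∈ Icc (0:ℝ) y := ⟨hs.1, le_trans hs.2 ht.2⟩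
          exact div_nonpos_iff.2 (Or.inr ⟨by linarith [h2le s hs'], (hmem1t s hs').le⟩))
      simpa using hmono
    have hintu : ∀ t ∈ Icc (0:ℝ) y,
        IntervalIntegrable (fun q => u q / (1 - q)) MeasureTheory.volume 0 t := by
      intro t ht
      apply ContinuousOn.intervalIntegrable
      rw [uIcc_of_le ht.1]
      apply ContinuousOn.div
      · exact hucont.mono (Icc_subset_Icc_right ht.2)
      · exact (continuous_const.sub continuous_id).continuousOn
      · exact fun s hs => ne_of_gt (hmem1t s ⟨hs.1, le_trans hs.2 ht.2⟩)
    have hwW : ∀ t ∈ Icc (0:ℝ) y, |∫ q in (0:ℝ)..t, u q / (1 - q)| ≤ W t := by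
      intro t ht
      rw [hW_app t]
      have habs := intervalIntegral.abs_integral_le_integral_abs
        (f := fun q => u q / (1 - q)) (μ := MeasureTheory.volume) ht.1
      refine le_trans habs (le_of_eq (intervalIntegral.integral_congr ?_))
      intro q hq
      have hq' : q ∈ Icc (0:ℝ) y := by
        rw [uIcc_of_le ht.1] at hq; exact ⟨hq.1, le_trans hq.2 ht.2⟩
      show |u q / (1 - q)| = g q
      rw [hg_app q, abs_div, abs_of_pos (hmem1t q hq')]
    have hFd : ∀ t ∈ Icc (0:ℝ) y, |Fxi ξ1 σD h1 t - Fxi ξ2 σD h2 t| ≤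
        |ξ1 - ξ2| / σD ^ 2 + ξbar / σD ^ 2 * W t := by
      intro t ht
      set G1 : ℝ := ∫ q in (0:ℝ)..t, (h1 q - 1) / (1 - q) with hG1def
      set G2 : ℝ := ∫ q in (0:ℝ)..t, (h2 q - 1) / (1 - q) with hG2def
      have hG1n : G1 ≤ 0 := hGn1 t ht
      have hG2n : G2 ≤ 0 := hGn2 t ht
      have hE1le : Real.exp G1 ≤ 1 := Real.exp_le_one_iff.2 hG1n
      have hE1pos := Real.exp_pos G1
      have hdiffG : G1 - G2 = ∫ q in (0:ℝ)..t, u q / (1 - q) := by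
        rw [hG1def, hG2def, ← intervalIntegral.integral_sub (hint1 t ht) (hint2 t ht)]
        apply intervalIntegral.integral_congr
        intro q _
        show (h1 q - 1) / (1 - q) - (h2 q - 1) / (1 - q) = u q / (1 - q)
        rw [div_sub_div_same, hu_app q]
        congr 1
        ring
      have hEdiff : |Real.exp G1 - Real.exp G2| ≤ |G1 - G2| := exp_lip_nonpos hG1n hG2n
      have hwle : |G1 - G2| ≤ W t := by rw [hdiffG]; exact hwW t ht
      have hsplit : Fxi ξ1 σD h1 t - Fxi ξ2 σD h2 t =
          (ξ1 - ξ2) / σD ^ 2 * Real.exp G1 + ξ2 / σD ^ 2 * (Real.exp G1 - Real.exp G2) := by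
        simp only [Fxi, ← hG1def, ← hG2def]
        ring
      rw [hsplit]
      have b1 : |(ξ1 - ξ2) / σD ^ 2 * Real.exp G1| ≤ |ξ1 - ξ2| / σD ^ 2 := by
        rw [abs_mul, abs_div, abs_of_pos hσ2, abs_of_pos hE1pos]
        have h0 : 0 ≤ |ξ1 - ξ2| / σD ^ 2 := by positivity
        linarith [mul_nonneg h0 (by linarith : (0:ℝ) ≤ 1 - Real.exp G1)]
      have b2 : |ξ2 / σD ^ 2 * (Real.exp G1 - Real.exp G2)| ≤ ξbar / σD ^ 2 * W t := by
        rw [abs_mul, abs_div, abs_of_pos hσ2, abs_of_nonneg hξ2.1]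
        have hWt := le_trans hEdiff hwle
        have habs0 : 0 ≤ |Real.exp G1 - Real.exp G2| := abs_nonneg _
        have hd : ξ2 / σD ^ 2 ≤ ξbar / σD ^ 2 :=
          div_le_div_of_nonneg_right hξ2.2 hσ2.le
        exact mul_le_mul hd hWt habs0 hξσ
      calc |(ξ1 - ξ2) / σD ^ 2 * Real.exp G1 + ξ2 / σD ^ 2 * (Real.exp G1 - Real.exp G2)|
          ≤ |(ξ1 - ξ2) / σD ^ 2 * Real.exp G1| + |ξ2 / σD ^ 2 * (Real.exp G1 - Real.exp G2)| :=
            abs_add_le _ _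
        _ ≤ |ξ1 - ξ2| / σD ^ 2 + ξbar / σD ^ 2 * W t := add_le_add b1 b2
    obtain ⟨c, hcdef⟩ : ∃ f : ℝ → ℝ,
        f = fun t => a1 γ t / (1 - t) + a2 ξ1 σD A h1 t * (h1 t + h2 t) / (1 - t) := ⟨_, rfl⟩
    have hc_app : ∀ t, c t = a1 γ t / (1 - t) + a2 ξ1 σD A h1 t * (h1 t + h2 t) / (1 - t) :=
      fun t => by rw [hcdef]
    obtain ⟨r, hrdef⟩ : ∃ f : ℝ → ℝ,
        f = fun t => (Fxi ξ1 σD h1 t - Fxi ξ2 σD h2 t) * h2 t ^ 2 / (1 - t) := ⟨_, rfl⟩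
    have hr_app : ∀ t, r t = (Fxi ξ1 σD h1 t - Fxi ξ2 σD h2 t) * h2 t ^ 2 / (1 - t) :=
      fun t => by rw [hrdef]
    have hode : ∀ t ∈ Ioo (0:ℝ) y, du t = c t * u t + r t := by
      intro t ht
      have ht1 : t ∈ Ioo (0:ℝ) β1 := ⟨ht.1, lt_of_lt_of_le ht.2 hyβ1⟩
      have ht2 : t ∈ Ioo (0:ℝ) β2 := ⟨ht.1, lt_of_lt_of_le ht.2 hyβ2⟩
      have hne : (1:ℝ) - t ≠ 0 := ne_of_gt (hmem1t t ⟨ht.1.le, ht.2.le⟩)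
      have e1 := He1 t ht1
      have e2 := He2 t ht2
      have ha2f1 : a2 ξ1 σD A h1 t = Fxi ξ1 σD h1 t - A := rfl
      have ha2f2 : a2 ξ2 σD A h2 t = Fxi ξ2 σD h2 t - A := rfl
      rw [hdu_app t, hc_app t, hr_app t, hu_app t]
      rw [e1, e2, ha2f1, ha2f2]
      field_simp
      ring
    have hF1b : ∀ t ∈ Icc (0:ℝ) y, 0 ≤ Fxi ξ1 σD h1 t ∧ Fxi ξ1 σD h1 t ≤ ξbar / σD ^ 2 := by
      intro t ht
      have hE1le : Real.exp (∫ q in (0:ℝ)..t, (h1 q - 1) / (1 - q)) ≤ 1 :=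
        Real.exp_le_one_iff.2 (hGn1 t ht)
      have hEpos := Real.exp_pos (∫ q in (0:ℝ)..t, (h1 q - 1) / (1 - q))
      constructor
      · exact mul_nonneg (div_nonneg hξ1.1 hσ2.le) hEpos.le
      · calc ξ1 / σD ^ 2 * Real.exp (∫ q in (0:ℝ)..t, (h1 q - 1) / (1 - q))
            ≤ ξbar / σD ^ 2 * 1 :=
              mul_le_mul (div_le_div_of_nonneg_right hξ1.2 hσ2.le) hE1le hEpos.le hξσ
          _ = ξbar / σD ^ 2 := mul_one _
    have hcK : ∀ t ∈ Ioo (0:ℝ) y, c t ≤ (2 * γ + 1) * ρ + 2 * B * ρ := by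
      intro t ht
      have htIcc : t ∈ Icc (0:ℝ) y := ⟨ht.1.le, ht.2.le⟩
      have htIco : t ∈ Ico (0:ℝ) y := ⟨ht.1.le, ht.2⟩
      have h1t : 0 < 1 - t := hmem1t t htIcc
      have hinv : (1 - t)⁻¹ ≤ ρ := hinvρ t htIcc
      have ha1 : a1 γ t ≤ 2 * γ + 1 := by
        show ((2 * γ + 1) * t - (1 + γ)) / t ≤ 2 * γ + 1
        rw [div_le_iff₀ ht.1]
        nlinarith
      have ha2f1 : a2 ξ1 σD A h1 t = Fxi ξ1 σD h1 t - A := rfl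
      have hFb := hF1b t htIcc
      have ha2b : |a2 ξ1 σD A h1 t| ≤ B := by
        rw [ha2f1, abs_le, hBdef]
        constructor
        · linarith [hFb.1]
        · linarith [hFb.2]
      have hsum0 : 0 ≤ h1 t + h2 t := by linarith [h1nn t htIco, h2nn t htIco]
      have hsum2 : h1 t + h2 t ≤ 2 := by linarith [h1le t htIcc, h2le t htIcc]
      rw [hc_app t]
      have t1 : a1 γ t / (1 - t) ≤ (2 * γ + 1) * ρ := by
        rw [div_eq_mul_inv]
        calc a1 γ t * (1 - t)⁻¹ ≤ (2 * γ + 1) * (1 - t)⁻¹ :=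
              mul_le_mul_of_nonneg_right ha1 (inv_nonneg.2 h1t.le)
          _ ≤ (2 * γ + 1) * ρ := mul_le_mul_of_nonneg_left hinv (by linarith)
      have t2 : a2 ξ1 σD A h1 t * (h1 t + h2 t) / (1 - t) ≤ 2 * B * ρ := by
        rw [div_eq_mul_inv]
        have s1 : a2 ξ1 σD A h1 t * (h1 t + h2 t) ≤ B * 2 := by
          calc a2 ξ1 σD A h1 t * (h1 t + h2 t) ≤ |a2 ξ1 σD A h1 t| * (h1 t + h2 t) :=
                mul_le_mul_of_nonneg_right (le_abs_self _) hsum0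
            _ ≤ B * 2 := mul_le_mul ha2b hsum2 hsum0 hBpos.le
        calc a2 ξ1 σD A h1 t * (h1 t + h2 t) * (1 - t)⁻¹ ≤ B * 2 * (1 - t)⁻¹ :=
              mul_le_mul_of_nonneg_right s1 (inv_nonneg.2 h1t.le)
          _ ≤ B * 2 * ρ := mul_le_mul_of_nonneg_left hinv (by nlinarith)
          _ = 2 * B * ρ := by ring
      linarith [t1, t2]
    obtain ⟨ε, hεdef⟩ : ∃ x : ℝ, x = ρ / σD ^ 2 * |ξ1 - ξ2| := ⟨_, rfl⟩
    have hεnn : 0 ≤ ε := by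
      rw [hεdef]
      exact mul_nonneg (div_nonneg hρpos.le hσ2.le) (abs_nonneg _)
    have hrb : ∀ t ∈ Ioo (0:ℝ) y, |r t| ≤ ε + ρ * ξbar / σD ^ 2 * W t := by
      intro t ht
      have htIcc : t ∈ Icc (0:ℝ) y := ⟨ht.1.le, ht.2.le⟩
      have htIco : t ∈ Ico (0:ℝ) y := ⟨ht.1.le, ht.2⟩
      have h1t : 0 < 1 - t := hmem1t t htIcc
      have hinv : (1 - t)⁻¹ ≤ ρ := hinvρ t htIcc
      have hFdt := hFd t htIcc
      have hh2sq : h2 t ^ 2 ≤ 1 := by nlinarith [h2le t htIcc, h2nn t htIco]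
      have hh2sqnn : 0 ≤ h2 t ^ 2 := sq_nonneg _
      have s0 : 0 ≤ |Fxi ξ1 σD h1 t - Fxi ξ2 σD h2 t| := abs_nonneg _
      rw [hr_app t]
      rw [abs_div, abs_of_pos h1t, abs_mul, abs_of_nonneg hh2sqnn, div_eq_mul_inv]
      have s2 : |Fxi ξ1 σD h1 t - Fxi ξ2 σD h2 t| * h2 t ^ 2 * (1 - t)⁻¹ ≤
          |Fxi ξ1 σD h1 t - Fxi ξ2 σD h2 t| * ρ := by
        have s1 : |Fxi ξ1 σD h1 t - Fxi ξ2 σD h2 t| * h2 t ^ 2 ≤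
            |Fxi ξ1 σD h1 t - Fxi ξ2 σD h2 t| := by
          linarith [mul_nonneg s0 (sub_nonneg.2 hh2sq)]
        exact mul_le_mul s1 hinv (inv_nonneg.2 h1t.le) s0
      have s3 : |Fxi ξ1 σD h1 t - Fxi ξ2 σD h2 t| * ρ ≤
          (|ξ1 - ξ2| / σD ^ 2 + ξbar / σD ^ 2 * W t) * ρ :=
        mul_le_mul_of_nonneg_right hFdt hρpos.le
      rw [hεdef]
      have s4 : (|ξ1 - ξ2| / σD ^ 2 + ξbar / σD ^ 2 * W t) * ρ =
          ρ / σD ^ 2 * |ξ1 - ξ2| + ρ * ξbar / σD ^ 2 * W t := by ring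
      linarith [s2, s3]
    obtain ⟨D, hDdef⟩ : ∃ f : ℝ → ℝ, f = fun t =>
        (if u t = 0 then |du t| else if 0 < u t then du t else -du t) + |u t| / (1 - t) :=
      ⟨_, rfl⟩
    have hD_app : ∀ t, D t =
        (if u t = 0 then |du t| else if 0 < u t then du t else -du t) + |u t| / (1 - t) :=
      fun t => by rw [hDdef]
    have hbound : ∀ t ∈ Ioo (0:ℝ) y, D t ≤ K * p t + ε := by
      intro t ht
      have htIcc : t ∈ Icc (0:ℝ) y := ⟨ht.1.le, ht.2.le⟩
      have hWp : W t ≤ p t := by rw [hpt]; linarith [abs_nonneg (u t)]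
      have hup : |u t| ≤ p t := by rw [hpt]; linarith [hWnonneg t htIcc]
      have h1t : 0 < 1 - t := hmem1t t htIcc
      have hut : |u t| / (1 - t) ≤ ρ * |u t| := by
        rw [div_eq_mul_inv, mul_comm]
        exact mul_le_mul_of_nonneg_right (hinvρ t htIcc) (abs_nonneg _)
      have hrbt := hrb t ht
      have hodet := hode t ht
      have hcKt := hcK t ht
      have hppos := hpnonneg t htIcc
      have hWpos := hWnonneg t htIcc
      have hK0nn : (0:ℝ) ≤ (2 * γ + 1) * ρ + 2 * B * ρ := by
        have q1 := mul_nonneg (by linarith : (0:ℝ) ≤ 2 * γ + 1) hρpos.le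
        have q2 := mul_nonneg (by linarith : (0:ℝ) ≤ 2 * B) hρpos.le
        linarith
      have habsr : |r t| ≤ ε + ρ * ξbar / σD ^ 2 * W t := hrbt
      rw [hD_app t]
      split_ifs with h h'
      · rw [hodet, h]
        simp only [mul_zero, zero_add, abs_zero, zero_div, add_zero]
        have hKp : K * p t = ((2 * γ + 1) * ρ + 2 * B * ρ) * p t +
            ρ * ξbar / σD ^ 2 * p t + ρ * p t := by rw [hKdef]; ring
        have q1 : ρ * ξbar / σD ^ 2 * W t ≤ ρ * ξbar / σD ^ 2 * p t :=
          mul_le_mul_of_nonneg_left hWp hterm3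
        linarith [habsr, hKp, q1, mul_nonneg hK0nn hppos, mul_nonneg hρpos.le hppos]
      · rw [hodet]
        have habs : |u t| = u t := abs_of_pos h'
        have x1 : c t * u t ≤ ((2 * γ + 1) * ρ + 2 * B * ρ) * u t :=
          mul_le_mul_of_nonneg_right hcKt h'.le
        have x2 : r t ≤ ε + ρ * ξbar / σD ^ 2 * W t := le_trans (le_abs_self _) habsr
        have hKp : K * p t = ((2 * γ + 1) * ρ + 2 * B * ρ) * u t +
            ((2 * γ + 1) * ρ + 2 * B * ρ) * W t + ρ * ξbar / σD ^ 2 * u t +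
            ρ * ξbar / σD ^ 2 * W t + ρ * u t + ρ * W t := by
          rw [hKdef, hpt, habs]; ring
        rw [habs] at hut ⊢
        linarith [x1, x2, hut, hKp, mul_nonneg hK0nn hWpos, mul_nonneg hρpos.le hWpos,
          mul_nonneg hterm3 h'.le]
      · have hneg : u t < 0 := lt_of_le_of_ne (not_lt.1 h') h
        rw [hodet]
        have habs : |u t| = -u t := abs_of_neg hneg
        have x1 : c t * (-u t) ≤ ((2 * γ + 1) * ρ + 2 * B * ρ) * (-u t) :=
          mul_le_mul_of_nonneg_right hcKt (by linarith)
        have x2 : -r t ≤ ε + ρ * ξbar / σD ^ 2 * W t := le_trans (neg_le_abs _) habsr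
        have hKp : K * p t = ((2 * γ + 1) * ρ + 2 * B * ρ) * (-u t) +
            ((2 * γ + 1) * ρ + 2 * B * ρ) * W t + ρ * ξbar / σD ^ 2 * (-u t) +
            ρ * ξbar / σD ^ 2 * W t + ρ * (-u t) + ρ * W t := by
          rw [hKdef, hpt, habs]; ring
        rw [habs] at hut ⊢
        linarith [x1, x2, hut, hKp, mul_nonneg hK0nn hWpos, mul_nonneg hρpos.le hWpos,
          mul_nonneg hterm3 (by linarith : (0:ℝ) ≤ -u t)]
    have hslope : ∀ t ∈ Ico (0:ℝ) y,
        Filter.Tendsto (fun z => (z - t)⁻¹ * (p z - p t)) (𝓝[>] t) (𝓝 (D t)) := by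
      intro t ht
      rw [hD_app t]
      have htIcc : t ∈ Icc (0:ℝ) y := ⟨ht.1, ht.2.le⟩
      have hty : t < y := ht.2
      have hfle : 𝓝[>] t ≤ 𝓝[Icc (0:ℝ) y \ {t}] t := by
        rw [← nhdsWithin_Ioc_eq_nhdsGT hty]
        exact nhdsWithin_mono _
          (fun z hz => ⟨⟨le_trans ht.1 hz.1.le, hz.2⟩, ne_of_gt hz.1⟩)
      have hfle2 : 𝓝[>] t ≤ 𝓝[Icc (0:ℝ) y] t :=
        le_trans hfle (nhdsWithin_mono _ diff_subset)
      have hTu : Filter.Tendsto (slope u t) (𝓝[>] t) (𝓝 (du t)) :=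
        (hasDerivWithinAt_iff_tendsto_slope.1 (huderiv t htIcc)).mono_left hfle
      have hTW : Filter.Tendsto (slope W t) (𝓝[>] t) (𝓝 (|u t| / (1 - t))) := by
        have hmeas : StronglyMeasurableAtFilter g (𝓝[Set.Ioi t] t)
            MeasureTheory.volume :=
          ⟨Ioc t y, Ioc_mem_nhdsGT hty,
            ((hgcont.mono (fun z hz => ⟨le_trans ht.1 hz.1.le, hz.2⟩)).aestronglyMeasurable
              measurableSet_Ioc)⟩
        have hcw : ContinuousWithinAt g (Set.Ioi t) t := by
          have hg1 : Filter.Tendsto g (𝓝[Icc (0:ℝ) y] t) (𝓝 (g t)) := hgcont t htIcc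
          exact hg1.mono_left (by
            rw [← nhdsWithin_Ioc_eq_nhdsGT hty]
            exact nhdsWithin_mono _ (fun z hz => ⟨le_trans ht.1 hz.1.le, hz.2⟩))
        have hW' : HasDerivWithinAt W (g t) (Set.Ici t) t := by
          rw [hWdef]
          exact intervalIntegral.integral_hasDerivWithinAt_right (hWint t htIcc) hmeas hcw
        have h2'' := hasDerivWithinAt_iff_tendsto_slope.1 hW'
        rw [Ici_sdiff_left] at h2''
        rwa [hg_app t] at h2''
      have huten : Filter.Tendsto u (𝓝[>] t) (𝓝 (u t)) := (hucont t htIcc).mono_left hfle2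
      have hTabs : Filter.Tendsto (slope (fun s => |u s|) t) (𝓝[>] t)
          (𝓝 (if u t = 0 then |du t| else if 0 < u t then du t else -du t)) := by
        split_ifs with h h'
        · apply Filter.Tendsto.congr' _ hTu.abs
          filter_upwards [self_mem_nhdsWithin] with z hz
          have hzt : 0 < z - t := sub_pos.2 hz
          rw [slope_def_field, slope_def_field, h, abs_zero, sub_zero, abs_div,
            abs_of_pos hzt, sub_zero]
        · apply Filter.Tendsto.congr' _ hTu
          have hev : ∀ᶠ z in 𝓝[>] t, 0 < u z := huten.eventually_const_lt h'
          filter_upwards [hev] with z hz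
          rw [slope_def_field, slope_def_field, abs_of_pos hz, abs_of_pos h']
        · have hneg : u t < 0 := lt_of_le_of_ne (not_lt.1 h') h
          apply Filter.Tendsto.congr' _ hTu.neg
          have hev : ∀ᶠ z in 𝓝[>] t, u z < 0 := huten.eventually_lt_const hneg
          filter_upwards [hev] with z hz
          rw [slope_def_field, slope_def_field, abs_of_neg hz, abs_of_neg hneg]
          ring
      have hcomb := hTabs.add hTW
      apply Filter.Tendsto.congr _ hcomb
      intro z
      have hnum : p z - p t = (|u z| - |u t|) + (W z - W t) := by rw [hpt, hpt]; ring
      rw [inv_mul_eq_div, hnum, slope_def_field, slope_def_field, ← add_div]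
    have key : ∀ a ∈ Ioo (0:ℝ) y, p y ≤ gronwallBound (p a) K ε (y - a) := by
      intro a ha
      have hsubay : Icc a y ⊆ Icc (0:ℝ) y := Icc_subset_Icc_left ha.1.le
      refine le_gronwallBound_of_liminf_deriv_right_le (f' := D) (hpcont.mono hsubay)
        ?_ le_rfl ?_ y ⟨ha.2.le, le_refl y⟩
      · intro t ht r' hr'
        have hT := hslope t ⟨le_trans ha.1.le ht.1, ht.2⟩
        exact (hT.eventually_lt_const hr').frequently
      · intro t ht
        exact hbound t ⟨lt_of_lt_of_le ha.1 ht.1, ht.2⟩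
    have hyIcc : y ∈ Icc (0:ℝ) y := ⟨hypos.le, le_refl y⟩
    have hmono2 : ∀ a ∈ Ioo (0:ℝ) y,
        p y ≤ p a * Real.exp (K * y) + ε / K * (Real.exp (K * y) - 1) := by
      intro a ha
      have hkey := key a ha
      rw [gronwallBound_of_K_ne_0 (ne_of_gt hKpos)] at hkey
      have hle1 : Real.exp (K * (y - a)) ≤ Real.exp (K * y) :=
        Real.exp_le_exp.2 (by linarith [mul_nonneg hKpos.le ha.1.le,
          (by ring : K * (y - a) = K * y - K * a)])
      have hpa : 0 ≤ p a := hpnonneg a ⟨ha.1.le, ha.2.le⟩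
      have hεK : 0 ≤ ε / K := div_nonneg hεnn hKpos.le
      linarith [mul_nonneg hpa (sub_nonneg.2 hle1), mul_nonneg hεK (sub_nonneg.2 hle1),
        (by ring : p a * Real.exp (K * y) - p a * Real.exp (K * (y - a)) =
          p a * (Real.exp (K * y) - Real.exp (K * (y - a)))),
        (by ring : ε / K * (Real.exp (K * y) - 1) - ε / K * (Real.exp (K * (y - a)) - 1) =
          ε / K * (Real.exp (K * y) - Real.exp (K * (y - a))))]
    have hneb2 : (𝓝[Ioo (0:ℝ) y] 0).NeBot := by
      apply mem_closure_iff_nhdsWithin_neBot.1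
      rw [closure_Ioo (ne_of_lt hypos)]
      exact ⟨le_refl 0, hypos.le⟩
    have hten : Filter.Tendsto (fun a => p a * Real.exp (K * y) + ε / K * (Real.exp (K * y) - 1))
        (𝓝[Ioo (0:ℝ) y] 0) (𝓝 (0 * Real.exp (K * y) + ε / K * (Real.exp (K * y) - 1))) := by
      apply Filter.Tendsto.add _ tendsto_const_nhds
      apply Filter.Tendsto.mul_const
      have hc0 : Filter.Tendsto p (𝓝[Icc (0:ℝ) y] 0) (𝓝 (p 0)) := hpcont 0 ⟨le_refl 0, hypos.le⟩
      have h2'' : Filter.Tendsto p (𝓝[Ioo (0:ℝ) y] 0) (𝓝 (p 0)) :=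
        hc0.mono_left (nhdsWithin_mono _ Ioo_subset_Icc_self)
      rwa [hp0] at h2''
    have hpy : p y ≤ ε / K * (Real.exp (K * y) - 1) := by
      have hlim := ge_of_tendsto hten (Filter.eventually_of_mem self_mem_nhdsWithin
        (fun a ha => hmono2 a ha))
      rw [zero_mul, zero_add] at hlim
      exact hlim
    have hKy : K * y ≤ K := by
      linarith [mul_nonneg hKpos.le (by linarith : (0:ℝ) ≤ 1 - y),
        (by ring : K * (1 - y) = K - K * y)]
    have hexp1 : Real.exp (K * y) ≤ Real.exp K := Real.exp_le_exp.2 hKy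
    have hgr : Real.exp (K * y) - 1 ≤ K * y * Real.exp (K * y) := by
      have ha' : -(K * y) + 1 ≤ Real.exp (-(K * y)) := Real.add_one_le_exp _
      have hb' : Real.exp (-(K * y)) * Real.exp (K * y) = 1 := by rw [← Real.exp_add]; simp
      nlinarith [Real.exp_pos (K * y)]
    have hpyf : p y ≤ ε * y * Real.exp K := by
      have x1 : ε / K * (Real.exp (K * y) - 1) ≤ ε / K * (K * y * Real.exp (K * y)) :=
        mul_le_mul_of_nonneg_left hgr (div_nonneg hεnn hKpos.le)
      have x2 : ε / K * (K * y * Real.exp (K * y)) = ε * y * Real.exp (K * y) := by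
        field_simp
      have x3 : ε * y * Real.exp (K * y) ≤ ε * y * Real.exp K :=
        mul_le_mul_of_nonneg_left hexp1 (mul_nonneg hεnn hypos.le)
      linarith
    constructor
    · have x1 : |u y| ≤ p y := by rw [hpt]; linarith [hWnonneg y hyIcc]
      have x2 : ε * y * Real.exp K = M1 * y * |ξ1 - ξ2| := by
        rw [hεdef, hM1def]; ring
      rw [show h1 y - h2 y = u y from (hu_app y).symm]
      linarith
    · have hFy := hFd y hyIcc
      have hWy : W y ≤ p y := by rw [hpt]; linarith [abs_nonneg (u y)]
      have hpe : p y ≤ ε * Real.exp K := by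
        have q1 := mul_nonneg (mul_nonneg hεnn (Real.exp_pos K).le)
          (by linarith : (0:ℝ) ≤ 1 - y)
        have q2 : ε * Real.exp K * (1 - y) = ε * Real.exp K - ε * y * Real.exp K := by ring
        linarith [hpyf]
      have hM2eq : M2 * |ξ1 - ξ2| = |ξ1 - ξ2| / σD ^ 2 + ξbar / σD ^ 2 * (ε * Real.exp K) := by
        rw [hM2def, hM1def, hεdef]; ring
      have x4 : ξbar / σD ^ 2 * W y ≤ ξbar / σD ^ 2 * (ε * Real.exp K) :=
        mul_le_mul_of_nonneg_left (by linarith) hξσ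
      rw [hM2eq]
      linarith
end

section
/- Let γ ∈ (0,1), σ_D > 0, A > 1, and ξ > 0. Suppose h₁ : [0,δ₁] → ℝ and h₂ : [0,δ₂] → ℝ, with 0 < δ₁ ≤ δ₂ < 1, are both C¹ solutions of the Cauchy problem h(0) = γ and h'(y) = a₀(y) + (a₁(y)/(1−y))·h(y) + (a₂(h,y)/(1−y))·h(y)² on the interiors of their intervals. Then h₁(y) = h₂(y) for all y ∈ [0, δ₁]; in other words, the boundary value problem has a unique local solution. -/
open Set Real

lemma exp_sub_exp_abs_le {a b c : ℝ} (ha : a ≤ c) (hb : b ≤ c) :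
    |Real.exp a - Real.exp b| ≤ Real.exp c * |a - b| := by
  wlog hab : b ≤ a generalizing a b
  · rw [abs_sub_comm, abs_sub_comm a b]; exact this hb ha (le_of_not_ge hab)
  rw [abs_of_nonneg (sub_nonneg.2 (Real.exp_le_exp.2 hab)), abs_of_nonneg (sub_nonneg.2 hab)]
  have key : Real.exp (a - b) - 1 ≤ (a - b) * Real.exp (a - b) := by
    have h1 : (-(a - b) + 1) * Real.exp (a - b) ≤ Real.exp (-(a - b)) * Real.exp (a - b) :=
      mul_le_mul_of_nonneg_right (Real.add_one_le_exp _) (Real.exp_pos _).le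
    have h2 : Real.exp (-(a - b)) * Real.exp (a - b) = 1 := by
      rw [← Real.exp_add]; simp
    nlinarith
  have h3 : Real.exp a - Real.exp b = Real.exp b * (Real.exp (a - b) - 1) := by
    rw [mul_sub, ← Real.exp_add]; ring_nf
  calc Real.exp a - Real.exp b = Real.exp b * (Real.exp (a - b) - 1) := h3
    _ ≤ Real.exp b * ((a - b) * Real.exp (a - b)) :=
        mul_le_mul_of_nonneg_left key (Real.exp_pos _).le
    _ = (a - b) * Real.exp a := by rw [mul_comm (a-b), ← mul_assoc, ← Real.exp_add]; ring_nf
    _ ≤ (a - b) * Real.exp c :=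
        mul_le_mul_of_nonneg_left (Real.exp_le_exp.2 ha) (by linarith)
    _ = Real.exp c * (a - b) := mul_comm _ _

set_option maxHeartbeats 1000000 in
/-- **Local uniqueness.** If `h₁` on `[0,δ₁]` and `h₂` on `[0,δ₂]`
(with `0 < δ₁ ≤ δ₂ < 1`) are `C¹` solutions of the same path-dependent Riccati
Cauchy problem `h 0 = γ`, then `h₁ = h₂` on `[0,δ₁]`. -/
theorem stmt10 (γ σD A ξ δ1 δ2 : ℝ) (hγ : γ ∈ Ioo (0:ℝ) 1) (hσ : 0 < σD)
    (hA : 1 < A) (hξ : 0 < ξ)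
    (hδ1 : 0 < δ1) (hδ12 : δ1 ≤ δ2) (hδ2 : δ2 < 1)
    (h1 h1' h2 h2' : ℝ → ℝ)
    (hc1 : ContinuousOn h1' (Icc (0:ℝ) δ1))
    (hd1 : ∀ y ∈ Icc (0:ℝ) δ1, HasDerivWithinAt h1 (h1' y) (Icc (0:ℝ) δ1) y)
    (h10 : h1 0 = γ)
    (hode1 : ∀ y ∈ Ioo (0:ℝ) δ1,
      h1' y = a0 γ y + a1 γ y / (1 - y) * h1 y + a2 ξ σD A h1 y / (1 - y) * h1 y ^ 2)
    (hc2 : ContinuousOn h2' (Icc (0:ℝ) δ2))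
    (hd2 : ∀ y ∈ Icc (0:ℝ) δ2, HasDerivWithinAt h2 (h2' y) (Icc (0:ℝ) δ2) y)
    (h20 : h2 0 = γ)
    (hode2 : ∀ y ∈ Ioo (0:ℝ) δ2,
      h2' y = a0 γ y + a1 γ y / (1 - y) * h2 y + a2 ξ σD A h2 y / (1 - y) * h2 y ^ 2) :
    ∀ y ∈ Icc (0:ℝ) δ1, h1 y = h2 y := by
  -- basic positivity facts
  have hδ1' : δ1 < 1 := lt_of_le_of_lt hδ12 hδ2
  have hsub : Icc (0:ℝ) δ1 ⊆ Icc (0:ℝ) δ2 := Icc_subset_Icc le_rfl hδ12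
  set c : ℝ := (1 - δ2)⁻¹ with hc_def
  have hc : 0 < c := inv_pos.2 (by linarith)
  -- continuity of the solutions
  have cont1 : ContinuousOn h1 (Icc (0:ℝ) δ1) := fun y hy => (hd1 y hy).continuousWithinAt
  have cont2 : ContinuousOn h2 (Icc (0:ℝ) δ2) := fun y hy => (hd2 y hy).continuousWithinAt
  -- the difference function
  set w : ℝ → ℝ := fun y => h1 y - h2 y with hw_def
  have contw : ContinuousOn w (Icc (0:ℝ) δ1) := cont1.sub (cont2.mono hsub)
  have w0 : w 0 = 0 := by simp [hw_def, h10, h20]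
  -- a uniform bound on the solutions
  obtain ⟨M1, hM1⟩ := isCompact_Icc.exists_bound_of_continuousOn cont1
  obtain ⟨M2, hM2⟩ := isCompact_Icc.exists_bound_of_continuousOn cont2
  set M : ℝ := max 1 (max M1 M2) with hM_def
  have hM1' : ∀ y ∈ Icc (0:ℝ) δ1, |h1 y| ≤ M := fun y hy =>
    le_trans (hM1 y hy) (le_trans (le_max_left _ _) (le_max_right _ _))
  have hM2' : ∀ y ∈ Icc (0:ℝ) δ2, |h2 y| ≤ M := fun y hy =>
    le_trans (hM2 y hy) (le_trans (le_max_right _ _) (le_max_right _ _))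
  have hM : (1:ℝ) ≤ M := le_max_left _ _
  have hMpos : (0:ℝ) < M := lt_of_lt_of_le one_pos hM
  -- constants
  set B : ℝ := (M + 1) * c * δ2 with hB_def
  set P : ℝ := ξ / σD ^ 2 * Real.exp B * c * M ^ 2 with hP_def
  set Q : ℝ := (ξ / σD ^ 2 * Real.exp B + A) * (2 * M) with hQ_def
  have hPpos : 0 ≤ P := by positivity
  have hQpos : 0 ≤ Q := by positivity
  set K : ℝ := 2 * (2 * γ + 1) * c + 2 * c * Q + c * P + 1 with hK_def
  -- the primitive of |w|
  set J : ℝ → ℝ := fun y => ∫ t in (0:ℝ)..y, |w t| with hJ_def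
  have J0 : J 0 = 0 := by simp [hJ_def]
  have contabs : ContinuousOn (fun t => |w t|) (Icc (0:ℝ) δ1) := contw.abs
  have hJnonneg : ∀ y ∈ Icc (0:ℝ) δ1, 0 ≤ J y :=
    fun y hy => intervalIntegral.integral_nonneg hy.1 (fun u _ => abs_nonneg _)
  have hJcont : ContinuousOn J (Icc (0:ℝ) δ1) := by
    have hint : MeasureTheory.IntegrableOn (fun t => |w t|) (uIcc (0:ℝ) δ1) := by
      rw [uIcc_of_le hδ1.le]; exact contabs.integrableOn_Icc
    have := intervalIntegral.continuousOn_primitive_interval hint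
    rwa [uIcc_of_le hδ1.le] at this
  -- pointwise estimates on (0, δ1)
  have hc0 : c * (1 - δ2) = 1 := inv_mul_cancel₀ (by linarith)
  have hIbound : ∀ h : ℝ → ℝ,
      (∀ y ∈ Icc (0:ℝ) δ1, |h y| ≤ M) → ∀ x ∈ Ioc (0:ℝ) δ1,
      |∫ q in (0:ℝ)..x, (h q - 1) / (1 - q)| ≤ B := by
    intro h hMh x hx
    have key : ‖∫ q in (0:ℝ)..x, (h q - 1) / (1 - q)‖ ≤ (M + 1) * c * |x - 0| := by
      apply intervalIntegral.norm_integral_le_of_norm_le_const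
      intro q hq
      rw [uIoc_of_le hx.1.le] at hq
      have hq1 : (0:ℝ) < 1 - q := by
        have := hq.2; have := hx.2; linarith
      have habs : |h q - 1| ≤ M + 1 := by
        have := hMh q ⟨hq.1.le, le_trans hq.2 hx.2⟩
        calc |h q - 1| ≤ |h q| + 1 := by
              calc |h q - 1| ≤ |h q| + |(1:ℝ)| := abs_sub _ _
                _ = |h q| + 1 := by norm_num
          _ ≤ M + 1 := by linarith
      rw [Real.norm_eq_abs, abs_div, abs_of_pos hq1, div_le_iff₀ hq1]
      have hq2 : q ≤ δ2 := le_trans hq.2 (le_trans hx.2 hδ12)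
      nlinarith [habs, hc0, mul_nonneg (mul_nonneg (show (0:ℝ) ≤ M + 1 by linarith) hc.le)
        (show (0:ℝ) ≤ δ2 - q by linarith)]
    rw [Real.norm_eq_abs] at key
    calc |∫ q in (0:ℝ)..x, (h q - 1) / (1 - q)| ≤ (M + 1) * c * |x - 0| := key
      _ = (M + 1) * c * x := by rw [sub_zero, abs_of_pos hx.1]
      _ ≤ B := by
          rw [hB_def]
          have hxd2 : x ≤ δ2 := le_trans hx.2 hδ12
          nlinarith [mul_nonneg (mul_nonneg (show (0:ℝ) ≤ M + 1 by linarith) hc.le)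
            (show (0:ℝ) ≤ δ2 - x by linarith)]
  have hIdiff : ∀ x ∈ Ioc (0:ℝ) δ1,
      |(∫ q in (0:ℝ)..x, (h1 q - 1) / (1 - q)) - ∫ q in (0:ℝ)..x, (h2 q - 1) / (1 - q)|
        ≤ c * J x := by
    intro x hx
    have hxsub : Icc (0:ℝ) x ⊆ Icc (0:ℝ) δ1 := Icc_subset_Icc le_rfl hx.2
    have hne : ∀ q ∈ Icc (0:ℝ) x, (1:ℝ) - q ≠ 0 := by
      intro q hq
      have : q ≤ δ1 := le_trans hq.2 hx.2
      intro hcon; have : (1:ℝ) = q := by linarith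
      linarith
    have contden : ContinuousOn (fun q => (1:ℝ) - q) (Icc (0:ℝ) x) :=
      continuousOn_const.sub continuousOn_id
    have int1 : IntervalIntegrable (fun q => (h1 q - 1) / (1 - q)) MeasureTheory.volume 0 x := by
      apply ContinuousOn.intervalIntegrable
      rw [uIcc_of_le hx.1.le]
      exact (((cont1.mono hxsub)).sub continuousOn_const).div contden hne
    have int2 : IntervalIntegrable (fun q => (h2 q - 1) / (1 - q)) MeasureTheory.volume 0 x := by
      apply ContinuousOn.intervalIntegrable
      rw [uIcc_of_le hx.1.le]
      exact (((cont2.mono (fun q hq => hsub (hxsub hq)))).sub continuousOn_const).div contden hne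
    have intw : IntervalIntegrable (fun q => |w q| / |1 - q|) MeasureTheory.volume 0 x := by
      apply ContinuousOn.intervalIntegrable
      rw [uIcc_of_le hx.1.le]
      exact ((contw.mono hxsub).abs).div contden.abs (fun q hq => by
        simpa [abs_ne_zero] using hne q hq)
    have intc : IntervalIntegrable (fun q => c * |w q|) MeasureTheory.volume 0 x := by
      apply ContinuousOn.intervalIntegrable
      rw [uIcc_of_le hx.1.le]
      exact ((contw.mono hxsub).abs).const_smul c
    have heq : (∫ q in (0:ℝ)..x, (h1 q - 1) / (1 - q)) - ∫ q in (0:ℝ)..x, (h2 q - 1) / (1 - q)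
        = ∫ q in (0:ℝ)..x, w q / (1 - q) := by
      rw [← intervalIntegral.integral_sub int1 int2]
      apply intervalIntegral.integral_congr
      intro q _
      show (h1 q - 1) / (1 - q) - (h2 q - 1) / (1 - q) = w q / (1 - q)
      rw [div_sub_div_same]
      congr 1
      simp [hw_def]
    rw [heq]
    calc |∫ q in (0:ℝ)..x, w q / (1 - q)| ≤ ∫ q in (0:ℝ)..x, |w q| / |1 - q| := by
          have := intervalIntegral.norm_integral_le_integral_norm (f := fun q => w q / (1 - q))
            (a := 0) (b := x) (μ := MeasureTheory.volume) hx.1.le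
          simpa [Real.norm_eq_abs, abs_div] using this
      _ ≤ ∫ q in (0:ℝ)..x, c * |w q| := by
          apply intervalIntegral.integral_mono_on hx.1.le intw intc
          intro q hq
          have hq2 : q ≤ δ2 := le_trans hq.2 (le_trans hx.2 hδ12)
          have hq1 : (0:ℝ) < 1 - q := by linarith
          rw [abs_of_pos hq1, div_le_iff₀ hq1]
          nlinarith [abs_nonneg (w q), hc0, mul_nonneg (mul_nonneg hc.le (abs_nonneg (w q)))
            (show (0:ℝ) ≤ δ2 - q by linarith)]
      _ = c * J x := by
          simp only [hJ_def]
          exact intervalIntegral.integral_const_mul _ _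
  have hD : ∀ x ∈ Ioo (0:ℝ) δ1,
      |a2 ξ σD A h1 x * h1 x ^ 2 - a2 ξ σD A h2 x * h2 x ^ 2| ≤ P * J x + Q * |w x| := by
    intro x hx
    have hxIoc : x ∈ Ioc (0:ℝ) δ1 := ⟨hx.1, hx.2.le⟩
    have hxIcc : x ∈ Icc (0:ℝ) δ1 := ⟨hx.1.le, hx.2.le⟩
    set I1 : ℝ := ∫ q in (0:ℝ)..x, (h1 q - 1) / (1 - q) with hI1_def
    set I2 : ℝ := ∫ q in (0:ℝ)..x, (h2 q - 1) / (1 - q) with hI2_def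
    have hI1 : |I1| ≤ B := hIbound h1 hM1' x hxIoc
    have hI2 : |I2| ≤ B := hIbound h2 (fun y hy => hM2' y (hsub hy)) x hxIoc
    have hI12 : |I1 - I2| ≤ c * J x := hIdiff x hxIoc
    have hexp : |Real.exp I1 - Real.exp I2| ≤ Real.exp B * (c * J x) :=
      le_trans (exp_sub_exp_abs_le (le_trans (le_abs_self _) hI1)
        (le_trans (le_abs_self _) hI2))
        (mul_le_mul_of_nonneg_left hI12 (Real.exp_pos _).le)
    have hxi : (0:ℝ) < ξ / σD ^ 2 := by positivity
    have ha2b : |ξ / σD ^ 2 * Real.exp I2 - A| ≤ ξ / σD ^ 2 * Real.exp B + A := by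
      have hE : Real.exp I2 ≤ Real.exp B := Real.exp_le_exp.2 (le_trans (le_abs_self _) hI2)
      have hEpos : 0 < Real.exp I2 := Real.exp_pos _
      rw [abs_sub_le_iff]
      constructor
      · nlinarith
      · nlinarith
    have hsq1 : h1 x ^ 2 ≤ M ^ 2 := by
      have := hM1' x hxIcc
      nlinarith [abs_nonneg (h1 x), sq_abs (h1 x)]
    have hdiffsq : |h1 x ^ 2 - h2 x ^ 2| ≤ 2 * M * |w x| := by
      have e1 : h1 x ^ 2 - h2 x ^ 2 = (h1 x + h2 x) * w x := by simp [hw_def]; ring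
      rw [e1, abs_mul]
      have : |h1 x + h2 x| ≤ 2 * M := by
        have := hM1' x hxIcc
        have := hM2' x (hsub hxIcc)
        calc |h1 x + h2 x| ≤ |h1 x| + |h2 x| := abs_add_le _ _
          _ ≤ 2 * M := by linarith
      exact mul_le_mul_of_nonneg_right this (abs_nonneg _)
    have key : a2 ξ σD A h1 x * h1 x ^ 2 - a2 ξ σD A h2 x * h2 x ^ 2
        = ξ / σD ^ 2 * (Real.exp I1 - Real.exp I2) * h1 x ^ 2
          + (ξ / σD ^ 2 * Real.exp I2 - A) * (h1 x ^ 2 - h2 x ^ 2) := by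
      simp only [a2, hI1_def, hI2_def]
      ring
    rw [key]
    calc |ξ / σD ^ 2 * (Real.exp I1 - Real.exp I2) * h1 x ^ 2
          + (ξ / σD ^ 2 * Real.exp I2 - A) * (h1 x ^ 2 - h2 x ^ 2)|
        ≤ |ξ / σD ^ 2 * (Real.exp I1 - Real.exp I2) * h1 x ^ 2|
          + |(ξ / σD ^ 2 * Real.exp I2 - A) * (h1 x ^ 2 - h2 x ^ 2)| := abs_add_le _ _
      _ ≤ ξ / σD ^ 2 * (Real.exp B * (c * J x)) * M ^ 2
          + (ξ / σD ^ 2 * Real.exp B + A) * (2 * M * |w x|) := by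
          gcongr ?_ + ?_
          · rw [abs_mul, abs_mul, abs_of_pos hxi, abs_of_nonneg (sq_nonneg (h1 x))]
            have hb1 : |Real.exp I1 - Real.exp I2| * h1 x ^ 2
                ≤ (Real.exp B * (c * J x)) * M ^ 2 :=
              mul_le_mul hexp hsq1 (sq_nonneg _)
                (mul_nonneg (Real.exp_pos _).le (mul_nonneg hc.le (hJnonneg x hxIcc)))
            calc ξ / σD ^ 2 * |Real.exp I1 - Real.exp I2| * h1 x ^ 2
                = ξ / σD ^ 2 * (|Real.exp I1 - Real.exp I2| * h1 x ^ 2) := by ring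
              _ ≤ ξ / σD ^ 2 * ((Real.exp B * (c * J x)) * M ^ 2) :=
                  mul_le_mul_of_nonneg_left hb1 hxi.le
              _ = ξ / σD ^ 2 * (Real.exp B * (c * J x)) * M ^ 2 := by ring
          · rw [abs_mul]
            exact mul_le_mul ha2b hdiffsq (abs_nonneg _) (by positivity)
      _ = P * J x + Q * |w x| := by rw [hP_def, hQ_def]; ring
  -- derivative of Φ
  set Φ : ℝ → ℝ := fun y => w y ^ 2 + J y ^ 2 with hΦ_def
  set Φ' : ℝ → ℝ := fun y => 2 * w y * (h1' y - h2' y) + 2 * J y * |w y| with hΦ'_def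
  have hΦd : ∀ x ∈ Ico (0:ℝ) δ1, HasDerivWithinAt Φ (Φ' x) (Ici x) x := by
    intro x hx
    have hxIcc : x ∈ Icc (0:ℝ) δ1 := ⟨hx.1, hx.2.le⟩
    have hmem : Icc (0:ℝ) δ1 ∈ nhdsWithin x (Ici x) := Icc_mem_nhdsGE_of_mem hx
    have hwd : HasDerivWithinAt w (h1' x - h2' x) (Ici x) x :=
      (((hd1 x hxIcc)).sub ((hd2 x (hsub hxIcc)).mono hsub)).mono_of_mem_nhdsWithin hmem
    have hJd : HasDerivWithinAt J (|w x|) (Ici x) x := by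
      have hmem' : Icc (0:ℝ) δ1 ∈ nhdsWithin x (Ioi x) :=
        nhdsWithin_mono x Ioi_subset_Ici_self hmem
      refine intervalIntegral.integral_hasDerivWithinAt_right (s := Ici x) ?_
        ⟨Icc 0 δ1, hmem', contabs.aestronglyMeasurable measurableSet_Icc⟩
        ((contabs x hxIcc).mono_of_mem_nhdsWithin hmem')
      apply ContinuousOn.intervalIntegrable
      rw [uIcc_of_le hx.1]
      exact contabs.mono (Icc_subset_Icc le_rfl hx.2.le)
    have h1sq : HasDerivWithinAt (fun y => w y ^ 2) (2 * w x * (h1' x - h2' x)) (Ici x) x := by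
      refine (hwd.fun_pow 2).congr_deriv ?_
      push_cast
      ring
    have h2sq : HasDerivWithinAt (fun y => J y ^ 2) (2 * J x * |w x|) (Ici x) x := by
      refine (hJd.fun_pow 2).congr_deriv ?_
      push_cast
      ring
    exact h1sq.add h2sq
  have contΦ : ContinuousOn Φ (Icc (0:ℝ) δ1) :=
    (contw.pow 2).add (hJcont.pow 2)
  -- the key inequality
  have bound : ∀ x ∈ Ico (0:ℝ) δ1, Φ' x ≤ K * Φ x + 0 := by
    clear_value Φ Φ' J w M B P Q K c
    intro x hx
    rcases eq_or_lt_of_le hx.1 with h0 | h0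
    · simp only [hΦ'_def, hΦ_def, ← h0, w0, J0]
      norm_num
    -- now 0 < x < δ1
    have hxIoo : x ∈ Ioo (0:ℝ) δ1 := ⟨h0, hx.2⟩
    have hxIcc : x ∈ Icc (0:ℝ) δ1 := ⟨hx.1, hx.2.le⟩
    have h1x : (0:ℝ) < 1 - x := by linarith [hx.2]
    have hinv : (1 - x)⁻¹ ≤ c := by
      rw [hc_def]
      apply inv_anti₀ (by linarith)
      linarith [le_trans hx.2.le hδ12]
    set D : ℝ := a2 ξ σD A h1 x * h1 x ^ 2 - a2 ξ σD A h2 x * h2 x ^ 2 with hD_def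
    clear_value D
    have hderiv_eq : h1' x - h2' x = a1 γ x / (1 - x) * w x + D * (1 - x)⁻¹ := by
      rw [hode1 x hxIoo, hode2 x ⟨h0, lt_of_lt_of_le hx.2 hδ12⟩]
      simp only [hw_def, hD_def]
      ring
    have hDx : |D| ≤ P * J x + Q * |w x| := by rw [hD_def]; exact hD x hxIoo
    have ha1 : a1 γ x / (1 - x) ≤ (2 * γ + 1) * c := by
      have ha1x : a1 γ x ≤ 2 * γ + 1 := by
        rw [a1, div_le_iff₀ h0]
        nlinarith [hγ.1]
      calc a1 γ x / (1 - x) ≤ (2 * γ + 1) / (1 - x) := by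
            exact (div_le_div_iff_of_pos_right h1x).2 ha1x
        _ ≤ (2 * γ + 1) * c := by
            rw [div_eq_mul_inv]
            exact mul_le_mul_of_nonneg_left hinv (by linarith [hγ.1])
    -- abbreviations
    have hu : (0:ℝ) ≤ |w x| := abs_nonneg _
    have hj : (0:ℝ) ≤ J x := hJnonneg x hxIcc
    have husq : |w x| ^ 2 = w x ^ 2 := sq_abs _
    -- bound the a1-term
    have g3 : a1 γ x / (1 - x) * w x ^ 2 ≤ (2 * γ + 1) * c * w x ^ 2 :=
      mul_le_mul_of_nonneg_right ha1 (sq_nonneg _)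
    -- bound the D-term
    have g1 : w x * (D * (1 - x)⁻¹) ≤ |w x| * |D| * c := by
      calc w x * (D * (1 - x)⁻¹) ≤ |w x * (D * (1 - x)⁻¹)| := le_abs_self _
        _ = |w x| * |D| * (1 - x)⁻¹ := by
            rw [abs_mul, abs_mul, abs_of_pos (inv_pos.2 h1x)]; ring
        _ ≤ |w x| * |D| * c :=
            mul_le_mul_of_nonneg_left hinv (mul_nonneg hu (abs_nonneg _))
    have g2 : |w x| * |D| ≤ |w x| * (P * J x + Q * |w x|) :=
      mul_le_mul_of_nonneg_left hDx hu
    have g1' : w x * (D * (1 - x)⁻¹) ≤ |w x| * (P * J x + Q * |w x|) * c :=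
      le_trans g1 (mul_le_mul_of_nonneg_right g2 hc.le)
    have f1 : 2 * c * P * (J x * |w x|) ≤ c * P * J x ^ 2 + c * P * |w x| ^ 2 := by
      nlinarith [sq_nonneg (J x - |w x|), mul_nonneg hc.le hPpos]
    have f2 : 2 * J x * |w x| ≤ J x ^ 2 + |w x| ^ 2 := by
      nlinarith [sq_nonneg (J x - |w x|)]
    have f3 : (0:ℝ) ≤ c * Q * J x ^ 2 := by positivity
    have f4 : (0:ℝ) ≤ (2 * γ + 1) * c * J x ^ 2 :=
      mul_nonneg (mul_nonneg (by linarith [hγ.1]) hc.le) (sq_nonneg _)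
    have e1 : c * Q * |w x| ^ 2 = c * Q * w x ^ 2 := by rw [husq]
    have e2 : c * P * |w x| ^ 2 = c * P * w x ^ 2 := by rw [husq]
    -- combine everything
    simp only [hΦ'_def, hΦ_def, hK_def]
    rw [hderiv_eq]
    linarith [g3, g1', f1, f2, f3, f4, husq, e1, e2]
  -- Grönwall
  have final : ∀ x ∈ Icc (0:ℝ) δ1, Φ x ≤ gronwallBound 0 K 0 (x - 0) :=
    le_gronwallBound_of_liminf_deriv_right_le contΦ
      (fun x hx r hr => (hΦd x hx).liminf_right_slope_le hr)
      (by simp [hΦ_def, w0, J0]) bound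
  intro y hy
  have h0 := final y hy
  rw [gronwallBound_ε0_δ0] at h0
  simp only [hΦ_def] at h0
  have hwy2 : w y ^ 2 = 0 :=
    le_antisymm (by linarith [sq_nonneg (J y)]) (sq_nonneg _)
  have hwy : w y = 0 := by
    exact sq_eq_zero_iff.mp hwy2
  have : h1 y - h2 y = 0 := hwy
  linarith
end

section
/- Let γ ∈ (0,1), σ_D > 0, A > 1, and ξ > 0. Suppose h ∈ C([0,1]) ∩ C¹([0,1)) satisfies h(0) = γ, h(1) ≤ γ, and h'(y) = a₀(y) + (a₁(y)/(1−y))·h(y) + (a₂(h,y)/(1−y))·h(y)² for all y ∈ (0,1). Then h(y) < 1 for all y ∈ [0,1]. -/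
open Set Real
open Filter Topology

/-- Any global solution `h ∈ C([0,1]) ∩ C¹([0,1))` of the
path-dependent Riccati ODE with `h 0 = γ` and `h 1 ≤ γ` satisfies `h < 1`
on all of `[0,1]`. -/
theorem stmt12 (γ σD A ξ : ℝ) (hγ : γ ∈ Ioo (0:ℝ) 1) (hσ : 0 < σD)
    (hA : 1 < A) (hξ : 0 < ξ)
    (h h' : ℝ → ℝ)
    (hc : ContinuousOn h (Icc (0:ℝ) 1))
    (hc' : ContinuousOn h' (Ico (0:ℝ) 1))
    (hd : ∀ y ∈ Ico (0:ℝ) 1, HasDerivWithinAt h (h' y) (Ico (0:ℝ) 1) y)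
    (h0 : h 0 = γ) (h1 : h 1 ≤ γ)
    (hode : ∀ y ∈ Ioo (0:ℝ) 1,
      h' y = a0 γ y + a1 γ y / (1 - y) * h y + a2 ξ σD A h y / (1 - y) * h y ^ 2) :
    ∀ y ∈ Icc (0:ℝ) 1, h y < 1 := by
  obtain ⟨hγ0, hγ1⟩ := hγ
  by_contra hcon
  push_neg at hcon
  obtain ⟨y₀, hy₀mem, hy₀⟩ := hcon
  -- Notation
  set c : ℝ := ξ / σD ^ 2 with hc_def
  have hcpos : 0 < c := div_pos hξ (by positivity)
  set ψ : ℝ → ℝ := fun q => (h q - 1) / (1 - q) with hψ_def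
  set g : ℝ → ℝ := fun y => ∫ q in (0:ℝ)..y, ψ q with hg_def
  set E : ℝ → ℝ := fun y => Real.exp (g y) with hE_def
  set F : ℝ → ℝ := fun y => (1 + γ - γ ^ 2) - (1 - γ ^ 2) * y⁻¹ + c * E y - A with hF_def
  set K : ℝ → ℝ := fun y => a1 γ y + (c * E y - A) * (1 + h y) with hK_def
  have ha2 : ∀ y : ℝ, a2 ξ σD A h y = c * E y - A := by
    intro y
    simp only [a2, hc_def, hE_def, hg_def, hψ_def]
  have hγsq : 0 < 1 - γ ^ 2 := by nlinarith
  -- elementary continuity facts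
  have hIccNhds : ∀ y ∈ Ioo (0:ℝ) 1, Icc (0:ℝ) 1 ∈ 𝓝 y := fun y hy =>
    mem_nhds_iff.mpr ⟨Ioo 0 1, Ioo_subset_Icc_self, isOpen_Ioo, hy⟩
  have hIcoNhds : ∀ y ∈ Ioo (0:ℝ) 1, Ico (0:ℝ) 1 ∈ 𝓝 y := fun y hy =>
    mem_nhds_iff.mpr ⟨Ioo 0 1, Ioo_subset_Ico_self, isOpen_Ioo, hy⟩
  have hh_ca : ∀ y ∈ Ioo (0:ℝ) 1, ContinuousAt h y := fun y hy =>
    hc.continuousAt (hIccNhds y hy)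
  have hψ_co : ContinuousOn ψ (Ico (0:ℝ) 1) := by
    apply ContinuousOn.div
    · exact (hc.mono Ico_subset_Icc_self).sub continuousOn_const
    · exact continuousOn_const.sub continuousOn_id
    · intro q hq
      have : q < 1 := hq.2
      intro hq0
      linarith [sub_eq_zero.mp hq0]
  have hψ_ca : ∀ y ∈ Ioo (0:ℝ) 1, ContinuousAt ψ y := fun y hy =>
    hψ_co.continuousAt (hIcoNhds y hy)
  -- FTC: derivative of g, E, F
  have hg_d : ∀ y ∈ Ioo (0:ℝ) 1, HasDerivAt g (ψ y) y := by
    intro y hy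
    apply intervalIntegral.integral_hasDerivAt_right
    · apply ContinuousOn.intervalIntegrable
      apply hψ_co.mono
      rw [uIcc_of_le hy.1.le]
      exact fun q hq => ⟨hq.1, lt_of_le_of_lt hq.2 hy.2⟩
    · exact (hψ_co.mono Ioo_subset_Ico_self).stronglyMeasurableAtFilter isOpen_Ioo y hy
    · exact hψ_ca y hy
  have hE_d : ∀ y ∈ Ioo (0:ℝ) 1, HasDerivAt E (E y * ψ y) y := fun y hy =>
    (hg_d y hy).exp
  have hE_pos : ∀ y, 0 < E y := fun y => exp_pos _
  have hF_d : ∀ y ∈ Ioo (0:ℝ) 1, HasDerivAt F ((1 - γ ^ 2) * (y ^ 2)⁻¹ + c * (E y * ψ y)) y := by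
    intro y hy
    have h1' : HasDerivAt (fun z : ℝ => (1 - γ ^ 2) * z⁻¹) ((1 - γ ^ 2) * (-(y ^ 2)⁻¹)) y :=
      (hasDerivAt_inv (ne_of_gt hy.1)).const_mul _
    have h2' : HasDerivAt (fun z : ℝ => c * E z) (c * (E y * ψ y)) y :=
      (hE_d y hy).const_mul _
    have := (((hasDerivAt_const y (1 + γ - γ ^ 2)).sub h1').add h2').sub
      (hasDerivAt_const y A)
    refine this.congr_deriv ?_
    ring
  -- key algebraic identity from the ODE
  have hmain : ∀ y ∈ Ioo (0:ℝ) 1, (1 - y) * h' y = F y + (h y - 1) * K y := by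
    intro y hy
    have hy0 : y ≠ 0 := ne_of_gt hy.1
    have hy1 : (1:ℝ) - y ≠ 0 := by intro hq; linarith [sub_eq_zero.mp hq, hy.2]
    rw [hode y hy, ha2 y, hF_def, hK_def]
    simp only [a0, a1]
    field_simp
    ring
  -- the first point where h reaches 1
  set S := {y | y ∈ Icc (0:ℝ) 1 ∧ 1 ≤ h y} with hS_def
  have hS_ne : S.Nonempty := ⟨y₀, hy₀mem, hy₀⟩
  have hS_bdd : BddBelow S := ⟨0, fun x hx => hx.1.1⟩
  have hS_closed : IsClosed S := by
    have : S = Icc (0:ℝ) 1 ∩ h ⁻¹' (Ici 1) := by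
      ext y; simp [hS_def, and_comm]
    rw [this]
    exact hc.preimage_isClosed_of_isClosed isClosed_Icc isClosed_Ici
  set y₁ := sInf S with hy₁_def
  have hy₁S : y₁ ∈ S := hS_closed.csInf_mem hS_ne hS_bdd
  have hy₁Icc : y₁ ∈ Icc (0:ℝ) 1 := hy₁S.1
  have hy₁eq : h y₁ = 1 := by
    obtain ⟨z, hz, hz1⟩ := intermediate_value_Icc hy₁Icc.1
      (hc.mono (Icc_subset_Icc le_rfl hy₁Icc.2))
      (show (1:ℝ) ∈ Icc (h 0) (h y₁) from ⟨by rw [h0]; exact hγ1.le, hy₁S.2⟩)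
    have hzS : z ∈ S := ⟨⟨hz.1, le_trans hz.2 hy₁Icc.2⟩, hz1.ge⟩
    have : y₁ ≤ z := csInf_le hS_bdd hzS
    rw [← hz1]; congr 1; linarith [hz.2]
  have hy₁pos : 0 < y₁ := by
    rcases eq_or_lt_of_le hy₁Icc.1 with heq | hlt
    · exfalso; rw [← heq] at hy₁eq; rw [h0] at hy₁eq; linarith
    · exact hlt
  have hy₁lt1 : y₁ < 1 := by
    rcases eq_or_lt_of_le hy₁Icc.2 with heq | hlt
    · exfalso; rw [heq] at hy₁eq; linarith
    · exact hlt
  have hbefore : ∀ y ∈ Icc (0:ℝ) 1, y < y₁ → h y < 1 := by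
    intro y hy hlt
    by_contra hge
    push_neg at hge
    exact absurd (csInf_le hS_bdd ⟨hy, hge⟩) (not_le.mpr hlt)
  -- the first point after y₁ where h goes below 1
  set T := {y | y ∈ Icc y₁ 1 ∧ h y < 1} with hT_def
  have hT_ne : T.Nonempty := ⟨1, ⟨hy₁Icc.2, le_rfl⟩, lt_of_le_of_lt h1 hγ1⟩
  have hT_bdd : BddBelow T := ⟨y₁, fun x hx => hx.1.1⟩
  set y₂ := sInf T with hy₂_def
  have hy₁y₂ : y₁ ≤ y₂ := le_csInf hT_ne (fun t ht => ht.1.1)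
  have h1T : (1:ℝ) ∈ T := ⟨⟨hy₁Icc.2, le_rfl⟩, lt_of_le_of_lt h1 hγ1⟩
  have hy₂le1 : y₂ ≤ 1 := csInf_le hT_bdd h1T
  have hy₂pos : 0 < y₂ := lt_of_lt_of_le hy₁pos hy₁y₂
  have hy₂Icc : y₂ ∈ Icc (0:ℝ) 1 := ⟨hy₂pos.le, hy₂le1⟩
  -- a sequence in T converging to y₂ from above
  have hseq : ∀ n : ℕ, ∃ t, t ∈ T ∧ t < y₂ + 1 / (n + 1) := by
    intro n
    have hp : (0:ℝ) < 1 / ((n:ℝ) + 1) := by positivity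
    exact exists_lt_of_csInf_lt hT_ne (by linarith)
  choose t htT htlt using hseq
  have hty₂le : ∀ n, y₂ ≤ t n := fun n => csInf_le hT_bdd (htT n)
  have httend : Tendsto t atTop (𝓝 y₂) := by
    have hub : Tendsto (fun n : ℕ => y₂ + 1 / (n + 1)) atTop (𝓝 (y₂ + 0)) :=
      tendsto_const_nhds.add tendsto_one_div_add_atTop_nhds_zero_nat
    rw [add_zero] at hub
    exact tendsto_of_tendsto_of_tendsto_of_le_of_le tendsto_const_nhds hub
      hty₂le (fun n => (htlt n).le)
  have hhy₂le : h y₂ ≤ 1 := by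
    have hmem : ∀ n, t n ∈ Icc (0:ℝ) 1 := fun n =>
      ⟨le_trans hy₁Icc.1 (htT n).1.1, (htT n).1.2⟩
    have htend : Tendsto (fun n => h (t n)) atTop (𝓝 (h y₂)) :=
      (hc.continuousWithinAt hy₂Icc).tendsto.comp
        (tendsto_nhdsWithin_of_tendsto_nhds_of_eventually_within _ httend
          (Eventually.of_forall hmem))
    exact le_of_tendsto htend (Eventually.of_forall fun n => (htT n).2.le)
  have hge : ∀ y ∈ Ico y₁ y₂, 1 ≤ h y := by
    intro y hy
    by_contra hlt
    push_neg at hlt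
    have : y ∈ T := ⟨⟨hy.1, le_trans hy.2.le hy₂le1⟩, hlt⟩
    exact absurd (csInf_le hT_bdd this) (not_le.mpr hy.2)
  have hy₂eq : h y₂ = 1 := by
    refine le_antisymm hhy₂le ?_
    rcases eq_or_lt_of_le hy₁y₂ with heq | hlt
    · rw [← heq, hy₁eq]
    · have hcw : ContinuousWithinAt h (Ico y₁ y₂) y₂ :=
        (hc.continuousWithinAt hy₂Icc).mono
          (fun z hz => ⟨le_trans hy₁Icc.1 hz.1, le_trans hz.2.le hy₂le1⟩)
      have hne : (𝓝[Ico y₁ y₂] y₂).NeBot := by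
        apply mem_closure_iff_nhdsWithin_neBot.mp
        rw [closure_Ico (ne_of_lt hlt)]
        exact ⟨hy₁y₂, le_rfl⟩
      exact ge_of_tendsto hcw (eventually_mem_nhdsWithin.mono fun z hz => hge z hz)
  have hy₂lt1 : y₂ < 1 := by
    rcases eq_or_lt_of_le hy₂le1 with heq | hlt
    · exfalso; rw [heq] at hy₂eq; linarith
    · exact hlt
  have hy₁Ioo : y₁ ∈ Ioo (0:ℝ) 1 := ⟨hy₁pos, hy₁lt1⟩
  have hy₂Ioo : y₂ ∈ Ioo (0:ℝ) 1 := ⟨hy₂pos, hy₂lt1⟩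
  -- h' is nonnegative at y₁
  have hd₁ : 0 ≤ h' y₁ := by
    have hslope₁ : Tendsto (slope h y₁) (𝓝[Ico (0:ℝ) 1 \ {y₁}] y₁) (𝓝 (h' y₁)) :=
      hasDerivWithinAt_iff_tendsto_slope.mp (hd y₁ ⟨hy₁Icc.1, hy₁lt1⟩)
    have hsub : Ico (0:ℝ) y₁ ⊆ Ico (0:ℝ) 1 \ {y₁} := fun z hz =>
      ⟨⟨hz.1, lt_trans hz.2 hy₁lt1⟩, ne_of_lt hz.2⟩
    have hne : (𝓝[Ico (0:ℝ) y₁] y₁).NeBot := by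
      apply mem_closure_iff_nhdsWithin_neBot.mp
      rw [closure_Ico (ne_of_lt hy₁pos)]
      exact ⟨hy₁pos.le, le_rfl⟩
    refine ge_of_tendsto (hslope₁.mono_left (nhdsWithin_mono _ hsub)) ?_
    refine eventually_mem_nhdsWithin.mono fun z hz => ?_
    have hz1 : h z < 1 := hbefore z ⟨hz.1, le_trans hz.2.le hy₁Icc.2⟩ hz.2
    rw [slope_def_field, hy₁eq]
    exact le_of_lt (div_pos_of_neg_of_neg (by linarith) (by linarith [hz.2]))
  have hd₂ : h' y₂ ≤ 0 := by
    have hslope₂ : Tendsto (slope h y₂) (𝓝[Ico (0:ℝ) 1 \ {y₂}] y₂) (𝓝 (h' y₂)) :=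
      hasDerivWithinAt_iff_tendsto_slope.mp (hd y₂ ⟨hy₂pos.le, hy₂lt1⟩)
    have htne : ∀ n, t n ≠ y₂ := by
      intro n heqn
      have := (htT n).2
      rw [heqn, hy₂eq] at this
      exact lt_irrefl _ this
    have hev : ∀ᶠ n in atTop, t n ∈ Ico (0:ℝ) 1 \ {y₂} := by
      have hlt1 : ∀ᶠ n in atTop, t n < 1 := httend.eventually (eventually_lt_nhds hy₂lt1)
      filter_upwards [hlt1] with n hn
      exact ⟨⟨le_trans hy₂pos.le (hty₂le n), hn⟩, htne n⟩
    have htn : Tendsto t atTop (𝓝[Ico (0:ℝ) 1 \ {y₂}] y₂) :=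
      tendsto_nhdsWithin_of_tendsto_nhds_of_eventually_within _ httend hev
    refine le_of_tendsto (hslope₂.comp htn) (Eventually.of_forall fun n => ?_)
    have h1n : h (t n) < 1 := (htT n).2
    have hgt : y₂ < t n := lt_of_le_of_ne (hty₂le n) (Ne.symm (htne n))
    simp only [Function.comp_apply, slope_def_field, hy₂eq]
    exact le_of_lt (div_neg_of_neg_of_pos (by linarith) (by linarith))
  -- the values of F at y₁ and y₂
  have hFy₁ : 0 ≤ F y₁ := by
    have hm := hmain y₁ hy₁Ioo
    rw [hy₁eq] at hm
    have hF1 : F y₁ = (1 - y₁) * h' y₁ := by rw [hm]; ring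
    rw [hF1]
    exact mul_nonneg (by linarith) hd₁
  have hFy₂ : F y₂ ≤ 0 := by
    have hm := hmain y₂ hy₂Ioo
    rw [hy₂eq] at hm
    have hF2 : F y₂ = (1 - y₂) * h' y₂ := by rw [hm]; ring
    rw [hF2]
    exact mul_nonpos_of_nonneg_of_nonpos (by linarith) hd₂
  rcases lt_or_eq_of_le hy₁y₂ with hlt | heq
  · -- Case y₁ < y₂ : F is strictly increasing on [y₁, y₂], contradiction
    have hsubIoo : Icc y₁ y₂ ⊆ Ioo (0:ℝ) 1 := fun z hz =>
      ⟨lt_of_lt_of_le hy₁pos hz.1, lt_of_le_of_lt hz.2 hy₂lt1⟩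
    have hFmono : StrictMonoOn F (Icc y₁ y₂) := by
      apply strictMonoOn_of_deriv_pos (convex_Icc _ _)
      · intro z hz
        exact ((hF_d z (hsubIoo hz)).continuousAt).continuousWithinAt
      · intro z hz
        rw [interior_Icc] at hz
        have hzIoo := hsubIoo (Ioo_subset_Icc_self hz)
        rw [(hF_d z hzIoo).deriv]
        have hψnn : 0 ≤ ψ z := by
          have h1z : 1 ≤ h z := hge z ⟨hz.1.le, hz.2⟩
          have hpos : (0:ℝ) < 1 - z := by linarith [hzIoo.2]
          simp only [hψ_def]
          exact div_nonneg (by linarith) hpos.le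
        have h2 : 0 < (1 - γ ^ 2) * (z ^ 2)⁻¹ := by
          have : (0:ℝ) < z := hzIoo.1
          positivity
        have h3 : 0 ≤ c * (E z * ψ z) :=
          mul_nonneg hcpos.le (mul_nonneg (hE_pos z).le hψnn)
        linarith
    have := hFmono (left_mem_Icc.mpr hy₁y₂) (right_mem_Icc.mpr hy₁y₂) hlt
    linarith
  · -- Case y₁ = y₂ : the touching case
    have hFb0 : F y₂ = 0 := le_antisymm hFy₂ (heq ▸ hFy₁)
    have hψb : ψ y₂ = 0 := by
      simp only [hψ_def]
      rw [hy₂eq]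
      simp
    have hG_ca : ContinuousAt (fun y => (1 - γ ^ 2) * (y ^ 2)⁻¹ + c * (E y * ψ y)) y₂ := by
      apply ContinuousAt.add
      · exact continuousAt_const.mul
          ((continuousAt_id.pow 2).inv₀ (pow_ne_zero 2 hy₂pos.ne'))
      · exact continuousAt_const.mul
          (((hE_d y₂ hy₂Ioo).continuousAt).mul (hψ_ca y₂ hy₂Ioo))
    have hGpos : 0 < (1 - γ ^ 2) * (y₂ ^ 2)⁻¹ + c * (E y₂ * ψ y₂) := by
      rw [hψb]
      have : (0:ℝ) < y₂ := hy₂pos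
      simp
      positivity
    have hevG : ∀ᶠ y in 𝓝 y₂,
        0 < (1 - γ ^ 2) * (y ^ 2)⁻¹ + c * (E y * ψ y) ∧ y ∈ Ioo (0:ℝ) 1 :=
      (hG_ca.eventually (eventually_gt_nhds hGpos)).and (isOpen_Ioo.eventually_mem hy₂Ioo)
    obtain ⟨ε, hεpos, hε⟩ := Metric.eventually_nhds_iff.mp hevG
    set δ := ε / 2 with hδ_def
    have hδpos : 0 < δ := by positivity
    have hball : ∀ y ∈ Icc y₂ (y₂ + δ),
        (0 < (1 - γ ^ 2) * (y ^ 2)⁻¹ + c * (E y * ψ y)) ∧ y ∈ Ioo (0:ℝ) 1 := by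
      intro y hy
      apply hε
      rw [Real.dist_eq, abs_of_nonneg (by linarith [hy.1])]
      have h2y := hy.2
      rw [hδ_def] at h2y
      linarith
    have hsubIoo2 : Icc y₂ (y₂ + δ) ⊆ Ioo (0:ℝ) 1 := fun z hz => (hball z hz).2
    -- t₀ : a point of T strictly between y₂ and y₂ + δ
    obtain ⟨t₀, ht₀T, ht₀lt⟩ := exists_lt_of_csInf_lt hT_ne
      (show sInf T < y₂ + δ by rw [← hy₂_def]; linarith)
    have ht₀ge : y₂ ≤ t₀ := csInf_le hT_bdd ht₀T
    have ht₀gt : y₂ < t₀ := by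
      rcases eq_or_lt_of_le ht₀ge with heq0 | hlt0
      · exfalso
        have := ht₀T.2
        rw [← heq0, hy₂eq] at this
        exact lt_irrefl _ this
      · exact hlt0
    have ht₀Icc : t₀ ∈ Icc y₂ (y₂ + δ) := ⟨ht₀ge, ht₀lt.le⟩
    have ht₀Ioo : t₀ ∈ Ioo (0:ℝ) 1 := hsubIoo2 ht₀Icc
    have ht₀lt1 : t₀ < 1 := ht₀Ioo.2
    -- F is strictly positive on (y₂, y₂ + δ]
    have hFmono : StrictMonoOn F (Icc y₂ (y₂ + δ)) := by
      apply strictMonoOn_of_deriv_pos (convex_Icc _ _)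
      · intro z hz
        exact ((hF_d z (hsubIoo2 hz)).continuousAt).continuousWithinAt
      · intro z hz
        rw [interior_Icc] at hz
        rw [(hF_d z (hsubIoo2 (Ioo_subset_Icc_self hz))).deriv]
        exact (hball z (Ioo_subset_Icc_self hz)).1
    have hFpos : ∀ y ∈ Ioc y₂ (y₂ + δ), 0 < F y := by
      intro y hy
      have := hFmono (left_mem_Icc.mpr (by linarith [hy.1, hy.2])) ⟨hy.1.le, hy.2⟩ hy.1
      rw [hFb0] at this
      exact this
    -- continuity of K and φ = K/(1-y)
    have hK_ca : ∀ y ∈ Ioo (0:ℝ) 1, ContinuousAt K y := by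
      intro y hy
      rw [hK_def]
      have hCa1 : ContinuousAt (fun z : ℝ => ((2 * γ + 1) * z - (1 + γ)) / z) y :=
        ContinuousAt.div ((continuousAt_const.mul continuousAt_id).sub continuousAt_const)
          continuousAt_id (ne_of_gt hy.1)
      have hCE : ContinuousAt E y := (hE_d y hy).continuousAt
      simp only [a1]
      exact hCa1.add (((continuousAt_const.mul hCE).sub continuousAt_const).mul
        (continuousAt_const.add (hh_ca y hy)))
    set φ := fun y => K y / (1 - y) with hφ_def
    have hφ_ca : ∀ y ∈ Ioo (0:ℝ) 1, ContinuousAt φ y := by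
      intro y hy
      exact (hK_ca y hy).div (continuousAt_const.sub continuousAt_id)
        (by intro hq; linarith [sub_eq_zero.mp hq, hy.2])
    have hφ_co : ContinuousOn φ (Ioo (0:ℝ) 1) := fun y hy =>
      (hφ_ca y hy).continuousWithinAt
    set J := fun y => ∫ q in y₂..y, φ q with hJ_def
    have hJ_d : ∀ y ∈ Icc y₂ t₀, HasDerivAt J (φ y) y := by
      intro y hy
      have hyIoo : y ∈ Ioo (0:ℝ) 1 := ⟨lt_of_lt_of_le hy₂pos hy.1, lt_of_le_of_lt hy.2 ht₀lt1⟩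
      apply intervalIntegral.integral_hasDerivAt_right
      · apply ContinuousOn.intervalIntegrable
        apply hφ_co.mono
        rw [uIcc_of_le hy.1]
        exact fun q hq => ⟨lt_of_lt_of_le hy₂pos hq.1, lt_of_le_of_lt hq.2 hyIoo.2⟩
      · exact hφ_co.stronglyMeasurableAtFilter isOpen_Ioo y hyIoo
      · exact hφ_ca y hyIoo
    set w := fun y => Real.exp (-J y) * (1 - h y) with hw_def
    have hw_d : ∀ y ∈ Icc y₂ t₀,
        HasDerivAt w (Real.exp (-J y) * (-(F y) / (1 - y))) y := by
      intro y hy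
      have hyIoo : y ∈ Ioo (0:ℝ) 1 := ⟨lt_of_lt_of_le hy₂pos hy.1, lt_of_le_of_lt hy.2 ht₀lt1⟩
      have hyne : (1:ℝ) - y ≠ 0 := ne_of_gt (by linarith [hyIoo.2])
      have hh_d : HasDerivAt h (h' y) y :=
        (hd y ⟨hyIoo.1.le, hyIoo.2⟩).hasDerivAt (hIcoNhds y hyIoo)
      have h₁ : HasDerivAt (fun z => Real.exp (-J z)) (Real.exp (-J y) * (-φ y)) y :=
        ((hJ_d y hy).neg).exp
      have h₂ : HasDerivAt (fun z => 1 - h z) (0 - h' y) y :=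
        (hasDerivAt_const y (1:ℝ)).sub hh_d
      have hprod := h₁.mul h₂
      refine hprod.congr_deriv ?_
      have hFeq : F y = (1 - y) * h' y + (1 - h y) * K y := by
        linear_combination (-1 : ℝ) * hmain y hyIoo
      rw [hFeq]
      simp only [hφ_def]
      field_simp
      ring
    have hwanti : StrictAntiOn w (Icc y₂ t₀) := by
      apply strictAntiOn_of_deriv_neg (convex_Icc _ _)
      · intro z hz
        exact ((hw_d z hz).continuousAt).continuousWithinAt
      · intro z hz
        rw [interior_Icc] at hz
        rw [(hw_d z (Ioo_subset_Icc_self hz)).deriv]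
        have hzIoo : z ∈ Ioo (0:ℝ) 1 :=
          ⟨lt_of_lt_of_le hy₂pos hz.1.le, lt_trans hz.2 ht₀lt1⟩
        have hFz : 0 < F z := hFpos z ⟨hz.1, by linarith [hz.2, ht₀lt]⟩
        exact mul_neg_of_pos_of_neg (exp_pos _)
          (div_neg_of_neg_of_pos (by linarith) (by linarith [hzIoo.2]))
    have hw₂ : w y₂ = 0 := by
      simp only [hw_def, hJ_def]
      rw [intervalIntegral.integral_same, hy₂eq]
      simp
    have hwt₀ : w t₀ < w y₂ :=
      hwanti (left_mem_Icc.mpr ht₀gt.le) (right_mem_Icc.mpr ht₀gt.le) ht₀gt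
    rw [hw₂] at hwt₀
    have hpos : 0 < Real.exp (-J t₀) * (1 - h t₀) :=
      mul_pos (exp_pos _) (by linarith [ht₀T.2])
    simp only [hw_def] at hwt₀
    linarith
end
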